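/- arXiv:1012.5171 — 7 statements merged into one kernel-verified Lean document; each statement's English description precedes it below -/
import Mathlib

section
/- Let f : [0,∞) → [0,∞) be a concave function and let A, B be n×n positive semidefinite complex matrices. Then there exist unitary matrices U, V ∈ M_n(ℂ) such that f(A+B) ≤ U f(A) U* + V f(B) V* in the Loewner order. -/
open scoped Matrix ComplexOrder
open Matrix

namespace BU

noncomputable section

variable {n : ℕ}

abbrev Mat (n : ℕ) := Matrix (Fin n) (Fin n) ℂ

/-- diagonal matrix with real entries -/
def rdiag {n : ℕ} (d : Fin n → ℝ) : Mat n := Matrix.diagonal (fun i => (d i : ℂ))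

/-- squared euclidean norm -/
def nsq {n : ℕ} (x : Fin n → ℂ) : ℝ := ∑ i, Complex.normSq (x i)

lemma nsq_nonneg (x : Fin n → ℂ) : 0 ≤ nsq x :=
  Finset.sum_nonneg fun _ _ => Complex.normSq_nonneg _

lemma nsq_eq_zero {x : Fin n → ℂ} (h : nsq x = 0) : x = 0 := by
  funext i
  have := (Finset.sum_eq_zero_iff_of_nonneg (fun i _ => Complex.normSq_nonneg (x i))).mp h i
    (Finset.mem_univ i)
  simpa using Complex.normSq_eq_zero.mp this

lemma dot_star_self (x : Fin n → ℂ) : star x ⬝ᵥ x = ((nsq x : ℝ) : ℂ) := by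
  simp only [dotProduct, nsq, Complex.ofReal_sum]
  refine Finset.sum_congr rfl fun i _ => ?_
  simp [Complex.normSq_eq_conj_mul_self]

lemma rdiag_mul_rdiag (a b : Fin n → ℝ) :
    rdiag a * rdiag b = rdiag (fun j => a j * b j) := by
  simp [rdiag, diagonal_mul_diagonal]

lemma rdiag_conjTranspose (d : Fin n → ℝ) : (rdiag d)ᴴ = rdiag d := by
  simp only [rdiag, diagonal_conjTranspose]
  congr 1
  funext i
  simp [Pi.star_def, Complex.star_def]

lemma rdiag_one : rdiag (fun _ : Fin n => (1:ℝ)) = 1 := by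
  simp [rdiag]

section Unitary

variable {U : Mat n} (hU : U ∈ Matrix.unitaryGroup (Fin n) ℂ)

include hU

lemma umul : U * Uᴴ = 1 := by
  rw [← Matrix.star_eq_conjTranspose]; exact (Matrix.mem_unitaryGroup_iff).mp hU

lemma umul' : Uᴴ * U = 1 := by
  rw [← Matrix.star_eq_conjTranspose]; exact (Matrix.mem_unitaryGroup_iff').mp hU

lemma ucancel (x : Fin n → ℂ) : Uᴴ *ᵥ (U *ᵥ x) = x := by
  rw [Matrix.mulVec_mulVec, umul' hU, Matrix.one_mulVec]

lemma ucancel' (x : Fin n → ℂ) : U *ᵥ (Uᴴ *ᵥ x) = x := by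
  rw [Matrix.mulVec_mulVec, umul hU, Matrix.one_mulVec]

lemma udot (a b : Fin n → ℂ) : star (U *ᵥ a) ⬝ᵥ (U *ᵥ b) = star a ⬝ᵥ b := by
  rw [Matrix.star_mulVec, ← Matrix.dotProduct_mulVec, Matrix.mulVec_mulVec, umul' hU,
    Matrix.one_mulVec]

lemma unsq (a : Fin n → ℂ) : nsq (U *ᵥ a) = nsq a := by
  have h := udot hU a a
  rw [dot_star_self, dot_star_self] at h
  exact_mod_cast h

omit hU in
/-- entries of `U * rdiag d * Uᴴ` -/
lemma triple_apply (d : Fin n → ℝ) (i j : Fin n) :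
    (U * rdiag d * Uᴴ) i j = ∑ a, U i a * (d a : ℂ) * (starRingEnd ℂ) (U j a) := by
  rw [Matrix.mul_apply]
  refine Finset.sum_congr rfl fun a _ => ?_
  simp only [rdiag, Matrix.mul_diagonal, Matrix.conjTranspose_apply, Complex.star_def]

/-- quadratic form of a conjugated diagonal matrix -/
lemma qf_triple (d : Fin n → ℝ) (β : Fin n → ℂ) :
    star (U *ᵥ β) ⬝ᵥ ((U * rdiag d * Uᴴ) *ᵥ (U *ᵥ β))
      = ((∑ j, d j * Complex.normSq (β j) : ℝ) : ℂ) := by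
  have h1 : (U * rdiag d * Uᴴ) *ᵥ (U *ᵥ β) = U *ᵥ (rdiag d *ᵥ β) := by
    rw [Matrix.mulVec_mulVec, mul_assoc, mul_assoc, umul' hU, mul_one, ← Matrix.mulVec_mulVec]
  rw [h1, udot hU]
  simp only [dotProduct, rdiag, Matrix.mulVec_diagonal, Complex.ofReal_sum]
  refine Finset.sum_congr rfl fun j _ => ?_
  have h2 : (starRingEnd ℂ) (β j) * β j = ((Complex.normSq (β j) : ℝ) : ℂ) :=
    (Complex.normSq_eq_conj_mul_self).symm
  rw [Complex.ofReal_mul, ← h2]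
  simp only [Pi.star_apply, Complex.star_def]
  ring

end Unitary

/-- Sorted spectral decomposition -/
structure SDecomp (W U : Mat n) (d : Fin n → ℝ) : Prop where
  unitary : U ∈ Matrix.unitaryGroup (Fin n) ℂ
  anti : Antitone d
  eq : W = U * rdiag d * Uᴴ

lemma SDecomp.qf {W U : Mat n} {d : Fin n → ℝ} (h : SDecomp W U d) (β : Fin n → ℂ) :
    star (U *ᵥ β) ⬝ᵥ (W *ᵥ (U *ᵥ β)) = ((∑ j, d j * Complex.normSq (β j) : ℝ) : ℂ) := by
  rw [h.eq]; exact qf_triple h.unitary d β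

lemma SDecomp.nonneg {W U : Mat n} {d : Fin n → ℝ} (h : SDecomp W U d)
    (hW : W.PosSemidef) (j : Fin n) : 0 ≤ d j := by
  have h2 := hW.dotProduct_mulVec_nonneg (U *ᵥ (Pi.single j 1 : Fin n → ℂ))
  rw [h.qf (Pi.single j 1 : Fin n → ℂ)] at h2
  have : (∑ a, d a * Complex.normSq ((Pi.single j 1 : Fin n → ℂ) a) : ℝ) = d j := by
    rw [Finset.sum_eq_single j]
    · simp
    · intro b _ hb; simp [Pi.single_eq_of_ne hb]
    · simp
  rw [this] at h2
  exact_mod_cast h2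

/-- Min-max style bound: if the quadratic form of `W` is `≤ c` on the subspace cut out by the
`k` constraints `w i` (`i < k`), then the `k`-th sorted eigenvalue of `W` is at most `c`. -/
lemma sorted_bound {W U : Mat n} {d : Fin n → ℝ} (h : SDecomp W U d) (k : Fin n) (c : ℝ)
    (w : Fin n → Fin n → ℂ)
    (hyp : ∀ x : Fin n → ℂ, (∀ i : Fin n, i < k → star (w i) ⬝ᵥ x = 0) →
      Complex.re (star x ⬝ᵥ (W *ᵥ x)) ≤ c * nsq x) :
    d k ≤ c := by
  classical
  set T : Mat n := fun i j =>
    if (i:ℕ) < (k:ℕ) then (if (j:ℕ) ≤ (k:ℕ) then star (w i) ⬝ᵥ (fun a => U a j) else 0)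
    else (if (k:ℕ) < (i:ℕ) ∧ i = j then 1 else 0) with hT
  have hdet : T.det = 0 := by
    refine Matrix.det_eq_zero_of_row_eq_zero k (fun j => ?_)
    simp [hT]
  obtain ⟨α, hα0, hTα⟩ := (Matrix.exists_mulVec_eq_zero_iff).mpr hdet
  have hsupp : ∀ j : Fin n, (k:ℕ) < (j:ℕ) → α j = 0 := by
    intro j hj
    have hjk : ¬((j:ℕ) < (k:ℕ)) := Nat.not_lt.mpr (le_of_lt hj)
    have h1 : (T *ᵥ α) j = α j := by
      show ∑ b, T j b * α b = α j
      rw [Finset.sum_congr rfl (g := fun b => if j = b then α b else 0) ?_]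
      · simp
      · intro b _
        simp only [hT]
        by_cases hb : j = b
        · subst hb
          rw [if_neg hjk, if_pos ⟨hj, rfl⟩, one_mul, if_pos rfl]
        · have hc : ¬((k:ℕ) < (j:ℕ) ∧ j = b) := fun hc => hb hc.2
          rw [if_neg hjk, if_neg hc, zero_mul, if_neg hb]
    rw [hTα] at h1
    simpa using h1.symm
  have hconstr : ∀ i : Fin n, i < k → star (w i) ⬝ᵥ (U *ᵥ α) = 0 := by
    intro i hik
    have hik' : (i:ℕ) < (k:ℕ) := hik
    have h1 : (T *ᵥ α) i = 0 := by rw [hTα]; rfl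
    have h3 : (T *ᵥ α) i = ∑ b, T i b * α b := rfl
    have h2 : star (w i) ⬝ᵥ (U *ᵥ α) = ∑ b, (star (w i) ⬝ᵥ (fun a => U a b)) * α b := by
      simp only [dotProduct, Matrix.mulVec, Finset.mul_sum, Finset.sum_mul]
      rw [Finset.sum_comm]
      exact Finset.sum_congr rfl fun b _ => Finset.sum_congr rfl fun a _ => by ring
    rw [h2, ← h1, h3]
    refine Finset.sum_congr rfl fun b _ => ?_
    simp only [hT]
    rw [if_pos hik']
    by_cases hb : (b:ℕ) ≤ (k:ℕ)
    · rw [if_pos hb]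
    · rw [if_neg hb, hsupp b (Nat.not_le.mp hb), mul_zero, mul_zero]
  have hα : nsq α ≠ 0 := fun h0 => hα0 (nsq_eq_zero h0)
  have hαpos : 0 < nsq α := (nsq_nonneg α).lt_of_ne (Ne.symm hα)
  have hup := hyp (U *ᵥ α) hconstr
  rw [h.qf α, Complex.ofReal_re, unsq h.unitary] at hup
  have hlow : d k * nsq α ≤ ∑ j, d j * Complex.normSq (α j) := by
    rw [nsq, Finset.mul_sum]
    refine Finset.sum_le_sum fun j _ => ?_
    by_cases hj : (j:ℕ) ≤ (k:ℕ)
    · exact mul_le_mul_of_nonneg_right (h.anti hj) (Complex.normSq_nonneg _)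
    · rw [hsupp j (Nat.not_le.mp hj)]; simp
  exact le_of_mul_le_mul_right (hlow.trans hup) hαpos

/-- On the span of the columns `≥ k` of `U`, the quadratic form of `W` is at most `d k`. -/
lemma qf_le_of_perp {W U : Mat n} {d : Fin n → ℝ} (h : SDecomp W U d) (k : Fin n)
    (x : Fin n → ℂ) (hx : ∀ i : Fin n, i < k → star (fun a => U a i) ⬝ᵥ x = 0) :
    Complex.re (star x ⬝ᵥ (W *ᵥ x)) ≤ d k * nsq x := by
  have hU := h.unitary
  set β := Uᴴ *ᵥ x with hβ
  have hxβ : x = U *ᵥ β := (ucancel' hU x).symm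
  have hβ0 : ∀ i : Fin n, i < k → β i = 0 := by
    intro i hik
    have e1 : β i = star (fun a => U a i) ⬝ᵥ x := by
      simp only [hβ, Matrix.mulVec, dotProduct, Matrix.conjTranspose_apply]
      rfl
    rw [e1, hx i hik]
  calc Complex.re (star x ⬝ᵥ (W *ᵥ x)) = ∑ j, d j * Complex.normSq (β j) := by
        conv_lhs => rw [hxβ]
        rw [h.qf β, Complex.ofReal_re]
    _ ≤ ∑ j, d k * Complex.normSq (β j) := by
        refine Finset.sum_le_sum fun j _ => ?_
        by_cases hj : j < k
        · rw [hβ0 j hj]; simp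
        · exact mul_le_mul_of_nonneg_right (h.anti (not_lt.mp hj)) (Complex.normSq_nonneg _)
    _ = d k * nsq β := by rw [nsq, Finset.mul_sum]
    _ = d k * nsq x := by rw [hxβ, unsq hU]

/-- uniqueness of sorted eigenvalues -/
lemma sdecomp_unique {W U U' : Mat n} {d d' : Fin n → ℝ}
    (h : SDecomp W U d) (h' : SDecomp W U' d') : d = d' := by
  have key : ∀ (U1 U2 : Mat n) (d1 d2 : Fin n → ℝ), SDecomp W U1 d1 → SDecomp W U2 d2 →
      ∀ k, d1 k ≤ d2 k := fun U1 U2 d1 d2 h1 h2 k =>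
    sorted_bound h1 k (d2 k) (fun i a => U2 a i) (fun x hx => qf_le_of_perp h2 k x hx)
  funext k
  exact le_antisymm (key _ _ _ _ h h' k) (key _ _ _ _ h' h k)

/-- Cauchy-Schwarz for the complex dot product. -/
lemma re_dot_sq_le (x y : Fin n → ℂ) :
    (Complex.re (star x ⬝ᵥ y))^2 ≤ nsq x * nsq y := by
  have h1 : |Complex.re (star x ⬝ᵥ y)| ≤ ∑ i, ‖x i‖ * ‖y i‖ := by
    calc |Complex.re (star x ⬝ᵥ y)| ≤ ‖star x ⬝ᵥ y‖ := Complex.abs_re_le_norm _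
      _ ≤ ∑ i, ‖star x i * y i‖ := norm_sum_le _ _
      _ = ∑ i, ‖x i‖ * ‖y i‖ := by
          refine Finset.sum_congr rfl fun i _ => ?_
          rw [norm_mul]
          simp [Pi.star_apply]
  have h2 : (∑ i, ‖x i‖ * ‖y i‖)^2
      ≤ (∑ i, ‖x i‖^2) * (∑ i, ‖y i‖^2) :=
    Finset.sum_mul_sq_le_sq_mul_sq _ _ _
  have h3 : (Complex.re (star x ⬝ᵥ y))^2 ≤ (∑ i, ‖x i‖ * ‖y i‖)^2 := by
    rw [← sq_abs]
    exact pow_le_pow_left₀ (abs_nonneg _) h1 2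
  refine h3.trans (h2.trans_eq ?_)
  rw [nsq, nsq]
  congr 1 <;> exact Finset.sum_congr rfl fun i _ => (Complex.sq_norm _)

/-- `MᴴM` and `MMᴴ` have the same sorted eigenvalues (one direction). -/
lemma mul_star_eigs_le {M U V : Mat n} {d d' : Fin n → ℝ}
    (h1 : SDecomp (M * Mᴴ) U d) (h2 : SDecomp (Mᴴ * M) V d') (k : Fin n) : d' k ≤ d k := by
  have hdk : 0 ≤ d k := h1.nonneg (Matrix.posSemidef_self_mul_conjTranspose M) k
  refine sorted_bound h2 k (d k) (fun i => Mᴴ *ᵥ (fun a => U a i)) (fun x hx => ?_)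
  set y := M *ᵥ x with hy
  set β := Uᴴ *ᵥ y with hβ
  have hU := h1.unitary
  have hyβ : y = U *ᵥ β := (ucancel' hU y).symm
  have hβ0 : ∀ i : Fin n, i < k → β i = 0 := by
    intro i hik
    have e1 : β i = star (fun a => U a i) ⬝ᵥ y := by
      simp only [hβ, Matrix.mulVec, dotProduct, Matrix.conjTranspose_apply]
      rfl
    have e2 : star (Mᴴ *ᵥ (fun a => U a i)) ⬝ᵥ x = star (fun a => U a i) ⬝ᵥ y := by
      rw [Matrix.star_mulVec, Matrix.conjTranspose_conjTranspose, ← Matrix.dotProduct_mulVec]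
    rw [e1, ← e2, hx i hik]
  have hqf : star x ⬝ᵥ ((Mᴴ * M) *ᵥ x) = ((nsq y : ℝ) : ℂ) := by
    rw [← Matrix.mulVec_mulVec, Matrix.dotProduct_mulVec (star x), ← Matrix.star_mulVec,
      ← hy, dot_star_self]
  have hre : Complex.re (star x ⬝ᵥ ((Mᴴ * M) *ᵥ x)) = nsq y := by rw [hqf, Complex.ofReal_re]
  have hqf2 : nsq ((Mᴴ * M) *ᵥ x) = ∑ j, d j * Complex.normSq (β j) := by
    have e0 : (Mᴴ * M) *ᵥ x = Mᴴ *ᵥ y := by rw [← Matrix.mulVec_mulVec]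
    rw [e0]
    have e3 : star (Mᴴ *ᵥ y) ⬝ᵥ (Mᴴ *ᵥ y) = star y ⬝ᵥ ((M * Mᴴ) *ᵥ y) := by
      rw [Matrix.star_mulVec, Matrix.conjTranspose_conjTranspose, ← Matrix.dotProduct_mulVec,
        Matrix.mulVec_mulVec]
    have e4 := h1.qf β
    rw [← hyβ] at e4
    have e5 := e3.trans e4
    rw [dot_star_self] at e5
    exact_mod_cast e5
  have hsle : ∑ j, d j * Complex.normSq (β j) ≤ d k * nsq y := by
    have : nsq y = nsq β := by rw [hyβ, unsq hU]
    rw [this, nsq, Finset.mul_sum]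
    refine Finset.sum_le_sum fun j _ => ?_
    by_cases hj : j < k
    · rw [hβ0 j hj]; simp
    · exact mul_le_mul_of_nonneg_right (h1.anti (not_lt.mp hj)) (Complex.normSq_nonneg _)
  rw [hre]
  rcases eq_or_lt_of_le (nsq_nonneg y) with h0 | hpos
  · rw [← h0]; exact mul_nonneg hdk (nsq_nonneg x)
  · have hCS := re_dot_sq_le x ((Mᴴ * M) *ᵥ x)
    rw [hre] at hCS
    have hfin : nsq y * nsq y ≤ (d k * nsq x) * nsq y := by
      calc nsq y * nsq y = nsq y ^ 2 := (pow_two _).symm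
        _ ≤ nsq x * nsq ((Mᴴ * M) *ᵥ x) := hCS
        _ = nsq x * ∑ j, d j * Complex.normSq (β j) := by rw [hqf2]
        _ ≤ nsq x * (d k * nsq y) := mul_le_mul_of_nonneg_left hsle (nsq_nonneg x)
        _ = (d k * nsq x) * nsq y := by ring
    exact le_of_mul_le_mul_right hfin hpos

lemma mul_star_eigs_eq {M U V : Mat n} {d d' : Fin n → ℝ}
    (h1 : SDecomp (M * Mᴴ) U d) (h2 : SDecomp (Mᴴ * M) V d') : d = d' := by
  funext k
  refine le_antisymm ?_ (mul_star_eigs_le h1 h2 k)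
  have h1' : SDecomp (Mᴴ * (Mᴴ)ᴴ) V d' := by
    rw [Matrix.conjTranspose_conjTranspose]; exact h2
  have h2' : SDecomp ((Mᴴ)ᴴ * Mᴴ) U d := by
    rw [Matrix.conjTranspose_conjTranspose]; exact h1
  exact mul_star_eigs_le h1' h2' k
/-- A concave nonnegative function on `[0,∞)` is nondecreasing. -/
lemma mono_of_concave_nonneg {f : ℝ → ℝ} (hc : ConcaveOn ℝ (Set.Ici 0) f)
    (hnn : ∀ x ∈ Set.Ici (0:ℝ), 0 ≤ f x) : MonotoneOn f (Set.Ici 0) := by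
  rintro x hx y hy hxy
  rcases eq_or_lt_of_le hxy with rfl | hlt
  · exact le_refl _
  by_contra hfy
  push_neg at hfy
  have hx0 : (0:ℝ) ≤ x := hx
  have hfx : 0 < f x := lt_of_le_of_lt (hnn y hy) hfy
  have hDpos : 0 < f x - f y := sub_pos.mpr hfy
  set t := (y * f x - x * f y) / (f x - f y) + 1 with htdef
  have htD : t * (f x - f y) = y * f x - x * f y + (f x - f y) := by
    rw [htdef]; field_simp
  have e1 : (t - y) * (f x - f y) = f y * (y - x) + (f x - f y) := by
    linear_combination htD
  have e2 : (t - x) * (f x - f y) = f x * (y - x) + (f x - f y) := by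
    linear_combination htD
  have e3 : (t - y) * f x - (t - x) * f y = f x - f y := by
    linear_combination htD
  have hty : y < t := by
    by_contra hyt
    push_neg at hyt
    have h1 : (t - y) * (f x - f y) ≤ 0 :=
      mul_nonpos_of_nonpos_of_nonneg (by linarith) hDpos.le
    have h2 : 0 ≤ f y * (y - x) := mul_nonneg (hnn y hy) (by linarith)
    linarith
  have htx : x < t := lt_trans hlt hty
  have htx0 : 0 < t - x := sub_pos.mpr htx
  have ht0 : (0:ℝ) ≤ t := le_trans hx0 htx.le
  set a := (t - y) / (t - x) with hadef
  set b := (y - x) / (t - x) with hbdef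
  have ha : 0 ≤ a := div_nonneg (by linarith) htx0.le
  have hb : 0 ≤ b := div_nonneg (by linarith) htx0.le
  have hab : a + b = 1 := by
    rw [hadef, hbdef, ← add_div, div_eq_one_iff_eq (ne_of_gt htx0)]
    ring
  have hcomb : a • x + b • t = y := by
    simp only [smul_eq_mul, hadef, hbdef]
    field_simp
    ring
  have hj := hc.2 hx (Set.mem_Ici.mpr ht0) ha hb hab
  rw [hcomb] at hj
  simp only [smul_eq_mul] at hj
  have hft : 0 ≤ f t := hnn t (Set.mem_Ici.mpr ht0)
  have hkey : f y < a * f x := by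
    rw [hadef, div_mul_eq_mul_div, lt_div_iff₀ htx0]
    nlinarith
  nlinarith [mul_nonneg hb hft]

/-- finite Jensen inequality with subprobability weights -/
lemma jensen_sub {f₀ : ℝ → ℝ} (hc : ConcaveOn ℝ (Set.Ici 0) f₀) (h0 : f₀ 0 = 0)
    (hm : MonotoneOn f₀ (Set.Ici 0)) {m : ℕ} (z t : Fin m → ℝ)
    (hz : ∀ j, 0 ≤ z j) (ht : ∀ j, 0 ≤ t j) (ht1 : ∑ j, t j ≤ 1) {μ : ℝ}
    (hμ : 0 ≤ μ) (hzt : ∑ j, t j * z j ≤ μ) : ∑ j, t j * f₀ (z j) ≤ f₀ μ := by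
  classical
  set w : Option (Fin m) → ℝ := fun o => o.elim (1 - ∑ j, t j) t with hw
  set p : Option (Fin m) → ℝ := fun o => o.elim 0 z with hp
  have hw0 : ∀ i ∈ (Finset.univ : Finset (Option (Fin m))), 0 ≤ w i := by
    rintro (_|j) _
    · simpa [hw] using sub_nonneg.mpr ht1
    · simpa [hw] using ht j
  have hw1 : ∑ i, w i = 1 := by
    rw [Fintype.sum_option]
    simp [hw]
  have hmem : ∀ i ∈ (Finset.univ : Finset (Option (Fin m))), p i ∈ Set.Ici (0:ℝ) := by
    rintro (_|j) _
    · simp [hp]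
    · simpa [hp] using hz j
  have hjen := hc.le_map_sum hw0 hw1 hmem
  have hL : ∑ i, w i • f₀ (p i) = ∑ j, t j * f₀ (z j) := by
    rw [Fintype.sum_option]
    simp [hw, hp, h0, smul_eq_mul]
  have hsum : ∑ i, w i • p i = ∑ j, t j * z j := by
    rw [Fintype.sum_option]
    simp [hw, hp, smul_eq_mul]
  rw [hL, hsum] at hjen
  exact hjen.trans (hm (Set.mem_Ici.mpr (Finset.sum_nonneg fun j _ => mul_nonneg (ht j) (hz j)))
    (Set.mem_Ici.mpr hμ) hzt)

/-- simultaneously sorted conjugation for a family of functions of the same matrix -/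
lemma sorted_pair {Q : Mat n} (hQ : Q ∈ Matrix.unitaryGroup (Fin n) ℂ) (e : Fin n → ℝ) :
    ∃ (V : Mat n) (σ : Equiv.Perm (Fin n)), V ∈ Matrix.unitaryGroup (Fin n) ℂ ∧
      Antitone (fun i => e (σ i)) ∧
      ∀ φ : ℝ → ℝ, Q * rdiag (fun i => φ (e i)) * Qᴴ
        = V * rdiag (fun i => φ (e (σ i))) * Vᴴ := by
  classical
  set σ := Tuple.sort (fun i => -(e i)) with hσ
  refine ⟨Q.submatrix id σ, σ, ?_, ?_, ?_⟩
  · rw [Matrix.mem_unitaryGroup_iff']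
    have h1 : Qᴴ * Q = 1 := umul' hQ
    ext i j
    rw [Matrix.star_eq_conjTranspose, Matrix.mul_apply]
    have h2 := congrFun (congrFun h1 (σ i)) (σ j)
    rw [Matrix.mul_apply] at h2
    calc ∑ a, (Q.submatrix id σ)ᴴ i a * (Q.submatrix id σ) a j
        = ∑ a, Qᴴ (σ i) a * Q a (σ j) := by
          refine Finset.sum_congr rfl fun a _ => ?_
          simp [Matrix.conjTranspose_apply, Matrix.submatrix_apply]
      _ = (1 : Mat n) (σ i) (σ j) := h2
      _ = (1 : Mat n) i j := by
          by_cases hij : i = j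
          · subst hij; simp
          · rw [Matrix.one_apply_ne hij, Matrix.one_apply_ne]
            exact fun hc => hij (σ.injective hc)
  · intro i j hij
    have := Tuple.monotone_sort (fun i => -(e i)) hij
    simp only [Function.comp_apply] at this
    simpa [hσ] using this
  · intro φ
    ext i j
    rw [triple_apply, triple_apply,
      ← Equiv.sum_comp σ (fun a => Q i a * ((φ (e a) : ℝ) : ℂ) * (starRingEnd ℂ) (Q j a))]
    refine Finset.sum_congr rfl fun a _ => ?_
    simp [Matrix.submatrix_apply]

/-- **Crux lemma**: for `Z = Q diag(z) Qᴴ ≥ 0`, a Hermitian contraction `R` and concave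
nondecreasing `f₀` with `f₀ 0 = 0`, the sorted eigenvalues of `R f₀(Z) R` are dominated by
`f₀` of the sorted eigenvalues of `R Z R`. -/
lemma crux {Q R VH UW : Mat n} {z μ y : Fin n → ℝ} {f₀ : ℝ → ℝ}
    (hQ : Q ∈ Matrix.unitaryGroup (Fin n) ℂ) (hz : ∀ j, 0 ≤ z j)
    (hR : R.IsHermitian) (hR1 : ((1 : Mat n) - R * R).PosSemidef)
    (hc : ConcaveOn ℝ (Set.Ici 0) f₀) (h0 : f₀ 0 = 0) (hm : MonotoneOn f₀ (Set.Ici 0))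
    (hH : SDecomp (R * (Q * rdiag z * Qᴴ) * R) VH μ)
    (hW : SDecomp (R * (Q * rdiag (fun j => f₀ (z j)) * Qᴴ) * R) UW y)
    (k : Fin n) : y k ≤ f₀ (μ k) := by
  have hZpsd : (Q * rdiag z * Qᴴ).PosSemidef := by
    have hd : (rdiag z).PosSemidef :=
      Matrix.PosSemidef.diagonal (fun j => Complex.zero_le_real.mpr (hz j))
    exact hd.mul_mul_conjTranspose_same Q
  have hHpsd : (R * (Q * rdiag z * Qᴴ) * R).PosSemidef := by
    have e0 : R * (Q * rdiag z * Qᴴ) * R = R * (Q * rdiag z * Qᴴ) * Rᴴ := by rw [hR.eq]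
    rw [e0]
    exact hZpsd.mul_mul_conjTranspose_same R
  have hμk : 0 ≤ μ k := hH.nonneg hHpsd k
  refine sorted_bound hW k (f₀ (μ k)) (fun i a => VH a i) (fun x hx => ?_)
  set w0 := R *ᵥ x with hw0def
  set γ := Qᴴ *ᵥ w0 with hγdef
  have e2 : star x ᵥ* R = star w0 := by
    rw [hw0def, Matrix.star_mulVec, hR.eq]
  have e3 : w0 = Q *ᵥ γ := (ucancel' hQ w0).symm
  have key : ∀ c : Fin n → ℝ,
      star x ⬝ᵥ ((R * (Q * rdiag c * Qᴴ) * R) *ᵥ x)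
        = ((∑ j, c j * Complex.normSq (γ j) : ℝ) : ℂ) := by
    intro c
    have e1 : (R * (Q * rdiag c * Qᴴ) * R) *ᵥ x
        = R *ᵥ ((Q * rdiag c * Qᴴ) *ᵥ w0) := by
      rw [hw0def, Matrix.mulVec_mulVec, Matrix.mulVec_mulVec, ← mul_assoc, ← mul_assoc]
    rw [e1, Matrix.dotProduct_mulVec (star x), e2, e3]
    exact qf_triple hQ c γ
  set tt : Fin n → ℝ := fun j => Complex.normSq (γ j) with htt
  have hsum_t : ∑ j, tt j ≤ nsq x := by
    have h1 := hR1.re_dotProduct_nonneg x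
    have e5 : star x ⬝ᵥ ((R * R) *ᵥ x) = ((nsq w0 : ℝ) : ℂ) := by
      rw [← Matrix.mulVec_mulVec, Matrix.dotProduct_mulVec, e2, ← hw0def, dot_star_self]
    have e4 : star x ⬝ᵥ (((1:Mat n) - R * R) *ᵥ x) = ((nsq x - nsq w0 : ℝ) : ℂ) := by
      rw [Matrix.sub_mulVec, dotProduct_sub, Matrix.one_mulVec, dot_star_self, e5]
      push_cast
      ring
    rw [e4] at h1
    have h1' : (0:ℝ) ≤ nsq x - nsq w0 := by simpa using h1
    have e6 : ∑ j, tt j = nsq w0 := by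
      rw [e3, unsq hQ]
      rfl
    linarith [h1']
  have hzt : ∑ j, z j * tt j ≤ μ k * nsq x := by
    have h6 := qf_le_of_perp hH k x hx
    rw [key z, Complex.ofReal_re] at h6
    exact h6
  rw [key (fun j => f₀ (z j)), Complex.ofReal_re]
  rcases eq_or_lt_of_le (nsq_nonneg x) with hx0 | hxpos
  · have hx' : x = 0 := nsq_eq_zero hx0.symm
    have hγ' : γ = 0 := by rw [hγdef, hw0def, hx', Matrix.mulVec_zero, Matrix.mulVec_zero]
    rw [← hx0]
    simp [htt, hγ']
  · have hjen := jensen_sub hc h0 hm z (fun j => tt j / nsq x)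
      hz (fun j => div_nonneg (Complex.normSq_nonneg _) (le_of_lt hxpos))
      (by rw [← Finset.sum_div, div_le_one hxpos]; exact hsum_t)
      hμk
      (by
        have : ∑ j, tt j / nsq x * z j = (∑ j, z j * tt j) / nsq x := by
          rw [Finset.sum_div]
          exact Finset.sum_congr rfl fun j _ => by ring
        rw [this, div_le_iff₀ hxpos]
        exact hzt)
    have : ∑ j, tt j / nsq x * f₀ (z j) = (∑ j, f₀ (z j) * tt j) / nsq x := by
      rw [Finset.sum_div]
      exact Finset.sum_congr rfl fun j _ => by ring
    rw [this, div_le_iff₀ hxpos] at hjen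
    exact hjen

lemma rdiag_congr {a b : Fin n → ℝ} (h : ∀ j, a j = b j) : rdiag a = rdiag b := by
  have : a = b := funext h
  rw [this]

lemma tri_congr {Q : Mat n} {a b : Fin n → ℝ} (h : ∀ j, a j = b j) :
    Q * rdiag a * Qᴴ = Q * rdiag b * Qᴴ := by
  rw [rdiag_congr h]

lemma rdiag_sub (a b : Fin n → ℝ) :
    rdiag a - rdiag b = rdiag (fun j => a j - b j) := by
  simp [rdiag, ← Matrix.diagonal_sub]

lemma rdiag_add (a b : Fin n → ℝ) :
    rdiag a + rdiag b = rdiag (fun j => a j + b j) := by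
  simp [rdiag, ← Matrix.diagonal_add]

lemma tri_mul_tri {Q : Mat n} (hQ : Q ∈ Matrix.unitaryGroup (Fin n) ℂ) (a b : Fin n → ℝ) :
    (Q * rdiag a * Qᴴ) * (Q * rdiag b * Qᴴ) = Q * rdiag (fun j => a j * b j) * Qᴴ := by
  rw [show (Q * rdiag a * Qᴴ) * (Q * rdiag b * Qᴴ) = Q * rdiag a * (Qᴴ * Q) * rdiag b * Qᴴ by
    simp only [mul_assoc], umul' hQ, mul_one, mul_assoc Q (rdiag a), rdiag_mul_rdiag]

lemma tri_sub {Q : Mat n} (a b : Fin n → ℝ) :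
    Q * rdiag a * Qᴴ - Q * rdiag b * Qᴴ = Q * rdiag (fun j => a j - b j) * Qᴴ := by
  rw [← Matrix.sub_mul, ← Matrix.mul_sub, rdiag_sub]

lemma tri_isHermitian (Q : Mat n) (d : Fin n → ℝ) : (Q * rdiag d * Qᴴ).IsHermitian := by
  show (Q * rdiag d * Qᴴ)ᴴ = Q * rdiag d * Qᴴ
  rw [Matrix.conjTranspose_mul, Matrix.conjTranspose_mul, Matrix.conjTranspose_conjTranspose,
    rdiag_conjTranspose, mul_assoc]

lemma tri_posSemidef {Q : Mat n} (d : Fin n → ℝ) (hd : ∀ j, 0 ≤ d j) :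
    (Q * rdiag d * Qᴴ).PosSemidef :=
  (Matrix.PosSemidef.diagonal
    (fun j => Complex.zero_le_real.mpr (hd j))).mul_mul_conjTranspose_same Q

lemma psd_neg_eq_zero {M : Mat n} (h1 : M.PosSemidef) (h2 : (-M).PosSemidef) : M = 0 := by
  have hv : ∀ x : Fin n → ℂ, M *ᵥ x = 0 := by
    intro x
    have a1 := h1.dotProduct_mulVec_nonneg x
    have a2 := h2.dotProduct_mulVec_nonneg x
    rw [Matrix.neg_mulVec, dotProduct_neg, neg_nonneg] at a2
    exact (h1.dotProduct_mulVec_zero_iff x).mp (le_antisymm a2 a1)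
  ext i j
  have h := hv (Pi.single j 1)
  rw [Matrix.mulVec_single] at h
  have := congrFun h i
  simpa using this

/-- sorted spectral decomposition compatible with the functional calculus -/
lemma exists_sdecomp_cfc {W : Mat n} (hW : W.IsHermitian) :
    ∃ (V : Mat n) (d : Fin n → ℝ), SDecomp W V d ∧
      ∀ φ : ℝ → ℝ, cfc φ W = V * rdiag (fun i => φ (d i)) * Vᴴ := by
  obtain ⟨V, σ, hV, hanti, hconj⟩ := sorted_pair (hW.eigenvectorUnitary).2 hW.eigenvalues
  refine ⟨V, fun i => hW.eigenvalues (σ i), ⟨hV, hanti, ?_⟩, fun φ => ?_⟩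
  · have h1 := hW.spectral_theorem
    rw [Unitary.conjStarAlgAut_apply, Matrix.star_eq_conjTranspose] at h1
    have h2 := hconj id
    simp only [id_eq] at h2
    exact h1.trans h2
  · rw [hW.cfc_eq φ]
    exact hconj φ

lemma psd_sqrt {W : Mat n} (hW : W.PosSemidef) :
    (cfc Real.sqrt W).PosSemidef ∧ cfc Real.sqrt W * cfc Real.sqrt W = W := by
  obtain ⟨V, d, hd, hcfc⟩ := exists_sdecomp_cfc hW.1
  have hnn := hd.nonneg hW
  rw [hcfc Real.sqrt]
  refine ⟨tri_posSemidef _ (fun j => Real.sqrt_nonneg _), ?_⟩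
  rw [tri_mul_tri hd.unitary, hd.eq]
  exact tri_congr (fun j => Real.mul_self_sqrt (hnn j))

lemma exists_sdecomp {W : Mat n} (hW : W.IsHermitian) :
    ∃ (V : Mat n) (d : Fin n → ℝ), SDecomp W V d := by
  obtain ⟨V, d, h, -⟩ := exists_sdecomp_cfc hW
  exact ⟨V, d, h⟩

lemma cfc_split {W : Mat n} (hW : W.IsHermitian) (f : ℝ → ℝ) (c : ℝ) :
    cfc f W = cfc (fun x => f x - c) W + Matrix.diagonal (fun _ : Fin n => (c:ℂ)) := by
  obtain ⟨V, d, hd, hcfc⟩ := exists_sdecomp_cfc hW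
  rw [hcfc f, hcfc (fun x => f x - c)]
  have e1 : rdiag (fun i => f (d i)) = rdiag (fun i => f (d i) - c) + rdiag (fun _ => c) := by
    rw [rdiag_add]
    refine rdiag_congr (fun i => ?_)
    ring
  rw [e1, Matrix.mul_add, Matrix.add_mul]
  congr 1
  have e2 : rdiag (fun _ : Fin n => c) = (c:ℂ) • (1:Mat n) := by
    rw [Matrix.smul_one_eq_diagonal]
    rfl
  rw [e2, Matrix.mul_smul, Matrix.smul_mul, mul_one, umul hd.unitary,
    Matrix.smul_one_eq_diagonal]

lemma conj_const {U : Mat n} (hU : U ∈ Matrix.unitaryGroup (Fin n) ℂ) (c : ℝ) :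
    U * Matrix.diagonal (fun _ : Fin n => (c:ℂ)) * Uᴴ
      = Matrix.diagonal (fun _ : Fin n => (c:ℂ)) := by
  rw [← Matrix.smul_one_eq_diagonal, Matrix.mul_smul, Matrix.smul_mul, mul_one, umul hU]

/-- the value `if x = 0 then 0 else (√x)⁻¹`, a pseudo-inverse square root -/
def qinv (x : ℝ) : ℝ := if x = 0 then 0 else (Real.sqrt x)⁻¹

/-- One side of the Bourin–Uchiyama theorem: with `G = g(A+B)` for `g(x) = √(f₀(x)/x)`,
there is a unitary `U` with `G A G ≤ U f₀(A) Uᴴ`. -/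
lemma side_bound {A B' Q : Mat n} {z : Fin n → ℝ} {f₀ : ℝ → ℝ}
    (hA : A.PosSemidef) (hB' : B'.PosSemidef)
    (hQ : Q ∈ Matrix.unitaryGroup (Fin n) ℂ) (hz : ∀ j, 0 ≤ z j)
    (hsum : A + B' = Q * rdiag z * Qᴴ)
    (hc : ConcaveOn ℝ (Set.Ici 0) f₀) (h0 : f₀ 0 = 0) (hm : MonotoneOn f₀ (Set.Ici 0))
    (hnn : ∀ x ∈ Set.Ici (0:ℝ), 0 ≤ f₀ x) :
    ∃ U : Mat n, U ∈ Matrix.unitaryGroup (Fin n) ℂ ∧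
      (U * cfc f₀ A * Uᴴ -
        (Q * rdiag (fun j => Real.sqrt (f₀ (z j)) * qinv (z j)) * Qᴴ) * A *
        (Q * rdiag (fun j => Real.sqrt (f₀ (z j)) * qinv (z j)) * Qᴴ)).PosSemidef := by
  classical
  have hf₀z : ∀ j, 0 ≤ f₀ (z j) := fun j => hnn _ (Set.mem_Ici.mpr (hz j))
  set G : Mat n := Q * rdiag (fun j => Real.sqrt (f₀ (z j)) * qinv (z j)) * Qᴴ with hGdef
  set sq : Mat n := Q * rdiag (fun j => qinv (z j)) * Qᴴ with hsqdef
  set P : Mat n := Q * rdiag (fun j => if z j = 0 then (0:ℝ) else 1) * Qᴴ with hPdef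
  set Fh : Mat n := Q * rdiag (fun j => Real.sqrt (f₀ (z j))) * Qᴴ with hFhdef
  set F : Mat n := Q * rdiag (fun j => f₀ (z j)) * Qᴴ with hFdef
  set Zh : Mat n := Q * rdiag (fun j => Real.sqrt (z j)) * Qᴴ with hZhdef
  have hsqh : sq.IsHermitian := by rw [hsqdef]; exact tri_isHermitian Q _
  have hFh : Fh.IsHermitian := by rw [hFhdef]; exact tri_isHermitian Q _
  have hZhh : Zh.IsHermitian := by rw [hZhdef]; exact tri_isHermitian Q _
  have hPh : P.IsHermitian := by rw [hPdef]; exact tri_isHermitian Q _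
  set At : Mat n := sq * A * sq with hAtdef
  have hAtpsd : At.PosSemidef := by
    have e : At = sq * A * sqᴴ := by rw [hAtdef, hsqh.eq]
    rw [e]
    exact hA.mul_mul_conjTranspose_same sq
  -- sq * (A + B') * sq = P
  have hP : sq * (A + B') * sq = P := by
    rw [hsum, hsqdef, tri_mul_tri hQ, tri_mul_tri hQ, hPdef]
    refine tri_congr (fun j => ?_)
    by_cases hj : z j = 0
    · simp [qinv, hj]
    · have hpos : 0 < z j := lt_of_le_of_ne (hz j) (Ne.symm hj)
      have hs : Real.sqrt (z j) ≠ 0 := by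
        rw [Real.sqrt_ne_zero']
        exact hpos
      simp only [qinv, if_neg hj]
      field_simp
      exact (Real.sq_sqrt (hz j)).symm
  have hPsplit : At + sq * B' * sq = P := by
    rw [← hP, Matrix.mul_add, Matrix.add_mul, hAtdef]
  -- 1 - At is PSD
  have hone : Q * rdiag (fun _ => (1:ℝ)) * Qᴴ = 1 := by
    rw [rdiag_one, mul_one, umul hQ]
  have hPc : (1:Mat n) - P = Q * rdiag (fun j => 1 - (if z j = 0 then (0:ℝ) else 1)) * Qᴴ := by
    rw [← hone, hPdef, tri_sub]
  have hPcpsd : ((1:Mat n) - P).PosSemidef := by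
    rw [hPc]
    refine tri_posSemidef _ (fun j => ?_)
    by_cases hj : z j = 0 <;> simp [hj]
  have hsqB : (sq * B' * sq).PosSemidef := by
    have e : sq * B' * sq = sq * B' * sqᴴ := by rw [hsqh.eq]
    rw [e]
    exact hB'.mul_mul_conjTranspose_same sq
  have hAt1 : ((1:Mat n) - At).PosSemidef := by
    have e : (1:Mat n) - At = ((1:Mat n) - P) + sq * B' * sq := by
      rw [← hPsplit]
      abel
    rw [e]
    exact hPcpsd.add hsqB
  -- R = sqrt of At
  set R : Mat n := cfc Real.sqrt At with hRdef
  have hRpsd : R.PosSemidef := (psd_sqrt hAtpsd).1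
  have hRh : R.IsHermitian := hRpsd.1
  have hRR : R * R = At := (psd_sqrt hAtpsd).2
  have hR1 : ((1:Mat n) - R * R).PosSemidef := by rw [hRR]; exact hAt1
  -- P absorbs A
  have hPc2 : ((1:Mat n) - P).IsHermitian := by rw [hPc]; exact tri_isHermitian Q _
  have hPcZ : ((1:Mat n) - P) * (A + B') * ((1:Mat n) - P) = 0 := by
    rw [hsum, hPc, tri_mul_tri hQ, tri_mul_tri hQ]
    have e : (fun j => (1 - (if z j = 0 then (0:ℝ) else 1)) * z j *
        (1 - (if z j = 0 then (0:ℝ) else 1))) = fun _ => (0:ℝ) := by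
      funext j
      by_cases hj : z j = 0 <;> simp [hj]
    rw [e]
    simp [rdiag]
  have hXzero : ((1:Mat n) - P) * A * ((1:Mat n) - P) = 0 := by
    have hdis : ((1:Mat n) - P) * A * ((1:Mat n) - P)
        + ((1:Mat n) - P) * B' * ((1:Mat n) - P) = 0 := by
      rw [← hPcZ, Matrix.mul_add, Matrix.add_mul]
    have hpsd1 : (((1:Mat n) - P) * A * ((1:Mat n) - P)).PosSemidef := by
      have e : ((1:Mat n) - P) * A * ((1:Mat n) - P)
          = ((1:Mat n) - P) * A * ((1:Mat n) - P)ᴴ := by rw [hPc2.eq]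
      rw [e]
      exact hA.mul_mul_conjTranspose_same _
    have hpsd2 : (-(((1:Mat n) - P) * A * ((1:Mat n) - P))).PosSemidef := by
      have e : -(((1:Mat n) - P) * A * ((1:Mat n) - P))
          = ((1:Mat n) - P) * B' * ((1:Mat n) - P) := by
        have := neg_eq_of_add_eq_zero_right hdis
        rw [← this]
      rw [e]
      have e2 : ((1:Mat n) - P) * B' * ((1:Mat n) - P)
          = ((1:Mat n) - P) * B' * ((1:Mat n) - P)ᴴ := by rw [hPc2.eq]
      rw [e2]
      exact hB'.mul_mul_conjTranspose_same _
    exact psd_neg_eq_zero hpsd1 hpsd2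
  have hASP : (cfc Real.sqrt A) * ((1:Mat n) - P) = 0 := by
    have e : ((cfc Real.sqrt A) * ((1:Mat n) - P))ᴴ * ((cfc Real.sqrt A) * ((1:Mat n) - P)) = 0 := by
      rw [Matrix.conjTranspose_mul, hPc2.eq, (psd_sqrt hA).1.1.eq]
      calc ((1:Mat n) - P) * (cfc Real.sqrt A) * ((cfc Real.sqrt A) * ((1:Mat n) - P))
          = ((1:Mat n) - P) * ((cfc Real.sqrt A) * (cfc Real.sqrt A)) * ((1:Mat n) - P) := by
            simp only [mul_assoc]
        _ = ((1:Mat n) - P) * A * ((1:Mat n) - P) := by rw [(psd_sqrt hA).2]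
        _ = 0 := hXzero
    exact Matrix.conjTranspose_mul_self_eq_zero.mp e
  have hAP : A * P = A := by
    have e : A * ((1:Mat n) - P) = 0 := by
      calc A * ((1:Mat n) - P) = (cfc Real.sqrt A) * ((cfc Real.sqrt A) * ((1:Mat n) - P)) := by
            rw [← mul_assoc, (psd_sqrt hA).2]
        _ = 0 := by rw [hASP, mul_zero]
    rw [Matrix.mul_sub, mul_one, sub_eq_zero] at e
    exact e.symm
  have hPA : P * A = A := by
    have e : (P * A)ᴴ = A := by
      rw [Matrix.conjTranspose_mul, hA.1.eq, hPh.eq, hAP]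
    calc P * A = ((P * A)ᴴ)ᴴ := (Matrix.conjTranspose_conjTranspose _).symm
      _ = Aᴴ := by rw [e]
      _ = A := hA.1.eq
  -- multiplication identities
  have hZhsq : Zh * sq = P := by
    rw [hZhdef, hsqdef, tri_mul_tri hQ, hPdef]
    refine tri_congr (fun j => ?_)
    by_cases hj : z j = 0
    · simp [qinv, hj]
    · have hpos : 0 < z j := lt_of_le_of_ne (hz j) (Ne.symm hj)
      have hs : Real.sqrt (z j) ≠ 0 := by rw [Real.sqrt_ne_zero']; exact hpos
      simp [qinv, hj, mul_inv_cancel₀ hs]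
  have hsqZh : sq * Zh = P := by
    rw [hZhdef, hsqdef, tri_mul_tri hQ, hPdef]
    refine tri_congr (fun j => ?_)
    by_cases hj : z j = 0
    · simp [qinv, hj]
    · have hpos : 0 < z j := lt_of_le_of_ne (hz j) (Ne.symm hj)
      have hs : Real.sqrt (z j) ≠ 0 := by rw [Real.sqrt_ne_zero']; exact hpos
      simp [qinv, hj, inv_mul_cancel₀ hs]
  have hFhsq : Fh * sq = G := by
    rw [hFhdef, hsqdef, tri_mul_tri hQ, hGdef]
  have hsqFh : sq * Fh = G := by
    rw [hFhdef, hsqdef, tri_mul_tri hQ, hGdef]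
    have e : (fun j => qinv (z j) * Real.sqrt (f₀ (z j)))
        = fun j => Real.sqrt (f₀ (z j)) * qinv (z j) := by
      funext j; ring
    rw [e]
  have hZZ : Zh * Zh = Q * rdiag z * Qᴴ := by
    rw [hZhdef, tri_mul_tri hQ]
    refine tri_congr (fun j => ?_)
    exact Real.mul_self_sqrt (hz j)
  have hFF : Fh * Fh = F := by
    rw [hFhdef, tri_mul_tri hQ, hFdef]
    refine tri_congr (fun j => ?_)
    exact Real.mul_self_sqrt (hf₀z j)
  -- spectral decompositions
  have hXApsd : (Fh * At * Fh).PosSemidef := by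
    have e : Fh * At * Fh = Fh * At * Fhᴴ := by rw [hFh.eq]
    rw [e]
    exact hAtpsd.mul_mul_conjTranspose_same Fh
  obtain ⟨UX, y, hdX⟩ := exists_sdecomp hXApsd.1
  have hFpsd : F.PosSemidef := by rw [hFdef]; exact tri_posSemidef _ hf₀z
  have hRFRpsd : (R * F * R).PosSemidef := by
    have e : R * F * R = R * F * Rᴴ := by rw [hRh.eq]
    rw [e]
    exact hFpsd.mul_mul_conjTranspose_same R
  obtain ⟨UW, y', hdW⟩ := exists_sdecomp hRFRpsd.1
  set M₁ : Mat n := Fh * R with hM₁def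
  have hM1a : M₁ * M₁ᴴ = Fh * At * Fh := by
    rw [hM₁def, Matrix.conjTranspose_mul, hRh.eq, hFh.eq]
    calc Fh * R * (R * Fh) = Fh * (R * R) * Fh := by simp only [mul_assoc]
      _ = Fh * At * Fh := by rw [hRR]
  have hM1b : M₁ᴴ * M₁ = R * F * R := by
    rw [hM₁def, Matrix.conjTranspose_mul, hRh.eq, hFh.eq]
    calc R * Fh * (Fh * R) = R * (Fh * Fh) * R := by simp only [mul_assoc]
      _ = R * F * R := by rw [hFF]
  have hyy : y = y' :=
    mul_star_eigs_eq (M := M₁) (U := UX) (V := UW)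
      (by rw [hM1a]; exact hdX) (by rw [hM1b]; exact hdW)
  rw [← hyy] at hdW
  -- H and A have the same sorted eigenvalues
  have hHpsd : (R * (Q * rdiag z * Qᴴ) * R).PosSemidef := by
    have e : R * (Q * rdiag z * Qᴴ) * R = R * (Q * rdiag z * Qᴴ) * Rᴴ := by rw [hRh.eq]
    rw [e]
    exact (tri_posSemidef _ hz).mul_mul_conjTranspose_same R
  obtain ⟨VH, μ, hdH⟩ := exists_sdecomp hHpsd.1
  obtain ⟨VA, α, hdA, hcfcA⟩ := exists_sdecomp_cfc hA.1
  set M₂ : Mat n := R * Zh with hM₂def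
  have hM2a : M₂ * M₂ᴴ = R * (Q * rdiag z * Qᴴ) * R := by
    rw [hM₂def, Matrix.conjTranspose_mul, hRh.eq, hZhh.eq]
    calc R * Zh * (Zh * R) = R * (Zh * Zh) * R := by simp only [mul_assoc]
      _ = R * (Q * rdiag z * Qᴴ) * R := by rw [hZZ]
  have hM2b : M₂ᴴ * M₂ = A := by
    rw [hM₂def, Matrix.conjTranspose_mul, hRh.eq, hZhh.eq]
    calc Zh * R * (R * Zh) = Zh * (R * R) * Zh := by simp only [mul_assoc]
      _ = Zh * At * Zh := by rw [hRR]
      _ = (Zh * sq) * A * (sq * Zh) := by rw [hAtdef]; simp only [mul_assoc]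
      _ = P * A * P := by rw [hZhsq, hsqZh]
      _ = A := by rw [hPA, hAP]
  have hμα : μ = α :=
    mul_star_eigs_eq (M := M₂) (U := VH) (V := VA)
      (by rw [hM2a]; exact hdH) (by rw [hM2b]; exact hdA)
  -- crux
  have hdW' : SDecomp (R * (Q * rdiag (fun j => f₀ (z j)) * Qᴴ) * R) UW y := by
    rw [← hFdef]; exact hdW
  have hcx : ∀ k, y k ≤ f₀ (α k) := by
    intro k
    have h := crux hQ hz hRh hR1 hc h0 hm hdH hdW' k
    rwa [hμα] at h
  -- conclusion
  refine ⟨UX * VAᴴ, ?_, ?_⟩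
  · have h1 : VAᴴ ∈ Matrix.unitaryGroup (Fin n) ℂ := by
      rw [← Matrix.star_eq_conjTranspose]
      exact Unitary.star_mem hdA.unitary
    exact mul_mem hdX.unitary h1
  · have hcancel : ∀ W : Mat n, VAᴴ * (VA * W) = W := fun W => by
      rw [← mul_assoc, umul' hdA.unitary, one_mul]
    have e7 : (UX * VAᴴ) * cfc f₀ A * (UX * VAᴴ)ᴴ
        = UX * rdiag (fun i => f₀ (α i)) * UXᴴ := by
      rw [hcfcA f₀, Matrix.conjTranspose_mul, Matrix.conjTranspose_conjTranspose]
      calc UX * VAᴴ * (VA * rdiag (fun i => f₀ (α i)) * VAᴴ) * (VA * UXᴴ)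
          = UX * (VAᴴ * (VA * (rdiag (fun i => f₀ (α i)) * (VAᴴ * (VA * UXᴴ))))) := by
            simp only [mul_assoc]
        _ = UX * (rdiag (fun i => f₀ (α i)) * UXᴴ) := by rw [hcancel, hcancel]
        _ = UX * rdiag (fun i => f₀ (α i)) * UXᴴ := by rw [mul_assoc]
    have e8 : G * A * G = UX * rdiag y * UXᴴ := by
      rw [← hdX.eq]
      calc G * A * G = (Fh * sq) * A * (sq * Fh) := by rw [hFhsq, hsqFh]
        _ = Fh * (sq * A * sq) * Fh := by simp only [mul_assoc]
        _ = Fh * At * Fh := by rw [hAtdef]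
    rw [e7, e8, tri_sub]
    exact tri_posSemidef _ (fun i => sub_nonneg.mpr (hcx i))
end
end BU

open BU

/-- If `f : [0,∞) → [0,∞)` is concave and `A, B` are `n×n`
positive semidefinite complex matrices, then there exist unitaries `U, V` with
`f(A+B) ≤ U f(A) U* + V f(B) V*` in the Loewner order. -/
theorem concave_subadditive_unitary_orbits {n : ℕ} (f : ℝ → ℝ)
    (hf_nonneg : ∀ x ∈ Set.Ici (0:ℝ), 0 ≤ f x)
    (hf_concave : ConcaveOn ℝ (Set.Ici 0) f)
    (A B : Matrix (Fin n) (Fin n) ℂ)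
    (hA : A.PosSemidef) (hB : B.PosSemidef) :
    ∃ U V : Matrix (Fin n) (Fin n) ℂ,
      U ∈ Matrix.unitaryGroup (Fin n) ℂ ∧ V ∈ Matrix.unitaryGroup (Fin n) ℂ ∧
      (U * cfc f A * Uᴴ + V * cfc f B * Vᴴ - cfc f (A + B)).PosSemidef := by
  classical
  have hm : MonotoneOn f (Set.Ici 0) := mono_of_concave_nonneg hf_concave hf_nonneg
  set f₀ : ℝ → ℝ := fun x => f x - f 0 with hf₀
  have hc0 : ConcaveOn ℝ (Set.Ici 0) f₀ := by
    refine ⟨convex_Ici 0, ?_⟩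
    intro x hx y hy a b ha hb hab
    have h := hf_concave.2 hx hy ha hb hab
    have e : a * f 0 + b * f 0 = f 0 := by rw [← add_mul, hab, one_mul]
    simp only [hf₀, smul_eq_mul] at h ⊢
    linarith
  have h00 : f₀ 0 = 0 := sub_self _
  have hm0 : MonotoneOn f₀ (Set.Ici 0) := by
    intro x hx y hy hxy
    simp only [hf₀]
    exact sub_le_sub_right (hm hx hy hxy) _
  have hnn0 : ∀ x ∈ Set.Ici (0:ℝ), 0 ≤ f₀ x := by
    intro x hx
    simp only [hf₀]
    exact sub_nonneg.mpr (hm (Set.self_mem_Ici) hx hx)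
  have hZ : (A + B).PosSemidef := hA.add hB
  obtain ⟨Q, z, hdZ, hcfcZ⟩ := exists_sdecomp_cfc hZ.1
  have hQ := hdZ.unitary
  have hz : ∀ j, 0 ≤ z j := hdZ.nonneg hZ
  have hsumA : A + B = Q * rdiag z * Qᴴ := hdZ.eq
  have hsumB : B + A = Q * rdiag z * Qᴴ := by rw [add_comm]; exact hsumA
  obtain ⟨U, hU, hUps⟩ := side_bound hA hB hQ hz hsumA hc0 h00 hm0 hnn0
  obtain ⟨V, hV, hVps⟩ := side_bound hB hA hQ hz hsumB hc0 h00 hm0 hnn0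
  set G : Matrix (Fin n) (Fin n) ℂ :=
    Q * rdiag (fun j => Real.sqrt (f₀ (z j)) * qinv (z j)) * Qᴴ with hGdef
  refine ⟨U, V, hU, hV, ?_⟩
  -- split off the constant
  set Cf : Matrix (Fin n) (Fin n) ℂ := Matrix.diagonal (fun _ : Fin n => ((f 0 : ℝ):ℂ)) with hCf
  have hCfpsd : Cf.PosSemidef := by
    rw [hCf]
    exact Matrix.PosSemidef.diagonal
      (fun _ => Complex.zero_le_real.mpr (hf_nonneg 0 (Set.self_mem_Ici)))
  have hsA : cfc f A = cfc f₀ A + Cf := cfc_split hA.1 f (f 0)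
  have hsB : cfc f B = cfc f₀ B + Cf := cfc_split hB.1 f (f 0)
  have hsZ : cfc f (A + B) = cfc f₀ (A + B) + Cf := cfc_split hZ.1 f (f 0)
  -- the G-conjugates add up to cfc f₀ (A+B)
  have hGAB : G * (A + B) * G = cfc f₀ (A + B) := by
    rw [hcfcZ f₀]
    conv_lhs => rw [hsumA]
    rw [hGdef, tri_mul_tri hQ, tri_mul_tri hQ]
    refine tri_congr (fun j => ?_)
    by_cases hj : z j = 0
    · simp [qinv, hj, h00]
    · have hpos : 0 < z j := lt_of_le_of_ne (hz j) (Ne.symm hj)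
      have hs : Real.sqrt (z j) ≠ 0 := by rw [Real.sqrt_ne_zero']; exact hpos
      have h1 : Real.sqrt (f₀ (z j)) * Real.sqrt (f₀ (z j)) = f₀ (z j) :=
        Real.mul_self_sqrt (hnn0 _ (Set.mem_Ici.mpr (hz j)))
      have h2 : Real.sqrt (z j) * Real.sqrt (z j) = z j := Real.mul_self_sqrt (hz j)
      simp only [qinv, if_neg hj]
      field_simp
      nlinarith [h1, h2]
  have hGsum : cfc f₀ (A + B) = G * A * G + G * B * G := by
    rw [← hGAB, Matrix.mul_add, Matrix.add_mul]
  -- conjugating constants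
  have hUc : U * Cf * Uᴴ = Cf := by rw [hCf]; exact conj_const hU _
  have hVc : V * Cf * Vᴴ = Cf := by rw [hCf]; exact conj_const hV _
  have key : U * cfc f A * Uᴴ + V * cfc f B * Vᴴ - cfc f (A + B)
      = (U * cfc f₀ A * Uᴴ - G * A * G) + ((V * cfc f₀ B * Vᴴ - G * B * G) + Cf) := by
    rw [hsA, hsB, hsZ, Matrix.mul_add, Matrix.add_mul, Matrix.mul_add, Matrix.add_mul,
      hUc, hVc, hGsum]
    abel
  rw [key]
  exact hUps.add (hVps.add hCfpsd)
end

section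
/- Let g : [0,∞) → [0,∞) be a convex function with g(0) = 0 and let A, B be n×n positive semidefinite complex matrices. Then det(g(A+B))^{1/n} ≥ det(g(A))^{1/n} + det(g(B))^{1/n}. -/
open scoped Matrix ComplexOrder
open Matrix

namespace DetSuper

variable {n : ℕ}





/-- real quadratic form -/
noncomputable def quad (M : Matrix (Fin n) (Fin n) ℂ) (x : EuclideanSpace ℂ (Fin n)) : ℝ :=
  (inner (𝕜 := ℂ) x (Matrix.toEuclideanLin M x)).re

lemma inner_toEuclideanLin (M : Matrix (Fin n) (Fin n) ℂ) (x : EuclideanSpace ℂ (Fin n)) :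
    (inner (𝕜 := ℂ) x (Matrix.toEuclideanLin M x)) =
      star (WithLp.equiv 2 (Fin n → ℂ) x) ⬝ᵥ (M *ᵥ (WithLp.equiv 2 (Fin n → ℂ) x)) := by
  simp [PiLp.inner_apply, toEuclideanLin_apply, dotProduct, RCLike.inner_apply, mulVec, mul_comm]

lemma quad_nonneg {M : Matrix (Fin n) (Fin n) ℂ} (hM : M.PosSemidef)
    (x : EuclideanSpace ℂ (Fin n)) : 0 ≤ quad M x := by
  have h := hM.dotProduct_mulVec_nonneg (WithLp.equiv 2 (Fin n → ℂ) x)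
  rw [quad, inner_toEuclideanLin]
  rw [Complex.le_def] at h
  simpa using h.1

lemma quad_mono {A C : Matrix (Fin n) (Fin n) ℂ} (h : (C - A).PosSemidef)
    (x : EuclideanSpace ℂ (Fin n)) : quad A x ≤ quad C x := by
  have := quad_nonneg h x
  rw [quad, inner_toEuclideanLin] at this ⊢
  rw [quad, inner_toEuclideanLin]
  simp only [Matrix.sub_mulVec, dotProduct_sub, Complex.sub_re] at this
  linarith




lemma toEuclideanLin_eigenvectorBasis {M : Matrix (Fin n) (Fin n) ℂ} (hM : M.IsHermitian)
    (i : Fin n) :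
    Matrix.toEuclideanLin M (hM.eigenvectorBasis i) =
      (hM.eigenvalues i : ℂ) • hM.eigenvectorBasis i := by
  apply (WithLp.equiv 2 (Fin n → ℂ)).injective
  simp only [WithLp.equiv_apply, toEuclideanLin_apply, WithLp.ofLp_toLp, WithLp.ofLp_smul]
  have := hM.mulVec_eigenvectorBasis i
  exact this

lemma quad_eq_sum {M : Matrix (Fin n) (Fin n) ℂ} (hM : M.IsHermitian)
    (x : EuclideanSpace ℂ (Fin n)) :
    (inner (𝕜 := ℂ) x (Matrix.toEuclideanLin M x)).re =
      ∑ i, hM.eigenvalues i * ‖hM.eigenvectorBasis.repr x i‖ ^ 2 := by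
  set b := hM.eigenvectorBasis
  have h1 : Matrix.toEuclideanLin M x = ∑ i, (b.repr x i * (hM.eigenvalues i : ℂ)) • b i := by
    conv_lhs => rw [← b.sum_repr x, map_sum]
    congr 1
    ext i
    rw [LinearMap.map_smul, toEuclideanLin_eigenvectorBasis hM i, smul_smul, mul_comm]
  rw [h1, inner_sum]
  rw [Complex.re_sum]
  congr 1
  ext i
  rw [inner_smul_right]
  have h2 : (inner (𝕜 := ℂ) x (b i)) = starRingEnd ℂ (b.repr x i) := by
    rw [← inner_conj_symm, b.repr_apply_apply]
  rw [h2]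
  have : b.repr x i * (hM.eigenvalues i : ℂ) * (starRingEnd ℂ) (b.repr x i)
      = (hM.eigenvalues i : ℂ) * (b.repr x i * (starRingEnd ℂ) (b.repr x i)) := by ring
  rw [this, Complex.mul_conj]
  rw [← Complex.ofReal_mul, Complex.ofReal_re, Complex.normSq_eq_norm_sq]

lemma norm_sq_eq_sum_repr (b : OrthonormalBasis (Fin n) ℂ (EuclideanSpace ℂ (Fin n)))
    (x : EuclideanSpace ℂ (Fin n)) : ‖x‖ ^ 2 = ∑ i, ‖b.repr x i‖ ^ 2 := by
  rw [← b.repr.norm_map x]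
  rw [EuclideanSpace.norm_eq]
  rw [Real.sq_sqrt (by positivity)]




lemma repr_eq_zero_of_mem_span (b : OrthonormalBasis (Fin n) ℂ (EuclideanSpace ℂ (Fin n)))
    (T : Finset (Fin n)) {x : EuclideanSpace ℂ (Fin n)}
    (hx : x ∈ Submodule.span ℂ (b '' (T : Set (Fin n)))) {i : Fin n} (hi : i ∉ T) :
    b.repr x i = 0 := by
  have hle : Submodule.span ℂ (b '' (T : Set (Fin n))) ≤ LinearMap.ker ((innerSL ℂ (b i) : EuclideanSpace ℂ (Fin n) →ₗ[ℂ] ℂ)) := by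
    rw [Submodule.span_le]
    rintro _ ⟨j, hj, rfl⟩
    simp only [SetLike.mem_coe, LinearMap.mem_ker]
    have hij : i ≠ j := fun h => hi (h ▸ hj)
    simpa using b.orthonormal.2 hij
  have := hle hx
  rw [LinearMap.mem_ker] at this
  rw [b.repr_apply_apply]
  simpa using this

lemma finrank_span_image (b : OrthonormalBasis (Fin n) ℂ (EuclideanSpace ℂ (Fin n)))
    (T : Finset (Fin n)) :
    Module.finrank ℂ (Submodule.span ℂ (b '' (T : Set (Fin n)))) = T.card := by
  classical
  have hli : LinearIndependent ℂ (fun i : (T : Set (Fin n)) => b i) :=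
    b.orthonormal.linearIndependent.comp _ Subtype.val_injective
  have hrange : Set.range (fun i : (T : Set (Fin n)) => b i) = b '' (T : Set (Fin n)) := by
    rw [← Set.image_eq_range]
  rw [← hrange, finrank_span_eq_card hli]
  simp

lemma exists_ne_zero_mem_inf {S T : Submodule ℂ (EuclideanSpace ℂ (Fin n))}
    (h : n < Module.finrank ℂ S + Module.finrank ℂ T) :
    ∃ x : EuclideanSpace ℂ (Fin n), x ≠ 0 ∧ x ∈ S ∧ x ∈ T := by
  have hdim : Module.finrank ℂ (EuclideanSpace ℂ (Fin n)) = n := by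
    simp [finrank_euclideanSpace]
  have h1 := Submodule.finrank_sup_add_finrank_inf_eq S T
  have h2 : Module.finrank ℂ ↥(S ⊔ T) ≤ n := le_trans (Submodule.finrank_le _) (le_of_eq hdim)
  have h3 : 0 < Module.finrank ℂ ↥(S ⊓ T) := by omega
  obtain ⟨⟨x, hxmem⟩, hx0⟩ := Module.finrank_pos_iff_exists_ne_zero.mp h3
  exact ⟨x, by simpa [Submodule.mk_eq_zero] using hx0, (Submodule.mem_inf.mp hxmem).1,
    (Submodule.mem_inf.mp hxmem).2⟩




lemma quad_le_of_mem_span {M : Matrix (Fin n) (Fin n) ℂ} (hM : M.IsHermitian)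
    (T : Finset (Fin n)) (r : ℝ) (hr : ∀ i ∈ T, hM.eigenvalues i ≤ r)
    {x : EuclideanSpace ℂ (Fin n)}
    (hx : x ∈ Submodule.span ℂ (hM.eigenvectorBasis '' (T : Set (Fin n)))) :
    (inner (𝕜 := ℂ) x (Matrix.toEuclideanLin M x)).re ≤ r * ‖x‖ ^ 2 := by
  classical
  rw [quad_eq_sum hM x, norm_sq_eq_sum_repr hM.eigenvectorBasis x, Finset.mul_sum]
  rw [← Finset.sum_subset (Finset.subset_univ T)
    (fun i _ hi => by rw [repr_eq_zero_of_mem_span _ T hx hi]; simp)]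
  rw [← Finset.sum_subset (Finset.subset_univ T)
    (fun i _ hi => by rw [repr_eq_zero_of_mem_span _ T hx hi]; simp)]
  exact Finset.sum_le_sum fun i hi =>
    mul_le_mul_of_nonneg_right (hr i hi) (by positivity)

lemma le_quad_of_mem_span {M : Matrix (Fin n) (Fin n) ℂ} (hM : M.IsHermitian)
    (T : Finset (Fin n)) (r : ℝ) (hr : ∀ i ∈ T, r ≤ hM.eigenvalues i)
    {x : EuclideanSpace ℂ (Fin n)}
    (hx : x ∈ Submodule.span ℂ (hM.eigenvectorBasis '' (T : Set (Fin n)))) :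
    r * ‖x‖ ^ 2 ≤ (inner (𝕜 := ℂ) x (Matrix.toEuclideanLin M x)).re := by
  classical
  rw [quad_eq_sum hM x, norm_sq_eq_sum_repr hM.eigenvectorBasis x, Finset.mul_sum]
  rw [← Finset.sum_subset (Finset.subset_univ T)
    (fun i _ hi => by rw [repr_eq_zero_of_mem_span _ T hx hi]; simp)]
  rw [← Finset.sum_subset (Finset.subset_univ T)
    (fun i _ hi => by rw [repr_eq_zero_of_mem_span _ T hx hi]; simp)]
  exact Finset.sum_le_sum fun i hi =>
    mul_le_mul_of_nonneg_right (hr i hi) (by positivity)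


/-- sorted (increasing) eigenvalues -/
noncomputable def sev {M : Matrix (Fin n) (Fin n) ℂ} (hM : M.IsHermitian) : Fin n → ℝ :=
  hM.eigenvalues ∘ Tuple.sort hM.eigenvalues

lemma prod_sev {M : Matrix (Fin n) (Fin n) ℂ} (hM : M.IsHermitian) (f : ℝ → ℝ) :
    ∏ i, f (sev hM i) = ∏ i, f (hM.eigenvalues i) :=
  Equiv.prod_comp (Tuple.sort hM.eigenvalues) (fun i => f (hM.eigenvalues i))

lemma weyl {A C : Matrix (Fin n) (Fin n) ℂ} (hA : A.IsHermitian) (hC : C.IsHermitian)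
    (h : (C - A).PosSemidef) (k : Fin n) : sev hA k ≤ sev hC k := by
  classical
  set σ := Tuple.sort hA.eigenvalues with hσ
  set τ := Tuple.sort hC.eigenvalues with hτ
  set TA := Finset.image σ (Finset.Ici k) with hTA
  set TC := Finset.image τ (Finset.Iic k) with hTC
  have hcardA : TA.card = n - k.val := by
    rw [hTA, Finset.card_image_of_injective _ σ.injective, Fin.card_Ici]
  have hcardC : TC.card = k.val + 1 := by
    rw [hTC, Finset.card_image_of_injective _ τ.injective, Fin.card_Iic]
  obtain ⟨x, hx0, hxA, hxC⟩ := exists_ne_zero_mem_inf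
    (S := Submodule.span ℂ (hA.eigenvectorBasis '' (TA : Set (Fin n))))
    (T := Submodule.span ℂ (hC.eigenvectorBasis '' (TC : Set (Fin n))))
    (by rw [finrank_span_image, finrank_span_image, hcardA, hcardC]; have := k.2; omega)
  have h1 : sev hA k * ‖x‖ ^ 2 ≤ (inner (𝕜 := ℂ) x (Matrix.toEuclideanLin A x)).re := by
    refine le_quad_of_mem_span hA TA _ ?_ hxA
    rintro i hi
    rw [hTA] at hi
    obtain ⟨j, hj, rfl⟩ := Finset.mem_image.mp hi
    exact Tuple.monotone_sort hA.eigenvalues (Finset.mem_Ici.mp hj)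
  have h2 : (inner (𝕜 := ℂ) x (Matrix.toEuclideanLin C x)).re ≤ sev hC k * ‖x‖ ^ 2 := by
    refine quad_le_of_mem_span hC TC _ ?_ hxC
    rintro i hi
    rw [hTC] at hi
    obtain ⟨j, hj, rfl⟩ := Finset.mem_image.mp hi
    exact Tuple.monotone_sort hC.eigenvalues (Finset.mem_Iic.mp hj)
  have h3 : quad A x ≤ quad C x := quad_mono h x
  have hx2 : (0:ℝ) < ‖x‖ ^ 2 := by
    have : 0 < ‖x‖ := norm_pos_iff.mpr hx0
    positivity
  have : sev hA k * ‖x‖ ^ 2 ≤ sev hC k * ‖x‖ ^ 2 := le_trans h1 (le_trans h3 h2)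
  exact le_of_mul_le_mul_right this hx2




lemma det_conj {U D : Matrix (Fin n) (Fin n) ℂ} (hU : U * star U = 1) :
    (U * D * star U).det = D.det := by
  rw [det_mul, det_mul, mul_comm U.det, mul_assoc, ← det_mul, hU, det_one, mul_one]

lemma det_cfc (g : ℝ → ℝ) {M : Matrix (Fin n) (Fin n) ℂ} (hM : M.IsHermitian) :
    (cfc g M).det = ((∏ i, g (hM.eigenvalues i) : ℝ) : ℂ) := by
  rw [hM.cfc_eq, Matrix.IsHermitian.cfc, Unitary.conjStarAlgAut_apply, det_conj (Unitary.coe_mul_star_self _), det_diagonal]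
  push_cast
  rfl

lemma det_one_add {C : Matrix (Fin n) (Fin n) ℂ} (hC : C.IsHermitian) :
    (1 + C).det = ((∏ i, (1 + hC.eigenvalues i) : ℝ) : ℂ) := by
  have h0 : (hC.eigenvectorUnitary : Matrix (Fin n) (Fin n) ℂ)
        * star (hC.eigenvectorUnitary : Matrix (Fin n) (Fin n) ℂ) = 1 :=
    (Matrix.mem_unitaryGroup_iff).mp hC.eigenvectorUnitary.2
  have h1 : (1 : Matrix (Fin n) (Fin n) ℂ) + C =
      (hC.eigenvectorUnitary : Matrix (Fin n) (Fin n) ℂ)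
        * (diagonal (fun i => ((1 + hC.eigenvalues i : ℝ) : ℂ)))
        * star (hC.eigenvectorUnitary : Matrix (Fin n) (Fin n) ℂ) := by
    have hd : (diagonal (fun i => ((1 + hC.eigenvalues i : ℝ) : ℂ)))
        = 1 + diagonal (RCLike.ofReal ∘ hC.eigenvalues) := by
      rw [← diagonal_one, diagonal_add]
      refine congrArg diagonal (funext fun i => ?_)
      simp [RCLike.ofReal_alg]
    rw [hd, mul_add, add_mul, mul_one, h0]
    exact congrArg (1 + ·) hC.spectral_theorem
  rw [h1, det_conj (Unitary.coe_mul_star_self _), det_diagonal]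
  push_cast
  rfl




lemma one_add_prod_rpow (hn : 0 < n) (γ : Fin n → ℝ) (hγ : ∀ i, 0 ≤ γ i) :
    1 + (∏ i, γ i) ^ (1/(n:ℝ)) ≤ (∏ i, (1 + γ i)) ^ (1/(n:ℝ)) := by
  have hn' : (0:ℝ) < (n:ℝ) := by exact_mod_cast hn
  have hw0 : (0:ℝ) ≤ 1/(n:ℝ) := by positivity
  have hpos : ∀ i, (0:ℝ) < 1 + γ i := fun i => by linarith [hγ i]
  set w := 1/(n:ℝ) with hwdef
  set P := ∏ i, (1 + γ i) with hP
  have hPpos : 0 < P := Finset.prod_pos (fun i _ => hpos i)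
  set Q := ∏ i, γ i with hQ
  have hQ0 : 0 ≤ Q := Finset.prod_nonneg (fun i _ => hγ i)
  have hw : ∑ _i : Fin n, w = 1 := by
    rw [Finset.sum_const, Finset.card_univ, Fintype.card_fin, nsmul_eq_mul, hwdef]
    field_simp
  have h1 : ∏ i, ((1 + γ i)⁻¹) ^ w ≤ ∑ i, w * (1 + γ i)⁻¹ :=
    Real.geom_mean_le_arith_mean_weighted Finset.univ _ _ (fun i _ => hw0) hw
      (fun i _ => inv_nonneg.mpr (hpos i).le)
  have h2 : ∏ i, (γ i * (1 + γ i)⁻¹) ^ w ≤ ∑ i, w * (γ i * (1 + γ i)⁻¹) :=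
    Real.geom_mean_le_arith_mean_weighted Finset.univ _ _ (fun i _ => hw0) hw
      (fun i _ => mul_nonneg (hγ i) (inv_nonneg.mpr (hpos i).le))
  have hterm : ∀ i, w * (1 + γ i)⁻¹ + w * (γ i * (1 + γ i)⁻¹) = w := fun i => by
    have h := (hpos i).ne'
    field_simp
  have hsum : (∑ i, w * (1 + γ i)⁻¹) + ∑ i, w * (γ i * (1 + γ i)⁻¹) = 1 := by
    rw [← Finset.sum_add_distrib]
    simp_rw [hterm]
    exact hw
  have hprod1 : ∏ i, ((1 + γ i)⁻¹) ^ w = (P ^ w)⁻¹ := by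
    rw [Real.finset_prod_rpow _ _ (fun i _ => inv_nonneg.mpr (hpos i).le) w, Finset.prod_inv_distrib,
      ← hP, Real.inv_rpow hPpos.le]
  have hprod2 : ∏ i, (γ i * (1 + γ i)⁻¹) ^ w = Q ^ w * (P ^ w)⁻¹ := by
    rw [Real.finset_prod_rpow _ _ (fun i _ => mul_nonneg (hγ i) (inv_nonneg.mpr (hpos i).le)) w, Finset.prod_mul_distrib,
      Finset.prod_inv_distrib, ← hP, ← hQ,
      Real.mul_rpow hQ0 (by positivity), Real.inv_rpow hPpos.le]
  have hPw : (0:ℝ) < P ^ w := Real.rpow_pos_of_pos hPpos w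
  have hcomb : (P ^ w)⁻¹ + Q ^ w * (P ^ w)⁻¹ ≤ 1 := by
    rw [← hsum]
    exact add_le_add (hprod1 ▸ h1) (hprod2 ▸ h2)
  have hinv : P ^ w * (P ^ w)⁻¹ = 1 := mul_inv_cancel₀ hPw.ne'
  nlinarith [mul_le_mul_of_nonneg_left hcomb hPw.le]


lemma det_re_eq {M : Matrix (Fin n) (Fin n) ℂ} (hM : M.IsHermitian) :
    M.det.re = ∏ i, hM.eigenvalues i := by
  rw [hM.det_eq_prod_eigenvalues]
  norm_cast

lemma det_ofReal {M : Matrix (Fin n) (Fin n) ℂ} (hM : M.IsHermitian) :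
    M.det = ((M.det.re : ℝ) : ℂ) := by
  rw [hM.det_eq_prod_eigenvalues]
  norm_cast

open scoped MatrixOrder in
lemma minkowski (hn : 0 < n) {A B : Matrix (Fin n) (Fin n) ℂ} (hA : A.PosSemidef)
    (hB : B.PosSemidef) (hdA : 0 < A.det.re) (hdB : 0 < B.det.re) :
    A.det.re ^ (1/(n:ℝ)) + B.det.re ^ (1/(n:ℝ)) ≤ (A + B).det.re ^ (1/(n:ℝ)) := by
  classical
  set w := 1/(n:ℝ) with hwdef
  set S := CFC.sqrt A with hSdef
  have hS : S.PosSemidef := nonneg_iff_posSemidef.mp (CFC.sqrt_nonneg A)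
  have hSS : S * S = A := CFC.sqrt_mul_sqrt_self A (nonneg_iff_posSemidef.mpr hA)
  have hdetS : S.det * S.det = A.det := by rw [← det_mul, hSS]
  have hdetA_ne : A.det ≠ 0 := by
    intro h; rw [h] at hdA; simp at hdA
  have hUnit : IsUnit S.det := by
    rw [isUnit_iff_ne_zero]
    intro h
    exact hdetA_ne (by rw [← hdetS, h, zero_mul])
  set C := S⁻¹ * B * S⁻¹ with hCdef
  have hSH : (S⁻¹).IsHermitian := hS.1.inv
  have hC : C.PosSemidef := by
    have := hB.mul_mul_conjTranspose_same S⁻¹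
    rwa [hSH.eq] at this
  have hABS : A + B = S * (1 + C) * S := by
    rw [mul_add, mul_one, add_mul, hSS]
    congr 1
    rw [hCdef]
    symm
    calc S * (S⁻¹ * B * S⁻¹) * S = (S * S⁻¹) * B * (S⁻¹ * S) := by
          simp only [Matrix.mul_assoc]
      _ = B := by rw [Matrix.mul_nonsing_inv _ hUnit, Matrix.nonsing_inv_mul _ hUnit,
          Matrix.one_mul, Matrix.mul_one]
  set a := A.det.re with hadef
  set b := B.det.re with hbdef
  have haC : A.det = ((a:ℝ):ℂ) := det_ofReal hA.1
  have hbC : B.det = ((b:ℝ):ℂ) := det_ofReal hB.1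
  set s := S.det.re with hsdef
  have hsC : S.det = ((s:ℝ):ℂ) := det_ofReal hS.1
  have hss : (s:ℂ) * (s:ℂ) = (a:ℂ) := by rw [← hsC, ← haC]; exact hdetS
  have ha0 : (a:ℂ) ≠ 0 := by
    simp only [ne_eq, Complex.ofReal_eq_zero]
    exact hdA.ne'
  have hs0 : (s:ℂ) ≠ 0 := fun h => ha0 (by rw [← hss, h, mul_zero])
  set γ := hC.1.eigenvalues with hγdef
  have hγ0 : ∀ i, 0 ≤ γ i := hC.eigenvalues_nonneg
  have hdetC : C.det = ((b / a : ℝ) : ℂ) := by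
    have h1 : C.det = S⁻¹.det * B.det * S⁻¹.det := by rw [hCdef, det_mul, det_mul]
    have h2 : S⁻¹.det = S.det⁻¹ := by rw [det_nonsing_inv, Ring.inverse_eq_inv']
    rw [h1, h2, hsC, hbC]
    push_cast
    rw [← hss]
    field_simp
  have hγprod : ∏ i, γ i = b / a := by
    rw [← det_re_eq hC.1, hdetC, Complex.ofReal_re]
  have hsum_det : (A + B).det.re = a * ∏ i, (1 + γ i) := by
    have hc : (A+B).det = ((a * ∏ i, (1 + γ i) : ℝ):ℂ) := by
      calc (A+B).det = S.det * (1 + C).det * S.det := by rw [hABS, det_mul, det_mul]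
        _ = (S.det * S.det) * (1 + C).det := by ring
        _ = (a:ℂ) * ((∏ i, (1 + γ i) : ℝ):ℂ) := by rw [hdetS, haC, det_one_add hC.1]
        _ = ((a * ∏ i, (1 + γ i) : ℝ):ℂ) := by push_cast; ring
    rw [hc, Complex.ofReal_re]
  rw [hsum_det]
  have hprodpos : (0:ℝ) < ∏ i, (1 + γ i) :=
    Finset.prod_pos fun i _ => by linarith [hγ0 i]
  rw [Real.mul_rpow hdA.le hprodpos.le]
  have h4 := one_add_prod_rpow hn γ hγ0
  rw [hγprod, Real.div_rpow hdB.le (le_of_lt hdA)] at h4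
  have haw : (0:ℝ) < a ^ w := Real.rpow_pos_of_pos hdA w
  have hid : a ^ w * (b ^ w / a ^ w) = b ^ w := by field_simp
  nlinarith [mul_le_mul_of_nonneg_left h4 haw.le]


end DetSuper

open DetSuper in
/-- If `g : [0,∞) → [0,∞)` is convex with `g(0) = 0`, then for all `n×n`
positive semidefinite complex matrices `A, B` (`n ≥ 1`),
`det(g(A+B))^{1/n} ≥ det(g(A))^{1/n} + det(g(B))^{1/n}`. -/
theorem det_root_convex_superadditive {n : ℕ} (hn : 0 < n) (g : ℝ → ℝ)
    (hg_nonneg : ∀ x ∈ Set.Ici (0:ℝ), 0 ≤ g x)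
    (hg_convex : ConvexOn ℝ (Set.Ici 0) g)
    (hg0 : g 0 = 0)
    (A B : Matrix (Fin n) (Fin n) ℂ)
    (hA : A.PosSemidef) (hB : B.PosSemidef) :
    (cfc g A).det.re ^ (1 / (n:ℝ)) + (cfc g B).det.re ^ (1 / (n:ℝ)) ≤
      (cfc g (A + B)).det.re ^ (1 / (n:ℝ)) := by
  classical
  have hg_ratio : ∀ x y : ℝ, 0 ≤ x → x ≤ y → y * g x ≤ x * g y := by
    intro x y hx hxy
    rcases eq_or_lt_of_le (hx.trans hxy) with hy | hy
    · have hx0 : x = 0 := le_antisymm (hxy.trans hy.symm.le) hx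
      rw [hx0, ← hy, hg0]
    · set t := x / y with ht
      have ht0 : 0 ≤ t := div_nonneg hx hy.le
      have ht1 : t ≤ 1 := (div_le_one hy).mpr hxy
      have hconv := hg_convex.2 (Set.self_mem_Ici) (Set.mem_Ici.mpr hy.le)
        (by linarith : (0:ℝ) ≤ 1 - t) ht0 (by ring)
      have hxt : (1 - t) • (0:ℝ) + t • y = x := by
        simp only [ht, smul_eq_mul, mul_zero, zero_add]
        field_simp
      rw [hxt, hg0] at hconv
      have : g x ≤ t * g y := by
        simpa using hconv
      calc y * g x ≤ y * (t * g y) := by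
            exact mul_le_mul_of_nonneg_left this hy.le
        _ = x * g y := by
            simp only [ht]
            field_simp
  have hg_mono : ∀ x y : ℝ, 0 ≤ x → x ≤ y → g x ≤ g y := by
    intro x y hx hxy
    rcases eq_or_lt_of_le (hx.trans hxy) with hy | hy
    · have hx0 : x = 0 := le_antisymm (hxy.trans hy.symm.le) hx
      rw [hx0, ← hy]
    · have h1 := hg_ratio x y hx hxy
      have h2 : x * g y ≤ y * g y :=
        mul_le_mul_of_nonneg_right hxy (hg_nonneg y (hx.trans hxy))
      have := h1.trans h2
      exact le_of_mul_le_mul_left this hy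
  have hAB : (A + B).PosSemidef := hA.add hB
  set w := 1 / (n:ℝ) with hwdef
  have hw0 : (0:ℝ) ≤ w := by positivity
  have hwne : w ≠ 0 := by
    rw [hwdef]
    have : (0:ℝ) < (n:ℝ) := by exact_mod_cast hn
    positivity
  set α := sev hA.1 with hαdef
  set β := sev hB.1 with hβdef
  set lam := sev hAB.1 with hlamdef
  have hα0 : ∀ k, 0 ≤ α k := fun k => hA.eigenvalues_nonneg _
  have hβ0 : ∀ k, 0 ≤ β k := fun k => hB.eigenvalues_nonneg _
  have hlam0 : ∀ k, 0 ≤ lam k := fun k => hAB.eigenvalues_nonneg _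
  have hwA : ∀ k, α k ≤ lam k := by
    intro k
    refine weyl hA.1 hAB.1 ?_ k
    rw [add_sub_cancel_left]
    exact hB
  have hwB : ∀ k, β k ≤ lam k := by
    intro k
    refine weyl hB.1 hAB.1 ?_ k
    rw [add_sub_cancel_right]
    exact hA
  have hdetgA : (cfc g A).det.re = ∏ k, g (α k) := by
    rw [det_cfc g hA.1, Complex.ofReal_re, hαdef, prod_sev hA.1 g]
  have hdetgB : (cfc g B).det.re = ∏ k, g (β k) := by
    rw [det_cfc g hB.1, Complex.ofReal_re, hβdef, prod_sev hB.1 g]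
  have hdetgAB : (cfc g (A + B)).det.re = ∏ k, g (lam k) := by
    rw [det_cfc g hAB.1, Complex.ofReal_re, hlamdef, prod_sev hAB.1 g]
  rw [hdetgA, hdetgB, hdetgAB]
  set p := ∏ k, g (α k) with hpdef
  set q := ∏ k, g (β k) with hqdef
  set P := ∏ k, g (lam k) with hPdef
  have hgα0 : ∀ k, 0 ≤ g (α k) := fun k => hg_nonneg _ (hα0 k)
  have hgβ0 : ∀ k, 0 ≤ g (β k) := fun k => hg_nonneg _ (hβ0 k)
  have hglam0 : ∀ k, 0 ≤ g (lam k) := fun k => hg_nonneg _ (hlam0 k)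
  have hp0 : 0 ≤ p := Finset.prod_nonneg fun k _ => hgα0 k
  have hq0 : 0 ≤ q := Finset.prod_nonneg fun k _ => hgβ0 k
  have hP0 : 0 ≤ P := Finset.prod_nonneg fun k _ => hglam0 k
  have hpP : p ≤ P := Finset.prod_le_prod (fun k _ => hgα0 k)
    (fun k _ => hg_mono _ _ (hα0 k) (hwA k))
  have hqP : q ≤ P := Finset.prod_le_prod (fun k _ => hgβ0 k)
    (fun k _ => hg_mono _ _ (hβ0 k) (hwB k))
  by_cases hp : p = 0
  · rw [hp, Real.zero_rpow hwne, zero_add]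
    exact Real.rpow_le_rpow hq0 hqP hw0
  by_cases hq : q = 0
  · rw [hq, Real.zero_rpow hwne, add_zero]
    exact Real.rpow_le_rpow hp0 hpP hw0
  · have hppos : 0 < p := lt_of_le_of_ne hp0 (Ne.symm hp)
    have hqpos : 0 < q := lt_of_le_of_ne hq0 (Ne.symm hq)
    have hgαpos : ∀ k, 0 < g (α k) := by
      intro k
      rcases (hgα0 k).lt_or_eq with h | h
      · exact h
      · exact absurd (Finset.prod_eq_zero (Finset.mem_univ k) h.symm) hp
    have hgβpos : ∀ k, 0 < g (β k) := by
      intro k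
      rcases (hgβ0 k).lt_or_eq with h | h
      · exact h
      · exact absurd (Finset.prod_eq_zero (Finset.mem_univ k) h.symm) hq
    have hαpos : ∀ k, 0 < α k := by
      intro k
      rcases (hα0 k).lt_or_eq with h | h
      · exact h
      · exact absurd (by rw [← h, hg0] : g (α k) = 0) (hgαpos k).ne'
    have hβpos : ∀ k, 0 < β k := by
      intro k
      rcases (hβ0 k).lt_or_eq with h | h
      · exact h
      · exact absurd (by rw [← h, hg0] : g (β k) = 0) (hgβpos k).ne'
    have hlampos : ∀ k, 0 < lam k := fun k => lt_of_lt_of_le (hαpos k) (hwA k)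
    have hdA : A.det.re = ∏ k, α k := by
      rw [det_re_eq hA.1, hαdef, prod_sev hA.1 (fun x => x)]
    have hdB : B.det.re = ∏ k, β k := by
      rw [det_re_eq hB.1, hβdef, prod_sev hB.1 (fun x => x)]
    have hdS : (A + B).det.re = ∏ k, lam k := by
      rw [det_re_eq hAB.1, hlamdef, prod_sev hAB.1 (fun x => x)]
    have hdApos : 0 < A.det.re := hdA ▸ Finset.prod_pos fun k _ => hαpos k
    have hdBpos : 0 < B.det.re := hdB ▸ Finset.prod_pos fun k _ => hβpos k
    have hdSpos : 0 < (A + B).det.re := hdS ▸ Finset.prod_pos fun k _ => hlampos k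
    have hkeyA : (A + B).det.re * p ≤ A.det.re * P := by
      rw [hdA, hdS, hpdef, hPdef, ← Finset.prod_mul_distrib, ← Finset.prod_mul_distrib]
      exact Finset.prod_le_prod
        (fun k _ => mul_nonneg (hlam0 k) (hgα0 k))
        (fun k _ => hg_ratio (α k) (lam k) (hα0 k) (hwA k))
    have hkeyB : (A + B).det.re * q ≤ B.det.re * P := by
      rw [hdB, hdS, hqdef, hPdef, ← Finset.prod_mul_distrib, ← Finset.prod_mul_distrib]
      exact Finset.prod_le_prod
        (fun k _ => mul_nonneg (hlam0 k) (hgβ0 k))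
        (fun k _ => hg_ratio (β k) (lam k) (hβ0 k) (hwB k))
    have hrA : (A + B).det.re ^ w * p ^ w ≤ A.det.re ^ w * P ^ w := by
      rw [← Real.mul_rpow hdSpos.le hp0, ← Real.mul_rpow hdApos.le hP0]
      exact Real.rpow_le_rpow (mul_nonneg hdSpos.le hp0) hkeyA hw0
    have hrB : (A + B).det.re ^ w * q ^ w ≤ B.det.re ^ w * P ^ w := by
      rw [← Real.mul_rpow hdSpos.le hq0, ← Real.mul_rpow hdBpos.le hP0]
      exact Real.rpow_le_rpow (mul_nonneg hdSpos.le hq0) hkeyB hw0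
    have hmink : A.det.re ^ w + B.det.re ^ w ≤ (A + B).det.re ^ w :=
      minkowski hn hA hB hdApos hdBpos
    have hPw0 : (0:ℝ) ≤ P ^ w := Real.rpow_nonneg hP0 w
    have hSw : (0:ℝ) < (A + B).det.re ^ w := Real.rpow_pos_of_pos hdSpos w
    have hfinal : (A + B).det.re ^ w * (p ^ w + q ^ w) ≤ (A + B).det.re ^ w * P ^ w := by
      calc (A + B).det.re ^ w * (p ^ w + q ^ w)
          = (A + B).det.re ^ w * p ^ w + (A + B).det.re ^ w * q ^ w := by ring
        _ ≤ A.det.re ^ w * P ^ w + B.det.re ^ w * P ^ w := add_le_add hrA hrB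
        _ = (A.det.re ^ w + B.det.re ^ w) * P ^ w := by ring
        _ ≤ (A + B).det.re ^ w * P ^ w := mul_le_mul_of_nonneg_right hmink hPw0
    exact le_of_mul_le_mul_left hfinal hSw
end

section
/- Let f : [0,∞) → [0,∞) be a concave function and let A = [a_{ij}] be an m×m positive semidefinite complex matrix. Then there exist rank-one orthogonal projections E_1, …, E_m ∈ M_m(ℂ) such that f(A) ≤ ∑_{i=1}^m f(a_{ii}) E_i in the Loewner order. -/
open scoped Matrix ComplexOrder

open Matrix Complex

namespace ConcaveDiagAux

set_option linter.unusedSectionVars false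

variable {n : Type*} [Fintype n] [DecidableEq n]

lemma star_dot_self (v : n → ℂ) : star v ⬝ᵥ v = ((∑ k, normSq (v k) : ℝ) : ℂ) := by
  simp [dotProduct, Complex.conj_mul', ← Complex.ofReal_pow, Complex.sq_norm]

lemma outer_conjT (v : n → ℂ) : (vecMulVec v (star v))ᴴ = vecMulVec v (star v) := by
  ext a b
  simp [vecMulVec_apply, conjTranspose_apply, mul_comm]

lemma outer_mulVec (v : n → ℂ) (x : n → ℂ) :
    (vecMulVec v (star v)) *ᵥ x = (star v ⬝ᵥ x) • v := by
  ext a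
  simp only [mulVec, dotProduct, vecMulVec_apply, Pi.star_apply, Pi.smul_apply, smul_eq_mul,
    Finset.sum_mul]
  exact Finset.sum_congr rfl fun k _ => by ring

lemma outer_idem (v : n → ℂ) (hv : star v ⬝ᵥ v = 1) :
    vecMulVec v (star v) * vecMulVec v (star v) = vecMulVec v (star v) := by
  ext a b
  simp only [Matrix.mul_apply, vecMulVec_apply, Pi.star_apply]
  calc ∑ k, v a * star (v k) * (v k * star (v b))
      = (∑ k, star (v k) * v k) * (v a * star (v b)) := by
        rw [Finset.sum_mul]; exact Finset.sum_congr rfl fun k _ => by ring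
    _ = v a * star (v b) := by
        have : (∑ k, star (v k) * v k) = star v ⬝ᵥ v := rfl
        rw [this, hv, one_mul]

lemma outer_psd (v : n → ℂ) : (vecMulVec v (star v)).PosSemidef := by
  refine PosSemidef.of_dotProduct_mulVec_nonneg (outer_conjT v) fun x => ?_
  rw [outer_mulVec v x, dotProduct_smul]
  have h2 : star x ⬝ᵥ v = star (star v ⬝ᵥ x) := by
    simp [dotProduct, Finset.sum_comm, mul_comm]
  rw [smul_eq_mul, h2]
  exact mul_star_self_nonneg (star v ⬝ᵥ x)

lemma smul_outer (r : ℝ) (v : n → ℂ) :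
    vecMulVec ((r : ℂ) • v) (star ((r : ℂ) • v)) = (r * r) • vecMulVec v (star v) := by
  ext a b
  simp only [vecMulVec_apply, Pi.star_apply, Pi.smul_apply, smul_eq_mul, star_mul',
    Matrix.smul_apply]
  ring_nf
  simp [Complex.conj_ofReal]
  ring

lemma smul_outer_psd (t : ℝ) (ht : 0 ≤ t) (v : n → ℂ) :
    (t • vecMulVec v (star v)).PosSemidef := by
  have h := smul_outer (Real.sqrt t) v
  rw [Real.mul_self_sqrt ht] at h
  rw [← h]
  exact outer_psd _

lemma outer_rank (v : n → ℂ) (hv : v ≠ 0) : (vecMulVec v (star v)).rank = 1 := by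
  have hrange : LinearMap.range (vecMulVec v (star v)).mulVecLin = Submodule.span ℂ {v} := by
    apply le_antisymm
    · rintro _ ⟨x, rfl⟩
      rw [mulVecLin_apply, outer_mulVec]
      exact Submodule.smul_mem _ _ (Submodule.mem_span_singleton_self v)
    · rw [Submodule.span_singleton_le_iff_mem]
      have hsv : (star v ⬝ᵥ v) ≠ 0 := by
        rw [star_dot_self]
        simp only [ne_eq, Complex.ofReal_eq_zero]
        intro h
        apply hv
        ext k
        have := (Finset.sum_eq_zero_iff_of_nonneg (fun k _ => Complex.normSq_nonneg (v k))).mp h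
          k (Finset.mem_univ k)
        simpa [Complex.normSq_eq_zero] using this
      refine ⟨(star v ⬝ᵥ v)⁻¹ • v, ?_⟩
      rw [mulVecLin_apply, outer_mulVec, dotProduct_smul, smul_eq_mul, inv_mul_cancel₀ hsv,
        one_smul]
  rw [Matrix.rank, hrange, finrank_span_singleton hv]

lemma psd_sum {ι : Type*} [Fintype ι] (T : ι → Matrix n n ℂ) (h : ∀ i, (T i).PosSemidef) :
    (∑ i, T i).PosSemidef := by
  classical
  refine Finset.sum_induction T _ (fun a b ha hb => ha.add hb) ?_ (fun i _ => h i)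
  exact Matrix.PosSemidef.zero



lemma triple_diag_apply {m : ℕ} (U : Matrix (Fin m) (Fin m) ℂ) (d : Fin m → ℝ) (i : Fin m) :
    (U * diagonal (fun j => ((d j : ℝ) : ℂ)) * Uᴴ) i i
      = ((∑ j, d j * normSq (U i j) : ℝ) : ℂ) := by
  rw [Matrix.mul_apply]
  push_cast
  refine Finset.sum_congr rfl fun j _ => ?_
  rw [Matrix.mul_diagonal, Matrix.conjTranspose_apply]
  rw [show U i j * ((d j : ℝ) : ℂ) * star (U i j) = ((d j : ℝ) : ℂ) * (U i j * star (U i j)) by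
    ring]
  simp [Complex.star_def, Complex.mul_conj]

lemma row_normSq_sum {m : ℕ} (U : Matrix (Fin m) (Fin m) ℂ) (hUU : U * Uᴴ = 1) (i : Fin m) :
    ∑ j, normSq (U i j) = 1 := by
  have h := congrFun (congrFun hUU i) i
  rw [Matrix.mul_apply] at h
  simp only [Matrix.one_apply_eq] at h
  have heq : ∀ j ∈ Finset.univ, U i j * Uᴴ j i = ((normSq (U i j) : ℝ) : ℂ) := by
    intro j _
    rw [Matrix.conjTranspose_apply]
    simp [Complex.star_def, Complex.mul_conj]
  rw [Finset.sum_congr rfl heq, ← Complex.ofReal_sum] at h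
  exact_mod_cast h

end ConcaveDiagAux


open ConcaveDiagAux

/-- If `f : [0,∞) → [0,∞)` is concave and `A = [a_{ij}]` is an `m×m`
positive semidefinite complex matrix, then there exist rank-one orthogonal projections
`E_1, …, E_m` with `f(A) ≤ ∑ i, f(a_{ii}) E_i` in the Loewner order. -/
theorem concave_diagonal_rank_one_projections {m : ℕ} (f : ℝ → ℝ)
    (hf_nonneg : ∀ x ∈ Set.Ici (0:ℝ), 0 ≤ f x)
    (hf_concave : ConcaveOn ℝ (Set.Ici 0) f)
    (A : Matrix (Fin m) (Fin m) ℂ) (hA : A.PosSemidef) :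
    ∃ E : Fin m → Matrix (Fin m) (Fin m) ℂ,
      (∀ i, (E i)ᴴ = E i) ∧ (∀ i, E i * E i = E i) ∧ (∀ i, (E i).rank = 1) ∧
      ((∑ i, f ((A i i).re) • E i) - cfc f A).PosSemidef := by
  classical
  have hH : A.IsHermitian := hA.1
  set U : Matrix (Fin m) (Fin m) ℂ := (hH.eigenvectorUnitary : Matrix (Fin m) (Fin m) ℂ)
    with hUdef
  set lam : Fin m → ℝ := hH.eigenvalues with hlamdef
  have hUU : U * Uᴴ = 1 := by
    rw [← Matrix.star_eq_conjTranspose]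
    exact (Matrix.mem_unitaryGroup_iff).mp (hH.eigenvectorUnitary).2
  have hUU' : Uᴴ * U = 1 := by
    rw [← Matrix.star_eq_conjTranspose]
    exact (Matrix.mem_unitaryGroup_iff').mp (hH.eigenvectorUnitary).2
  have hspec : A = U * Matrix.diagonal (fun j => ((lam j : ℝ) : ℂ)) * Uᴴ := by
    rw [← Matrix.star_eq_conjTranspose]
    exact hH.spectral_theorem
  have hcfc : cfc f A = U * Matrix.diagonal (fun j => ((f (lam j) : ℝ) : ℂ)) * Uᴴ := by
    rw [hH.cfc_eq]; rfl
  have hlam0 : ∀ j, 0 ≤ lam j := fun j => hA.eigenvalues_nonneg j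
  -- weights
  set w : Fin m → Fin m → ℝ := fun i j => normSq (U i j) with hwdef
  have hw0 : ∀ i j, 0 ≤ w i j := fun i j => normSq_nonneg _
  have hw1 : ∀ i, ∑ j, w i j = 1 := fun i => row_normSq_sum U hUU i
  -- diagonal entries of A
  have hAii : ∀ i, (A i i).re = ∑ j, lam j * w i j := by
    intro i
    have h1 : A i i = ((∑ j, lam j * w i j : ℝ) : ℂ) := by
      conv_lhs => rw [hspec]
      exact triple_diag_apply U lam i
    rw [h1, Complex.ofReal_re]
  have hAii0 : ∀ i, (0:ℝ) ≤ (A i i).re := by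
    intro i
    rw [hAii i]
    exact Finset.sum_nonneg fun j _ => mul_nonneg (hlam0 j) (hw0 i j)
  set c : Fin m → ℝ := fun i => f ((A i i).re) with hcdef
  have hc0 : ∀ i, 0 ≤ c i := fun i => hf_nonneg _ (hAii0 i)
  -- Jensen
  have hJ : ∀ i, ∑ j, w i j * f (lam j) ≤ c i := by
    intro i
    have := hf_concave.le_map_sum (t := Finset.univ) (w := w i) (p := lam)
      (fun j _ => hw0 i j) (hw1 i) (fun j _ => hlam0 j)
    simp only [smul_eq_mul] at this
    calc ∑ j, w i j * f (lam j) ≤ f (∑ j, w i j * lam j) := this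
      _ = c i := by
        rw [hcdef]
        congr 1
        rw [hAii i]
        exact Finset.sum_congr rfl fun j _ => mul_comm _ _
  -- the square root matrix
  set g : ℝ → ℝ := fun x => Real.sqrt (f x) with hgdef
  set B : Matrix (Fin m) (Fin m) ℂ :=
    U * Matrix.diagonal (fun j => ((g (lam j) : ℝ) : ℂ)) * Uᴴ with hBdef
  have hgg : ∀ j, g (lam j) * g (lam j) = f (lam j) := fun j =>
    Real.mul_self_sqrt (hf_nonneg _ (hlam0 j))
  have hBB : B * B = cfc f A := by
    have key : Matrix.diagonal (fun j => ((g (lam j) : ℝ) : ℂ)) *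
        Matrix.diagonal (fun j => ((g (lam j) : ℝ) : ℂ))
        = Matrix.diagonal (fun j => ((f (lam j) : ℝ) : ℂ)) := by
      have hfun : (fun j => ((g (lam j) : ℝ) : ℂ) * ((g (lam j) : ℝ) : ℂ))
          = fun j => ((f (lam j) : ℝ) : ℂ) := by
        funext j
        rw [← Complex.ofReal_mul, hgg j]
      rw [Matrix.diagonal_mul_diagonal, hfun]
    rw [hcfc, hBdef]
    rw [show U * Matrix.diagonal (fun j => ((g (lam j) : ℝ) : ℂ)) * Uᴴ *
        (U * Matrix.diagonal (fun j => ((g (lam j) : ℝ) : ℂ)) * Uᴴ)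
        = U * (Matrix.diagonal (fun j => ((g (lam j) : ℝ) : ℂ)) * (Uᴴ * U) *
          (Matrix.diagonal (fun j => ((g (lam j) : ℝ) : ℂ)) * Uᴴ)) from by
      simp only [Matrix.mul_assoc]]
    rw [hUU', Matrix.mul_one]
    rw [show U * (Matrix.diagonal (fun j => ((g (lam j) : ℝ) : ℂ)) *
        (Matrix.diagonal (fun j => ((g (lam j) : ℝ) : ℂ)) * Uᴴ))
        = U * (Matrix.diagonal (fun j => ((g (lam j) : ℝ) : ℂ)) *
          Matrix.diagonal (fun j => ((g (lam j) : ℝ) : ℂ))) * Uᴴ from by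
      simp only [← Matrix.mul_assoc]]
    rw [key]
  have hBH : Bᴴ = B := by
    rw [hBdef]
    simp only [Matrix.conjTranspose_mul, Matrix.conjTranspose_conjTranspose,
      Matrix.diagonal_conjTranspose]
    rw [← Matrix.mul_assoc]
    congr 2
    funext j
    simp [Pi.star_def, Complex.star_def, Complex.conj_ofReal]
  -- columns of B
  set bcol : Fin m → (Fin m → ℂ) := fun i a => B a i with hbdef
  have hBab : ∀ a b, B a b = star (B b a) := by
    intro a b
    conv_lhs => rw [← hBH]
    rfl
  have hsumouter : cfc f A = ∑ i, vecMulVec (bcol i) (star (bcol i)) := by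
    rw [← hBB]
    ext a b
    rw [Matrix.mul_apply]
    rw [show (∑ i, vecMulVec (bcol i) (star (bcol i))) a b
        = ∑ i, B a i * star (B b i) from by simp [Matrix.sum_apply, vecMulVec_apply, hbdef]]
    exact Finset.sum_congr rfl fun i _ => by rw [← hBab i b]
  set d : Fin m → ℝ := fun i => ∑ a, normSq (B a i) with hddef
  have hd0 : ∀ i, 0 ≤ d i := fun i => Finset.sum_nonneg fun a _ => normSq_nonneg _
  have hbd : ∀ i, star (bcol i) ⬝ᵥ bcol i = ((d i : ℝ) : ℂ) := fun i => star_dot_self _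
  -- d i = (cfc f A) i i  and Jensen gives d i ≤ c i
  have hdc : ∀ i, d i ≤ c i := by
    intro i
    have h1 : (cfc f A) i i = ((∑ j, f (lam j) * w i j : ℝ) : ℂ) := by
      rw [hcfc]; exact triple_diag_apply U _ i
    have h2 : (cfc f A) i i = ((d i : ℝ) : ℂ) := by
      rw [← hBB, Matrix.mul_apply]
      rw [hddef]
      push_cast
      refine Finset.sum_congr rfl fun a _ => ?_
      rw [hBab i a]
      simp [Complex.star_def, Complex.mul_conj, mul_comm]
    have h3 : d i = ∑ j, f (lam j) * w i j := by
      have := h2.symm.trans h1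
      exact_mod_cast this
    rw [h3]
    calc ∑ j, f (lam j) * w i j = ∑ j, w i j * f (lam j) :=
          Finset.sum_congr rfl fun j _ => mul_comm _ _
      _ ≤ c i := hJ i
  -- the vectors
  set v : Fin m → (Fin m → ℂ) := fun i =>
    if d i = 0 then Pi.single i 1 else ((Real.sqrt (d i))⁻¹ : ℂ) • bcol i with hvdef
  have hunit : ∀ i, star (v i) ⬝ᵥ v i = 1 := by
    intro i
    by_cases h : d i = 0
    · rw [hvdef]
      simp only [if_pos h]
      rw [star_dot_self]
      have : ∑ k, normSq ((Pi.single i (1:ℂ) : Fin m → ℂ) k) = 1 := by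
        rw [Finset.sum_eq_single i]
        · simp
        · intro k _ hk; simp [Pi.single_apply, hk]
        · simp
      rw [this]; simp
    · rw [hvdef]
      simp only [if_neg h]
      rw [star_smul, smul_dotProduct, dotProduct_smul, hbd i]
      simp only [smul_eq_mul, Complex.star_def, ← Complex.ofReal_inv, Complex.conj_ofReal,
        ← Complex.ofReal_mul]
      norm_cast
      rw [show (Real.sqrt (d i))⁻¹ * ((Real.sqrt (d i))⁻¹ * d i)
          = ((Real.sqrt (d i)) * (Real.sqrt (d i)))⁻¹ * d i from by rw [mul_inv]; ring]
      rw [Real.mul_self_sqrt (hd0 i), inv_mul_cancel₀ h]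
  have hvne : ∀ i, v i ≠ 0 := by
    intro i h
    have := hunit i
    rw [h] at this
    simp only [star_zero, zero_dotProduct] at this
    exact zero_ne_one this
  refine ⟨fun i => vecMulVec (v i) (star (v i)), fun i => outer_conjT _,
    fun i => outer_idem _ (hunit i), fun i => outer_rank _ (hvne i), ?_⟩
  have hsplit : (∑ i, c i • vecMulVec (v i) (star (v i))) - cfc f A
      = ∑ i, (c i • vecMulVec (v i) (star (v i)) - vecMulVec (bcol i) (star (bcol i))) := by
    rw [hsumouter, ← Finset.sum_sub_distrib]
  rw [show (∑ i, f ((A i i).re) • vecMulVec (v i) (star (v i))) - cfc f A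
      = (∑ i, c i • vecMulVec (v i) (star (v i))) - cfc f A from rfl]
  rw [hsplit]
  apply psd_sum
  intro i
  by_cases h : d i = 0
  · have hb0 : bcol i = 0 := by
      funext a
      have := (Finset.sum_eq_zero_iff_of_nonneg (fun a _ => normSq_nonneg (B a i))).mp h a
        (Finset.mem_univ a)
      simpa [Complex.normSq_eq_zero] using this
    rw [hb0]
    rw [show vecMulVec (0 : Fin m → ℂ) (star (0 : Fin m → ℂ)) = 0 from by
      ext a b; simp [vecMulVec_apply]]
    rw [sub_zero]
    exact smul_outer_psd _ (hc0 i) _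
  · have hds : (0:ℝ) < d i := lt_of_le_of_ne (hd0 i) (Ne.symm h)
    have hv : v i = (((Real.sqrt (d i))⁻¹ : ℝ) : ℂ) • bcol i := by
      rw [hvdef]; simp only [if_neg h]; norm_num
    rw [hv, smul_outer]
    have hrr : (Real.sqrt (d i))⁻¹ * (Real.sqrt (d i))⁻¹ = (d i)⁻¹ := by
      rw [← mul_inv, Real.mul_self_sqrt (hd0 i)]
    rw [hrr, smul_smul]
    rw [show (c i * (d i)⁻¹) • vecMulVec (bcol i) (star (bcol i))
          - vecMulVec (bcol i) (star (bcol i))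
        = (c i * (d i)⁻¹ - 1) • vecMulVec (bcol i) (star (bcol i)) from by
      rw [sub_smul, one_smul]]
    apply smul_outer_psd
    rw [sub_nonneg, ← div_eq_mul_inv]
    rw [le_div_iff₀ hds, one_mul]
    exact hdc i
end

section
/- Let H = [[A, X],[X*, B]] be an (n+m)×(n+m) positive semidefinite complex matrix written in blocks with A ∈ M_n(ℂ) and B ∈ M_m(ℂ). Then there exist unitary matrices U, V ∈ M_{n+m}(ℂ) such that H = U (A ⊕ 0_m) U* + V (0_n ⊕ B) V*, where A ⊕ 0_m and 0_n ⊕ B denote the (n+m)×(n+m) matrices with the indicated diagonal blocks and zeros elsewhere. -/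
open scoped Matrix ComplexOrder

lemma exists_unitary_factor {k : Type*} [Fintype k] [DecidableEq k]
    (S : Matrix k k ℂ) (μ : k → ℝ) (hμ : ∀ i, 0 ≤ μ i)
    (hS : Sᴴ * S = Matrix.diagonal (fun i => (μ i : ℂ))) :
    ∃ U ∈ Matrix.unitaryGroup k ℂ,
      S = U * Matrix.diagonal (fun i => (Real.sqrt (μ i) : ℂ)) := by
  classical
  have hSentry : ∀ i j, ∑ x, (starRingEnd ℂ) (S x i) * S x j
      = if i = j then (μ i : ℂ) else 0 := by
    intro i j
    have := congrFun (congrFun hS i) j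
    simpa [Matrix.mul_apply, Matrix.conjTranspose_apply, Matrix.diagonal_apply, eq_comm] using this
  set c : k → ℂ := fun j => ((Real.sqrt (μ j) : ℝ)⁻¹ : ℂ) with hc
  set v : k → EuclideanSpace ℂ k := fun j => (WithLp.equiv 2 _).symm (fun x => c j * S x j) with hv
  have hinner : ∀ i j : k, inner ℂ (v i) (v j)
      = (starRingEnd ℂ) (c i) * c j * (if i = j then (μ i : ℂ) else 0) := by
    intro i j
    rw [PiLp.inner_apply]
    simp only [hv, WithLp.equiv_symm_apply, PiLp.toLp_apply, RCLike.inner_apply]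
    rw [← hSentry i j, Finset.mul_sum]
    congr 1; ext x
    simp [map_mul]; ring
  have horth : Orthonormal ℂ (Set.restrict {j | μ j ≠ 0} v) := by
    rw [orthonormal_iff_ite]
    rintro ⟨i, hi⟩ ⟨j, hj⟩
    show inner ℂ (v i) (v j) = _
    rw [hinner]
    by_cases hij : i = j
    · subst hij
      simp only [if_pos rfl, Subtype.mk.injEq, if_pos rfl, hc]
      have h1 : Real.sqrt (μ i) ≠ 0 :=
        Real.sqrt_ne_zero'.mpr (lt_of_le_of_ne (hμ i) (Ne.symm hi))
      rw [map_inv₀, Complex.conj_ofReal, ← mul_inv, ← Complex.ofReal_mul,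
        Real.mul_self_sqrt (hμ i)]
      simp only [if_true]
      exact inv_mul_cancel₀ (by exact_mod_cast hi)
    · simp [hij, Subtype.mk.injEq]
  obtain ⟨b, hb⟩ := horth.exists_orthonormalBasis_extension_of_card_eq
    (by simp [finrank_euclideanSpace])
  refine ⟨(EuclideanSpace.basisFun k ℂ).toBasis.toMatrix b.toBasis,
    (EuclideanSpace.basisFun k ℂ).toMatrix_orthonormalBasis_mem_unitary b, ?_⟩
  ext x j
  have hUapp : (EuclideanSpace.basisFun k ℂ).toBasis.toMatrix b.toBasis x j = b j x := rfl
  rw [Matrix.mul_apply]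
  rw [Finset.sum_eq_single j]
  · rw [hUapp, Matrix.diagonal_apply_eq]
    by_cases hj : μ j = 0
    · have hcol : S x j = 0 := by
        have h0 := hSentry j j
        rw [if_pos rfl, hj, Complex.ofReal_zero] at h0
        have h0' : (∑ y, (Complex.normSq (S y j) : ℂ)) = 0 := by
          rw [← h0]; congr 1; ext y
          exact Complex.normSq_eq_conj_mul_self
        have h0'' : ∑ y, Complex.normSq (S y j) = 0 := by exact_mod_cast h0'
        have := (Finset.sum_eq_zero_iff_of_nonneg
          (fun y _ => Complex.normSq_nonneg (S y j))).mp h0'' x (Finset.mem_univ x)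
        exact Complex.normSq_eq_zero.mp this
      simp [hcol, hj]
    · have hb' : b j = v j := hb j hj
      have h1 : Real.sqrt (μ j) ≠ 0 :=
        Real.sqrt_ne_zero'.mpr (lt_of_le_of_ne (hμ j) (Ne.symm hj))
      rw [hb', hv]
      simp only [WithLp.equiv_symm_apply, PiLp.toLp_apply, hc]
      rw [mul_comm, ← mul_assoc, ← Complex.ofReal_inv, ← Complex.ofReal_mul,
        mul_inv_cancel₀ h1]
      simp
  · intro b' _ hb'
    rw [Matrix.diagonal_apply_ne _ hb', mul_zero]
  · simp

/-- `N * Nᴴ` is unitarily conjugate to `Nᴴ * N`. -/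
lemma exists_unitary_conj_mul_conjTranspose {k : Type*} [Fintype k] [DecidableEq k]
    (N : Matrix k k ℂ) :
    ∃ U ∈ Matrix.unitaryGroup k ℂ, N * Nᴴ = U * (Nᴴ * N) * Uᴴ := by
  classical
  have hT : (Nᴴ * N).PosSemidef := Matrix.posSemidef_conjTranspose_mul_self N
  have hHerm : (Nᴴ * N).IsHermitian := hT.1
  set W : Matrix k k ℂ := (hHerm.eigenvectorUnitary : Matrix k k ℂ) with hW
  have hWmem : W ∈ Matrix.unitaryGroup k ℂ := hHerm.eigenvectorUnitary.2
  set μ : k → ℝ := hHerm.eigenvalues with hμdef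
  have hμ : ∀ i, 0 ≤ μ i := hT.eigenvalues_nonneg
  have hdiag : Wᴴ * (Nᴴ * N) * W = Matrix.diagonal (fun i => (μ i : ℂ)) := by
    have := hHerm.conjStarAlgAut_star_eigenvectorUnitary
    simp only [Unitary.conjStarAlgAut_apply, Unitary.coe_star, star_star] at this
    rw [Matrix.star_eq_conjTranspose] at this
    convert this using 2 <;> rfl
  have hSS : (N * W)ᴴ * (N * W) = Matrix.diagonal (fun i => (μ i : ℂ)) := by
    rw [Matrix.conjTranspose_mul, ← hdiag]
    noncomm_ring
  obtain ⟨U₀, hU₀, hfac⟩ := exists_unitary_factor (N * W) μ hμ hSS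
  refine ⟨U₀ * Wᴴ, ?_, ?_⟩
  · rw [← Matrix.star_eq_conjTranspose]
    exact mul_mem hU₀ (Unitary.star_mem hWmem)
  · have hWW : W * Wᴴ = 1 := by
      rw [← Matrix.star_eq_conjTranspose]; exact (Matrix.mem_unitaryGroup_iff).mp hWmem
    have hWW' : Wᴴ * W = 1 := by
      rw [← Matrix.star_eq_conjTranspose]; exact (Matrix.mem_unitaryGroup_iff').mp hWmem
    have hNN : N * Nᴴ = (N * W) * (N * W)ᴴ := by
      rw [Matrix.conjTranspose_mul, Matrix.mul_assoc, ← Matrix.mul_assoc W, hWW, Matrix.one_mul]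
    have hDD : Matrix.diagonal (fun i => (Real.sqrt (μ i) : ℂ)) *
        (Matrix.diagonal (fun i => (Real.sqrt (μ i) : ℂ)))ᴴ
        = Matrix.diagonal (fun i => (μ i : ℂ)) := by
      ext i j
      simp only [Matrix.diagonal_conjTranspose, Matrix.diagonal_mul_diagonal,
        Matrix.diagonal_apply, Pi.star_apply, RCLike.star_def, Complex.conj_ofReal]
      split
      · rw [← Complex.ofReal_mul, Real.mul_self_sqrt (hμ i)]
      · rfl
    rw [hNN, hfac, Matrix.conjTranspose_mul, Matrix.conjTranspose_mul]
    rw [show U₀ * Matrix.diagonal (fun i => (Real.sqrt (μ i) : ℂ)) *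
        ((Matrix.diagonal (fun i => (Real.sqrt (μ i) : ℂ)))ᴴ * U₀ᴴ)
        = U₀ * (Matrix.diagonal (fun i => (Real.sqrt (μ i) : ℂ)) *
          (Matrix.diagonal (fun i => (Real.sqrt (μ i) : ℂ)))ᴴ) * U₀ᴴ by noncomm_ring, hDD,
      ← hdiag]
    rw [Matrix.conjTranspose_conjTranspose]
    noncomm_ring

/-- Every positive semidefinite block matrix `[[A, X],[X*, B]]` can be
written as `U (A ⊕ 0) U* + V (0 ⊕ B) V*` for some unitaries `U, V`. -/
theorem posSemidef_block_decomposition {n m : ℕ}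
    (A : Matrix (Fin n) (Fin n) ℂ) (B : Matrix (Fin m) (Fin m) ℂ)
    (X : Matrix (Fin n) (Fin m) ℂ)
    (hH : (Matrix.fromBlocks A X Xᴴ B).PosSemidef) :
    ∃ U V : Matrix (Fin n ⊕ Fin m) (Fin n ⊕ Fin m) ℂ,
      U ∈ Matrix.unitaryGroup (Fin n ⊕ Fin m) ℂ ∧
      V ∈ Matrix.unitaryGroup (Fin n ⊕ Fin m) ℂ ∧
      Matrix.fromBlocks A X Xᴴ B =
        U * Matrix.fromBlocks A 0 0 0 * Uᴴ + V * Matrix.fromBlocks 0 0 0 B * Vᴴ := by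
  classical
  obtain ⟨M, hM, hMM⟩ : ∃ M : Matrix (Fin n ⊕ Fin m) (Fin n ⊕ Fin m) ℂ,
      M.PosSemidef ∧ M * M = Matrix.fromBlocks A X Xᴴ B := by
    open scoped MatrixOrder in
    exact ⟨CFC.sqrt _, Matrix.nonneg_iff_posSemidef.mp (CFC.sqrt_nonneg _), CFC.sqrt_mul_sqrt_self _ hH.nonneg⟩
  have hMH : Mᴴ = M := hM.1
  set P : Matrix (Fin n ⊕ Fin m) (Fin n ⊕ Fin m) ℂ := Matrix.fromBlocks 1 0 0 0 with hP
  set Q : Matrix (Fin n ⊕ Fin m) (Fin n ⊕ Fin m) ℂ := Matrix.fromBlocks 0 0 0 1 with hQ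
  have hPH : Pᴴ = P := by
    simp [hP, Matrix.fromBlocks_conjTranspose]
  have hQH : Qᴴ = Q := by
    simp [hQ, Matrix.fromBlocks_conjTranspose]
  have hPP : P * P = P := by
    simp [hP, Matrix.fromBlocks_multiply]
  have hQQ : Q * Q = Q := by
    simp [hQ, Matrix.fromBlocks_multiply]
  have hPQ : P + Q = 1 := by
    rw [hP, hQ, Matrix.fromBlocks_add, ← Matrix.fromBlocks_one]
    simp
  have h1 : (M * P)ᴴ * (M * P) = Matrix.fromBlocks A 0 0 0 := by
    rw [Matrix.conjTranspose_mul, hPH, hMH, Matrix.mul_assoc, ← Matrix.mul_assoc M, hMM, hP]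
    simp [Matrix.fromBlocks_multiply]
  have h2 : (M * Q)ᴴ * (M * Q) = Matrix.fromBlocks 0 0 0 B := by
    rw [Matrix.conjTranspose_mul, hQH, hMH, Matrix.mul_assoc, ← Matrix.mul_assoc M, hMM, hQ]
    simp [Matrix.fromBlocks_multiply]
  have hsum : (M * P) * (M * P)ᴴ + (M * Q) * (M * Q)ᴴ = Matrix.fromBlocks A X Xᴴ B := by
    rw [Matrix.conjTranspose_mul, Matrix.conjTranspose_mul, hPH, hQH, hMH]
    calc M * P * (P * M) + M * Q * (Q * M)
        = M * (P * P) * M + M * (Q * Q) * M := by noncomm_ring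
      _ = M * (P + Q) * M := by rw [hPP, hQQ]; noncomm_ring
      _ = Matrix.fromBlocks A X Xᴴ B := by rw [hPQ, Matrix.mul_one, hMM]
  obtain ⟨U, hU, hU2⟩ := exists_unitary_conj_mul_conjTranspose (M * P)
  obtain ⟨V, hV, hV2⟩ := exists_unitary_conj_mul_conjTranspose (M * Q)
  exact ⟨U, V, hU, hV, by rw [← h1, ← h2, ← hU2, ← hV2, hsum]⟩
end

section
/- Let Ω ⊆ ℝ be an interval, let f : Ω → [0,∞) be concave, and let A, B be n×n Hermitian complex matrices with spectra contained in Ω. Then for every symmetric anti-norm ‖·‖_!, ‖f((A+B)/2)‖_! ≥ ‖(f(A)+f(B))/2‖_! ≥ (‖f(A)‖_! + ‖f(B)‖_!)/2. -/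
open scoped Matrix ComplexOrder

/-- A symmetric anti-norm on the cone of positive semidefinite complex matrices. -/
def IsSymmetricAntiNorm {k : Type*} [Fintype k] [DecidableEq k]
    (N : Matrix k k ℂ → ℝ) : Prop :=
  (∀ A : Matrix k k ℂ, A.PosSemidef → 0 ≤ N A) ∧
  (∀ (c : ℝ), 0 ≤ c → ∀ A : Matrix k k ℂ, A.PosSemidef → N (c • A) = c * N A) ∧
  (∀ A B : Matrix k k ℂ, A.PosSemidef → B.PosSemidef → N A + N B ≤ N (A + B)) ∧
  (∀ (U A : Matrix k k ℂ), U ∈ Matrix.unitaryGroup k ℂ → A.PosSemidef →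
    N (U * A * Uᴴ) = N A)

section Aux

variable {k : Type*} [Fintype k] [DecidableEq k]

lemma aux_smul_psd (r : ℝ) (hr : 0 ≤ r) {M : Matrix k k ℂ} (hM : M.PosSemidef) :
    (r • M).PosSemidef := by
  refine ⟨?_, fun x => ?_⟩
  · show (r • M)ᴴ = r • M
    rw [Matrix.conjTranspose_smul, hM.1.eq, star_trivial]
  · exact (hM.smul hr).2 x

lemma aux_N_zero {N : Matrix k k ℂ → ℝ} (hN : IsSymmetricAntiNorm N) : N 0 = 0 := by
  have := hN.2.1 0 le_rfl 0 Matrix.PosSemidef.zero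
  simpa using this

lemma aux_psd_sum {ι : Type*} (s : Finset ι) (X : ι → Matrix k k ℂ)
    (hX : ∀ i ∈ s, (X i).PosSemidef) : (∑ i ∈ s, X i).PosSemidef := by
  classical
  induction s using Finset.cons_induction with
  | empty => simpa using Matrix.PosSemidef.zero
  | cons b t hb iht =>
    rw [Finset.sum_cons]
    exact (hX b (by simp)).add (iht (fun i hi => hX i (Finset.mem_cons.mpr (Or.inr hi))))

lemma aux_superadd {N : Matrix k k ℂ → ℝ} (hN : IsSymmetricAntiNorm N)
    {ι : Type*} (s : Finset ι) (X : ι → Matrix k k ℂ) (hX : ∀ i ∈ s, (X i).PosSemidef) :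
    ∑ i ∈ s, N (X i) ≤ N (∑ i ∈ s, X i) := by
  classical
  induction s using Finset.cons_induction with
  | empty => simp [aux_N_zero hN]
  | cons a s ha ih =>
    rw [Finset.sum_cons, Finset.sum_cons]
    calc N (X a) + ∑ i ∈ s, N (X i)
        ≤ N (X a) + N (∑ i ∈ s, X i) := by
          gcongr
          exact ih (fun i hi => hX i (Finset.mem_cons.mpr (Or.inr hi)))
      _ ≤ N (X a + ∑ i ∈ s, X i) := hN.2.2.1 _ _ (hX a (by simp))
          (aux_psd_sum s X (fun i hi => hX i (Finset.mem_cons.mpr (Or.inr hi))))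

lemma aux_mono {N : Matrix k k ℂ → ℝ} (hN : IsSymmetricAntiNorm N)
    {X Y : Matrix k k ℂ} (hX : X.PosSemidef) (hYX : (Y - X).PosSemidef) : N X ≤ N Y := by
  have h1 := hN.2.2.1 X (Y - X) hX hYX
  have h2 := hN.1 _ hYX
  have : X + (Y - X) = Y := by abel
  rw [this] at h1
  linarith

lemma aux_conj_diag_entry (Q : Matrix k k ℂ) (d : k → ℝ) (i : k) :
    (star Q * Matrix.diagonal (fun j => (d j : ℂ)) * Q) i i
      = ((∑ j, d j * Complex.normSq (Q j i) : ℝ) : ℂ) := by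
  rw [Matrix.mul_assoc, Matrix.mul_apply]
  push_cast
  refine Finset.sum_congr rfl fun j _ => ?_
  rw [Matrix.diagonal_mul, Matrix.star_apply]
  have : (starRingEnd ℂ) (Q j i) * Q j i = (Complex.normSq (Q j i) : ℂ) :=
    (Complex.normSq_eq_conj_mul_self).symm
  push_cast
  rw [show star (Q j i) = (starRingEnd ℂ) (Q j i) from rfl]
  rw [mul_comm ((d j : ℂ)) (Q j i), ← mul_assoc, mul_comm ((starRingEnd ℂ) (Q j i)) (Q j i),
    Complex.mul_conj, mul_comm]

noncomputable def auxSign (ε : k → Bool) (i : k) : ℂ := if ε i then 1 else -1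

lemma aux_sign_star (ε : k → Bool) : star (Matrix.diagonal (auxSign ε)) = Matrix.diagonal (auxSign ε) := by
  have h : star (auxSign ε) = auxSign ε := by
    funext i; simp only [Pi.star_apply, auxSign]; by_cases h : ε i <;> simp [h]
  rw [Matrix.star_eq_conjTranspose, Matrix.diagonal_conjTranspose, h]

lemma aux_sign_unitary (ε : k → Bool) :
    Matrix.diagonal (auxSign ε) ∈ Matrix.unitaryGroup k ℂ := by
  rw [Matrix.mem_unitaryGroup_iff, aux_sign_star, Matrix.diagonal_mul_diagonal]
  ext i j
  by_cases hij : i = j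
  · subst hij
    simp only [Matrix.diagonal_apply_eq, Matrix.one_apply_eq, auxSign]
    by_cases h : ε i <;> simp [h]
  · simp [Matrix.diagonal_apply_ne _ hij, Matrix.one_apply_ne hij]

lemma aux_sign_sum (i j : k) (hij : i ≠ j) :
    ∑ ε : k → Bool, auxSign ε i * auxSign ε j = 0 := by
  classical
  have hinv : Function.Involutive (fun ε : k → Bool => Function.update ε i (!(ε i))) := by
    intro ε
    funext x
    by_cases hx : x = i
    · subst hx; simp [Function.update]
    · simp [Function.update, hx]
  have := Equiv.sum_comp hinv.toPerm (fun ε => auxSign ε i * auxSign ε j)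
  have hneg : ∀ ε : k → Bool,
      auxSign (Function.update ε i (!(ε i))) i * auxSign (Function.update ε i (!(ε i))) j
        = -(auxSign ε i * auxSign ε j) := by
    intro ε
    have hj : Function.update ε i (!(ε i)) j = ε j := Function.update_of_ne (Ne.symm hij) _ _
    have hi : Function.update ε i (!(ε i)) i = !(ε i) := Function.update_self _ _ _
    simp only [auxSign, hj, hi]
    by_cases h : ε i <;> by_cases h2 : ε j <;> simp [h, h2] <;> ring
  simp only [Function.Involutive.coe_toPerm, hneg, Finset.sum_neg_distrib] at this
  linear_combination (-1/2 : ℂ) * this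

lemma aux_pinch_eq (Y : Matrix k k ℂ) :
    ∑ ε : k → Bool, (Matrix.diagonal (auxSign ε) * Y * Matrix.diagonal (auxSign ε))
      = ((2 : ℝ) ^ (Fintype.card k)) • Matrix.diagonal Y.diag := by
  ext i j
  rw [Matrix.sum_apply]
  simp only [Matrix.mul_diagonal, Matrix.diagonal_mul, Matrix.smul_apply]
  rw [show ∑ ε : k → Bool, auxSign ε i * Y i j * auxSign ε j
      = (∑ ε : k → Bool, auxSign ε i * auxSign ε j) * Y i j from by
    rw [Finset.sum_mul]; exact Finset.sum_congr rfl fun ε _ => by ring]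
  by_cases hij : i = j
  · subst hij
    have h1 : ∀ ε : k → Bool, auxSign ε i * auxSign ε i = 1 := by
      intro ε; simp only [auxSign]; by_cases h : ε i <;> simp [h]
    simp only [h1, Finset.sum_const, Finset.card_univ, nsmul_eq_mul, mul_one]
    rw [Matrix.diagonal_apply_eq, Matrix.diag_apply, Complex.real_smul]
    push_cast [Fintype.card_fun]
    simp
  · rw [aux_sign_sum i j hij, Matrix.diagonal_apply_ne _ hij]
    simp

lemma aux_pinch_le {N : Matrix k k ℂ → ℝ} (hN : IsSymmetricAntiNorm N)
    {Y : Matrix k k ℂ} (hY : Y.PosSemidef) : N Y ≤ N (Matrix.diagonal Y.diag) := by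
  classical
  set c : ℝ := (2:ℝ) ^ Fintype.card k with hc
  have hc0 : (0:ℝ) < c := by positivity
  have hterm : ∀ ε : k → Bool,
      (Matrix.diagonal (auxSign ε) * Y * Matrix.diagonal (auxSign ε)).PosSemidef := by
    intro ε
    have := hY.mul_mul_conjTranspose_same (Matrix.diagonal (auxSign ε))
    rwa [← Matrix.star_eq_conjTranspose, aux_sign_star] at this
  have hsum : (∑ ε : k → Bool,
      (Matrix.diagonal (auxSign ε) * Y * Matrix.diagonal (auxSign ε))).PosSemidef :=
    aux_psd_sum _ _ (fun ε _ => hterm ε)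
  have hdiag : Matrix.diagonal Y.diag = c⁻¹ • ∑ ε : k → Bool,
      (Matrix.diagonal (auxSign ε) * Y * Matrix.diagonal (auxSign ε)) := by
    rw [aux_pinch_eq, smul_smul, inv_mul_cancel₀ hc0.ne', one_smul]
  have hNval : ∀ ε : k → Bool,
      N (Matrix.diagonal (auxSign ε) * Y * Matrix.diagonal (auxSign ε)) = N Y := by
    intro ε
    have h4 := hN.2.2.2 (Matrix.diagonal (auxSign ε)) Y (aux_sign_unitary ε) hY
    rwa [← Matrix.star_eq_conjTranspose, aux_sign_star] at h4
  have hsumN : ∑ ε : k → Bool,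
      N (Matrix.diagonal (auxSign ε) * Y * Matrix.diagonal (auxSign ε)) = c * N Y := by
    simp only [hNval, Finset.sum_const, Finset.card_univ, nsmul_eq_mul, hc]
    push_cast [Fintype.card_fun]
    simp
  calc N Y = c⁻¹ * (c * N Y) := by field_simp
    _ ≤ c⁻¹ * N (∑ ε : k → Bool,
        (Matrix.diagonal (auxSign ε) * Y * Matrix.diagonal (auxSign ε))) := by
        rw [← hsumN]
        exact mul_le_mul_of_nonneg_left (aux_superadd hN _ _ (fun ε _ => hterm ε))
          (by positivity)
    _ = N (c⁻¹ • ∑ ε : k → Bool,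
        (Matrix.diagonal (auxSign ε) * Y * Matrix.diagonal (auxSign ε))) :=
        (hN.2.1 c⁻¹ (by positivity) _ hsum).symm
    _ = N (Matrix.diagonal Y.diag) := by rw [← hdiag]

lemma aux_key (Ω : Set ℝ) (hΩ : Ω.OrdConnected)
    (f : ℝ → ℝ) (hf_nonneg : ∀ x ∈ Ω, 0 ≤ f x) (hf_concave : ConcaveOn ℝ Ω f)
    (M : Matrix k k ℂ) (hM : M.IsHermitian) (hs : spectrum ℝ M ⊆ Ω)
    (W : Matrix k k ℂ) (hW : W ∈ Matrix.unitaryGroup k ℂ) (i : k) :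
    ∃ t s : ℝ, t ∈ Ω ∧ 0 ≤ s ∧ s ≤ f t ∧
      (star W * M * W) i i = (t : ℂ) ∧ (star W * cfc f M * W) i i = (s : ℂ) := by
  classical
  set V : Matrix k k ℂ := (Matrix.IsHermitian.eigenvectorUnitary hM : Matrix k k ℂ) with hV
  set Q : Matrix k k ℂ := star V * W with hQ
  set w : k → ℝ := fun j => Complex.normSq (Q j i) with hw
  set e : k → ℝ := hM.eigenvalues with he
  have hQstar : star Q = star W * V := by rw [hQ, Matrix.star_mul, star_star]
  have h1 : V * star V = 1 :=
    Matrix.mem_unitaryGroup_iff.mp (Matrix.IsHermitian.eigenvectorUnitary hM).2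
  have h2 : star W * W = 1 := Matrix.mem_unitaryGroup_iff'.mp hW
  have hQunit : star Q * Q = 1 := by
    rw [hQstar, hQ, Matrix.mul_assoc, ← Matrix.mul_assoc V, h1, Matrix.one_mul, h2]
  have hw_nonneg : ∀ j, 0 ≤ w j := fun j => Complex.normSq_nonneg _
  have hsw : ∑ j, w j = 1 := by
    have h1' := aux_conj_diag_entry Q (fun _ => (1:ℝ)) i
    simp only [Complex.ofReal_one, Matrix.diagonal_one, Matrix.mul_one, one_mul] at h1'
    rw [hQunit, Matrix.one_apply_eq] at h1'
    exact_mod_cast h1'.symm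
  have heΩ : ∀ j, e j ∈ Ω := fun j => hs (hM.eigenvalues_mem_spectrum_real j)
  have hM_eq : star W * M * W = star Q * Matrix.diagonal (fun j => ((e j : ℝ) : ℂ)) * Q := by
    conv_lhs => rw [hM.spectral_theorem]
    rw [hQstar, hQ]
    simp only [Unitary.conjStarAlgAut_apply, Matrix.mul_assoc]
    rfl
  have hcfc_eq : star W * cfc f M * W
      = star Q * Matrix.diagonal (fun j => ((f (e j) : ℝ) : ℂ)) * Q := by
    rw [hM.cfc_eq f, Matrix.IsHermitian.cfc]
    rw [hQstar, hQ]
    simp only [Unitary.conjStarAlgAut_apply, Matrix.mul_assoc]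
    rfl
  refine ⟨∑ j, w j * e j, ∑ j, w j * f (e j), ?_, ?_, ?_, ?_, ?_⟩
  · exact (convex_iff_ordConnected.mpr hΩ).sum_mem (fun j _ => hw_nonneg j)
      (by simpa using hsw) (fun j _ => heΩ j)
  · exact Finset.sum_nonneg fun j _ => mul_nonneg (hw_nonneg j) (hf_nonneg _ (heΩ j))
  · have := hf_concave.le_map_sum (t := Finset.univ) (w := w) (p := e)
      (fun j _ => hw_nonneg j) (by simpa using hsw) (fun j _ => heΩ j)
    simpa [smul_eq_mul] using this
  · rw [hM_eq, aux_conj_diag_entry]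
    norm_cast
    exact Finset.sum_congr rfl fun j _ => mul_comm _ _
  · rw [hcfc_eq, aux_conj_diag_entry]
    norm_cast
    exact Finset.sum_congr rfl fun j _ => mul_comm _ _

end Aux

/-- If `f : Ω → [0,∞)` is concave on an interval `Ω` and `A, B` are
Hermitian with spectra in `Ω`, then for every symmetric anti-norm,
`‖f((A+B)/2)‖_! ≥ ‖(f(A)+f(B))/2‖_! ≥ (‖f(A)‖_! + ‖f(B)‖_!)/2`. -/
theorem antiNorm_concave_midpoint {n : ℕ} (Ω : Set ℝ) (hΩ : Ω.OrdConnected)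
    (f : ℝ → ℝ) (hf_nonneg : ∀ x ∈ Ω, 0 ≤ f x) (hf_concave : ConcaveOn ℝ Ω f)
    (A B : Matrix (Fin n) (Fin n) ℂ) (hA : A.IsHermitian) (hB : B.IsHermitian)
    (hspecA : spectrum ℝ A ⊆ Ω) (hspecB : spectrum ℝ B ⊆ Ω)
    (N : Matrix (Fin n) (Fin n) ℂ → ℝ) (hN : IsSymmetricAntiNorm N) :
    N ((1/2 : ℝ) • (cfc f A + cfc f B)) ≤ N (cfc f ((1/2 : ℝ) • (A + B))) ∧
    (N (cfc f A) + N (cfc f B)) / 2 ≤ N ((1/2 : ℝ) • (cfc f A + cfc f B)) := by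
  classical
  have hΩconv : Convex ℝ Ω := convex_iff_ordConnected.mpr hΩ
  set C : Matrix (Fin n) (Fin n) ℂ := (1/2 : ℝ) • (A + B) with hCdef
  have hC : C.IsHermitian := by
    show Cᴴ = C
    rw [hCdef, Matrix.conjTranspose_smul, Matrix.conjTranspose_add, hA.eq, hB.eq, star_trivial]
  have cfc_psd : ∀ (M : Matrix (Fin n) (Fin n) ℂ) (hM : M.IsHermitian), spectrum ℝ M ⊆ Ω →
      (cfc f M).PosSemidef := by
    intro M hM hs
    rw [hM.cfc_eq f, Matrix.IsHermitian.cfc, Unitary.conjStarAlgAut_apply,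
      show star ((Matrix.IsHermitian.eigenvectorUnitary hM : Matrix (Fin n) (Fin n) ℂ))
        = (Matrix.IsHermitian.eigenvectorUnitary hM : Matrix (Fin n) (Fin n) ℂ)ᴴ from rfl]
    refine Matrix.PosSemidef.mul_mul_conjTranspose_same (Matrix.posSemidef_diagonal_iff.mpr ?_) _
    intro j
    simp only [Function.comp_apply]
    exact RCLike.ofReal_nonneg.mpr (hf_nonneg _ (hs (hM.eigenvalues_mem_spectrum_real j)))
  have hfA : (cfc f A).PosSemidef := cfc_psd A hA hspecA
  have hfB : (cfc f B).PosSemidef := cfc_psd B hB hspecB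
  have hXpsd : ((1/2 : ℝ) • (cfc f A + cfc f B)).PosSemidef :=
    aux_smul_psd _ (by norm_num) (hfA.add hfB)
  constructor
  · -- hard part
    set W : Matrix (Fin n) (Fin n) ℂ :=
      (Matrix.IsHermitian.eigenvectorUnitary hC : Matrix (Fin n) (Fin n) ℂ) with hWdef
    have hWmem : W ∈ Matrix.unitaryGroup (Fin n) ℂ :=
      (Matrix.IsHermitian.eigenvectorUnitary hC).2
    have hWstar_mem : star W ∈ Matrix.unitaryGroup (Fin n) ℂ := by
      rw [Matrix.mem_unitaryGroup_iff', star_star]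
      exact Matrix.mem_unitaryGroup_iff.mp hWmem
    choose tA sA htA hsA0 hsAle hentA hentSA using fun i : Fin n =>
      aux_key Ω hΩ f hf_nonneg hf_concave A hA hspecA W hWmem i
    choose tB sB htB hsB0 hsBle hentB hentSB using fun i : Fin n =>
      aux_key Ω hΩ f hf_nonneg hf_concave B hB hspecB W hWmem i
    -- identify eigenvalues of C
    have hCW : star W * C * W
        = Matrix.diagonal (RCLike.ofReal ∘ hC.eigenvalues : Fin n → ℂ) :=
      by
        have := hC.conjStarAlgAut_star_eigenvectorUnitary
        rw [Unitary.conjStarAlgAut_star_apply] at this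
        exact this
    have heigC : ∀ i, hC.eigenvalues i = (tA i + tB i) / 2 := by
      intro i
      have h1 : (star W * C * W) i i = ((hC.eigenvalues i : ℝ) : ℂ) := by
        rw [hCW, Matrix.diagonal_apply_eq]; rfl
      have h2 : (star W * C * W) i i = (((tA i + tB i) / 2 : ℝ) : ℂ) := by
        rw [hCdef, Matrix.mul_smul, Matrix.smul_mul, Matrix.smul_apply,
          Matrix.mul_add, Matrix.add_mul, Matrix.add_apply, hentA i, hentB i,
          Complex.real_smul]
        push_cast
        ring
      rw [h1] at h2
      exact_mod_cast h2
    have heigCΩ : ∀ i, hC.eigenvalues i ∈ Ω := by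
      intro i
      rw [heigC i, show (tA i + tB i) / 2 = (1/2 : ℝ) • tA i + (1/2 : ℝ) • tB i by
        simp [smul_eq_mul]; ring]
      exact hΩconv (htA i) (htB i) (by norm_num) (by norm_num) (by norm_num)
    have hfmid : ∀ i, (sA i + sB i) / 2 ≤ f (hC.eigenvalues i) := by
      intro i
      have hcon := hf_concave.2 (htA i) (htB i)
        (by norm_num : (0:ℝ) ≤ 1/2) (by norm_num : (0:ℝ) ≤ 1/2) (by norm_num)
      simp only [smul_eq_mul] at hcon
      have h1 := hsAle i
      have h2 := hsBle i
      rw [heigC i, show (tA i + tB i) / 2 = 1/2 * tA i + 1/2 * tB i by ring]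
      linarith
    set X : Matrix (Fin n) (Fin n) ℂ := (1/2 : ℝ) • (cfc f A + cfc f B) with hXdef
    set Y : Matrix (Fin n) (Fin n) ℂ := star W * X * W with hYdef
    have hYpsd : Y.PosSemidef := by
      have h := hXpsd.mul_mul_conjTranspose_same (star W)
      rw [hYdef]
      simpa [Matrix.star_eq_conjTranspose, Matrix.conjTranspose_conjTranspose] using h
    have hNXY : N X = N Y := by
      have h4 := hN.2.2.2 (star W) X hWstar_mem hXpsd
      rw [show (star W)ᴴ = W from by
        rw [← Matrix.star_eq_conjTranspose, star_star]] at h4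
      exact h4.symm
    have hYdiag : ∀ i, Y i i = (((sA i + sB i) / 2 : ℝ) : ℂ) := by
      intro i
      rw [hYdef, hXdef, Matrix.mul_smul, Matrix.smul_mul, Matrix.smul_apply,
        Matrix.mul_add, Matrix.add_mul, Matrix.add_apply, hentSA i, hentSB i,
        Complex.real_smul]
      push_cast
      ring
    have hFdiag_psd :
        (Matrix.diagonal (RCLike.ofReal ∘ f ∘ hC.eigenvalues) : Matrix (Fin n) (Fin n) ℂ).PosSemidef := by
      refine Matrix.posSemidef_diagonal_iff.mpr fun i => ?_
      simp only [Function.comp_apply]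
      exact RCLike.ofReal_nonneg.mpr (hf_nonneg _ (heigCΩ i))
    have hdiagY_psd : (Matrix.diagonal Y.diag).PosSemidef := by
      refine Matrix.posSemidef_diagonal_iff.mpr fun i => ?_
      rw [Matrix.diag_apply, hYdiag i]
      exact Complex.zero_le_real.mpr (by linarith [hsA0 i, hsB0 i])
    have hdiff : ((Matrix.diagonal (RCLike.ofReal ∘ f ∘ hC.eigenvalues) : Matrix (Fin n) (Fin n) ℂ)
        - Matrix.diagonal Y.diag).PosSemidef := by
      rw [Matrix.diagonal_sub]
      refine Matrix.posSemidef_diagonal_iff.mpr fun i => ?_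
      simp only [Pi.sub_apply, Function.comp_apply, Matrix.diag_apply]
      rw [hYdiag i]
      rw [show (RCLike.ofReal (f (hC.eigenvalues i)) : ℂ) = ((f (hC.eigenvalues i) : ℝ) : ℂ)
        from rfl, ← Complex.ofReal_sub]
      exact Complex.zero_le_real.mpr (by linarith [hfmid i])
    calc N X = N Y := hNXY
      _ ≤ N (Matrix.diagonal Y.diag) := aux_pinch_le hN hYpsd
      _ ≤ N (Matrix.diagonal (RCLike.ofReal ∘ f ∘ hC.eigenvalues)) :=
          aux_mono hN hdiagY_psd hdiff
      _ = N (W * Matrix.diagonal (RCLike.ofReal ∘ f ∘ hC.eigenvalues) * Wᴴ) :=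
          (hN.2.2.2 W _ hWmem hFdiag_psd).symm
      _ = N (cfc f C) := by
          rw [hC.cfc_eq f, Matrix.IsHermitian.cfc]
          rfl
  · -- easy part
    have h := hN.2.2.1 _ _ hfA hfB
    have h2 := hN.2.1 (1/2 : ℝ) (by norm_num) _ (hfA.add hfB)
    rw [h2]
    linarith
end

section
/- Let Ω ⊆ ℝ be an interval with 0 ∈ Ω, let f : Ω → [0,∞) be concave, let A be an n×n Hermitian complex matrix with spectrum contained in Ω, and let Z ∈ M_n(ℂ) be a contraction (operator norm at most 1). Then for every symmetric anti-norm ‖·‖_!, ‖f(Z*AZ)‖_! ≥ ‖Z* f(A) Z‖_!. -/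
open scoped Matrix ComplexOrder

section Auxiliary

set_option linter.unusedSectionVars false

variable {k : Type*} [Fintype k] [DecidableEq k]

/-- Transformation rule for quadratic forms under congruence. -/
lemma quad_conj (C Z : Matrix k k ℂ) (v : k → ℂ) :
    dotProduct (star v) ((star Z * C * Z) *ᵥ v)
      = dotProduct (star (Z *ᵥ v)) (C *ᵥ (Z *ᵥ v)) := by
  rw [Matrix.star_eq_conjTranspose, ← Matrix.mulVec_mulVec, ← Matrix.mulVec_mulVec,
    Matrix.dotProduct_mulVec, ← Matrix.star_mulVec]

/-- The quadratic form at a standard basis vector is a diagonal entry. -/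
lemma single_quad (M : Matrix k k ℂ) (j : k) :
    dotProduct (star (Pi.single j 1)) (M *ᵥ Pi.single j 1) = M j j := by
  simp [dotProduct, Matrix.mulVec, Pi.single_apply, mul_ite, ite_mul,
    Finset.sum_ite_eq, Finset.sum_ite_eq']

/-- Quadratic form of a real diagonal matrix. -/
lemma quad_diag (g : k → ℝ) (c : k → ℂ) :
    dotProduct (star c) (Matrix.diagonal (fun i => (g i : ℂ)) *ᵥ c)
      = ((∑ i, g i * Complex.normSq (c i) : ℝ) : ℂ) := by
  simp only [dotProduct, Matrix.mulVec_diagonal, Pi.star_apply, Complex.ofReal_sum]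
  refine Finset.sum_congr rfl fun i _ => ?_
  rw [Complex.ofReal_mul, Complex.normSq_eq_conj_mul_self, Complex.star_def]
  ring

lemma dot_star_self (c : k → ℂ) :
    dotProduct (star c) c = ((∑ i, Complex.normSq (c i) : ℝ) : ℂ) := by
  simp only [dotProduct, Pi.star_apply, Complex.ofReal_sum]
  exact Finset.sum_congr rfl fun i _ => by
    rw [Complex.normSq_eq_conj_mul_self, Complex.star_def]

lemma norm_quad (Z : Matrix k k ℂ) (v : k → ℂ) :
    dotProduct (star (Z *ᵥ v)) (Z *ᵥ v)
      = dotProduct (star v) ((star Z * Z) *ᵥ v) := by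
  have h := quad_conj 1 Z v
  simp only [Matrix.one_mulVec, mul_one] at h
  exact h.symm

lemma PosSemidef.real_smul {M : Matrix k k ℂ} (hM : M.PosSemidef) {c : ℝ} (hc : 0 ≤ c) :
    (c • M).PosSemidef := by
  refine Matrix.PosSemidef.of_dotProduct_mulVec_nonneg ?_ ?_
  · unfold Matrix.IsHermitian
    rw [Matrix.conjTranspose_smul, star_trivial, hM.1.eq]
  · intro x
    rw [Matrix.smul_mulVec, dotProduct_smul, Complex.real_smul]
    exact mul_nonneg (by exact_mod_cast hc) (hM.dotProduct_mulVec_nonneg x)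

/-- Pinching a matrix: kill all off-diagonal entries with a row or column in `S`. -/
def pinch (S : Finset k) (M : Matrix k k ℂ) : Matrix k k ℂ :=
  Matrix.of fun p q => if p = q ∨ (p ∉ S ∧ q ∉ S) then M p q else 0

lemma pinch_empty (M : Matrix k k ℂ) : pinch (∅ : Finset k) M = M := by
  ext p q; simp [pinch]

lemma pinch_univ (M : Matrix k k ℂ) :
    pinch Finset.univ M = Matrix.diagonal (fun i => M i i) := by
  ext p q
  by_cases h : p = q <;> simp [pinch, Matrix.diagonal, h]

/-- The diagonal sign matrix flipping coordinate `i`. -/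
def sgn (i : k) : Matrix k k ℂ := Matrix.diagonal (fun p => if p = i then -1 else 1)

lemma sgn_conjTranspose (i : k) : (sgn i)ᴴ = sgn i := by
  ext p q
  simp only [sgn, Matrix.conjTranspose_apply, Matrix.diagonal_apply]
  by_cases h : p = q <;> by_cases h2 : p = i <;> simp_all <;>
    exact fun hh => h hh.symm

lemma sgn_mem (i : k) : sgn i ∈ Matrix.unitaryGroup k ℂ := by
  rw [Matrix.mem_unitaryGroup_iff', Matrix.star_eq_conjTranspose, sgn_conjTranspose]
  ext p q
  simp only [sgn, Matrix.diagonal_mul_diagonal, Matrix.diagonal_apply, Matrix.one_apply]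
  by_cases h : p = q <;> by_cases h2 : p = i <;> simp_all <;>
    exact fun hh => h hh.symm

lemma pinch_insert (i : k) (S : Finset k) (M : Matrix k k ℂ) :
    pinch (insert i S) M = (2⁻¹ : ℝ) • (pinch S M + sgn i * pinch S M * (sgn i)ᴴ) := by
  rw [sgn_conjTranspose]
  ext p q
  simp only [pinch, sgn, Matrix.of_apply, Matrix.smul_apply, Matrix.add_apply,
    Matrix.diagonal_mul, Matrix.mul_diagonal, Finset.mem_insert, Complex.real_smul]
  by_cases hpq : p = q
  · subst hpq
    by_cases hpi : p = i <;> simp [hpi] <;> push_cast <;> ring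
  · by_cases hpi : p = i <;> by_cases hqi : q = i <;>
      by_cases hpS : p ∈ S <;> by_cases hqS : q ∈ S <;>
      simp_all <;> push_cast <;> ring

/-- Pinching preserves positive semidefiniteness and increases any symmetric anti-norm. -/
lemma pinch_psd_le {N : Matrix k k ℂ → ℝ} (hN : IsSymmetricAntiNorm N)
    (S : Finset k) (M : Matrix k k ℂ) (hM : M.PosSemidef) :
    (pinch S M).PosSemidef ∧ N M ≤ N (pinch S M) := by
  classical
  induction S using Finset.induction_on with
  | empty => rw [pinch_empty]; exact ⟨hM, le_refl _⟩
  | insert i S hiS ih =>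
    obtain ⟨hP, hle⟩ := ih
    obtain ⟨hN0, hNsmul, hNadd, hNU⟩ := hN
    have hconj : (sgn i * pinch S M * (sgn i)ᴴ).PosSemidef :=
      hP.mul_mul_conjTranspose_same (sgn i)
    have hsum : (pinch S M + sgn i * pinch S M * (sgn i)ᴴ).PosSemidef := hP.add hconj
    have hpsd : (pinch (insert i S) M).PosSemidef := by
      rw [pinch_insert]
      exact PosSemidef.real_smul hsum (by norm_num)
    refine ⟨hpsd, hle.trans ?_⟩
    rw [pinch_insert, hNsmul 2⁻¹ (by norm_num) _ hsum]
    have h1 : N (pinch S M) + N (sgn i * pinch S M * (sgn i)ᴴ) ≤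
        N (pinch S M + sgn i * pinch S M * (sgn i)ᴴ) := hNadd _ _ hP hconj
    have h2 : N (sgn i * pinch S M * (sgn i)ᴴ) = N (pinch S M) := hNU _ _ (sgn_mem i) hP
    linarith

/-- A symmetric anti-norm is monotone w.r.t. the Loewner order on PSD matrices. -/
lemma antiNorm_mono {N : Matrix k k ℂ → ℝ} (hN : IsSymmetricAntiNorm N)
    {P Q : Matrix k k ℂ} (hP : P.PosSemidef) (hQP : (Q - P).PosSemidef) :
    N P ≤ N Q := by
  have hQ : Q = P + (Q - P) := by abel
  rw [hQ]
  have h1 := hN.2.2.1 P (Q - P) hP hQP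
  have h2 := hN.1 _ hQP
  linarith

end Auxiliary

/-- Let `Ω` be an interval with `0 ∈ Ω`, `f : Ω → [0,∞)` concave, `A`
Hermitian with spectrum in `Ω`, and `Z` a contraction (`Z*Z ≤ I`). Then every symmetric
anti-norm satisfies `‖f(Z*AZ)‖_! ≥ ‖Z* f(A) Z‖_!`. -/
theorem antiNorm_concave_contraction {n : ℕ} (Ω : Set ℝ) (hΩ : Ω.OrdConnected)
    (h0 : (0:ℝ) ∈ Ω)
    (f : ℝ → ℝ) (hf_nonneg : ∀ x ∈ Ω, 0 ≤ f x) (hf_concave : ConcaveOn ℝ Ω f)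
    (A : Matrix (Fin n) (Fin n) ℂ) (hA : A.IsHermitian) (hspec : spectrum ℝ A ⊆ Ω)
    (Z : Matrix (Fin n) (Fin n) ℂ) (hZ : ((1 : Matrix (Fin n) (Fin n) ℂ) - Zᴴ * Z).PosSemidef)
    (N : Matrix (Fin n) (Fin n) ℂ → ℝ) (hN : IsSymmetricAntiNorm N) :
    N (Zᴴ * cfc f A * Z) ≤ N (cfc f (Zᴴ * A * Z)) := by
  classical
  have hConv : Convex ℝ Ω := convex_iff_ordConnected.mpr hΩ
  have hB : (Zᴴ * A * Z).IsHermitian := Matrix.isHermitian_conjTranspose_mul_mul Z hA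
  set lam : Fin n → ℝ := hA.eigenvalues with hlam
  set bet : Fin n → ℝ := hB.eigenvalues with hbet
  set V : Matrix (Fin n) (Fin n) ℂ := (hA.eigenvectorUnitary : Matrix (Fin n) (Fin n) ℂ)
    with hVdef
  set W : Matrix (Fin n) (Fin n) ℂ := (hB.eigenvectorUnitary : Matrix (Fin n) (Fin n) ℂ)
    with hWdef
  have hVmem : V ∈ Matrix.unitaryGroup (Fin n) ℂ := SetLike.coe_mem _
  have hWmem : W ∈ Matrix.unitaryGroup (Fin n) ℂ := SetLike.coe_mem _
  have hlamΩ : ∀ i, lam i ∈ Ω := fun i => hspec (hA.eigenvalues_mem_spectrum_real i)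
  have hcfcA : cfc f A = V * Matrix.diagonal (fun i => ((f (lam i) : ℝ) : ℂ)) * star V := by
    rw [hA.cfc_eq]; rfl
  have hcfcB : cfc f (Zᴴ * A * Z)
      = W * Matrix.diagonal (fun i => ((f (bet i) : ℝ) : ℂ)) * star W := by
    rw [hB.cfc_eq]; rfl
  have hDf : (Matrix.diagonal (fun i => ((f (lam i) : ℝ) : ℂ))).PosSemidef :=
    Matrix.posSemidef_diagonal_iff.mpr fun i => by
      exact_mod_cast hf_nonneg _ (hlamΩ i)
  have hfA_psd : (cfc f A).PosSemidef := by
    rw [hcfcA, Matrix.star_eq_conjTranspose]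
    exact hDf.mul_mul_conjTranspose_same V
  set X : Matrix (Fin n) (Fin n) ℂ := Zᴴ * cfc f A * Z with hXdef
  have hXpsd : X.PosSemidef := hfA_psd.conjTranspose_mul_mul_same Z
  set M' : Matrix (Fin n) (Fin n) ℂ := star W * X * W with hM'def
  have hM'psd : M'.PosSemidef := by
    rw [hM'def, Matrix.star_eq_conjTranspose]
    exact hXpsd.conjTranspose_mul_mul_same W
  -- the key per-column estimate
  have key : ∀ j : Fin n, ∃ r : ℝ, M' j j = (r : ℂ) ∧ 0 ≤ r ∧ r ≤ f (bet j) ∧ bet j ∈ Ω := by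
    intro j
    set v : Fin n → ℂ := W *ᵥ Pi.single j 1 with hv
    set c : Fin n → ℂ := star V *ᵥ (Z *ᵥ v) with hc
    set wt : Fin n → ℝ := fun i => Complex.normSq (c i) with hwt
    have hwnn : ∀ i, 0 ≤ wt i := fun i => Complex.normSq_nonneg _
    -- (a) diagonal entry of M'
    have ha : M' j j = ((∑ i, f (lam i) * wt i : ℝ) : ℂ) := by
      rw [← single_quad M' j, hM'def, quad_conj, ← hv, hXdef,
        ← Matrix.star_eq_conjTranspose Z, quad_conj, hcfcA]
      have hVV : V * Matrix.diagonal (fun i => ((f (lam i) : ℝ) : ℂ)) * star V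
          = star (star V) * Matrix.diagonal (fun i => ((f (lam i) : ℝ) : ℂ)) * star V := by
        rw [star_star]
      rw [hVV, quad_conj, ← hc, quad_diag]
    -- (b) the eigenvalue as a convex combination
    have hbj : bet j = ∑ i, lam i * wt i := by
      have hdiagB : star W * (Zᴴ * A * Z) * W
          = Matrix.diagonal (fun i => ((bet i : ℝ) : ℂ)) :=
        by have h := hB.conjStarAlgAut_star_eigenvectorUnitary
           rw [Unitary.conjStarAlgAut_star_apply] at h
           exact h
      have hspecA : A = star (star V) * Matrix.diagonal (fun i => ((lam i : ℝ) : ℂ)) * star V := by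
        rw [star_star, hVdef]
        exact hA.spectral_theorem
      have h1 : ((bet j : ℝ) : ℂ)
          = dotProduct (star v) ((Zᴴ * A * Z) *ᵥ v) := by
        rw [hv, ← quad_conj, hdiagB, single_quad, Matrix.diagonal_apply_eq]
      have h2 : dotProduct (star v) ((Zᴴ * A * Z) *ᵥ v)
          = ((∑ i, lam i * wt i : ℝ) : ℂ) := by
        rw [← Matrix.star_eq_conjTranspose Z, quad_conj]
        rw [hspecA, quad_conj, ← hc, quad_diag]
      have h3 := h1.trans h2
      exact_mod_cast h3
    -- (c) the weights sum to at most one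
    have hsum : ∑ i, wt i ≤ 1 := by
      have e1 : dotProduct (star c) c = ((∑ i, wt i : ℝ) : ℂ) := dot_star_self c
      have e2 : dotProduct (star c) c
          = dotProduct (star (Z *ᵥ v)) (Z *ᵥ v) := by
        rw [hc, norm_quad, star_star, Matrix.mem_unitaryGroup_iff.mp hVmem, Matrix.one_mulVec]
      have e3 : dotProduct (star (Z *ᵥ v)) (Z *ᵥ v)
          = dotProduct (star v) ((star Z * Z) *ᵥ v) := norm_quad Z v
      have e4 : dotProduct (star v) v = 1 := by
        rw [hv, norm_quad, Matrix.mem_unitaryGroup_iff'.mp hWmem, single_quad,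
          Matrix.one_apply_eq]
      have e5 := hZ.dotProduct_mulVec_nonneg v
      rw [Matrix.sub_mulVec, dotProduct_sub, Matrix.one_mulVec, e4,
        ← Matrix.star_eq_conjTranspose Z, ← e3, ← e2, e1] at e5
      have e6 : ((∑ i, wt i : ℝ) : ℂ) ≤ ((1 : ℝ) : ℂ) := by
        rw [← sub_nonneg]
        simpa using e5
      exact_mod_cast e6
    -- (d) Jensen's inequality
    have hJ : (∑ i, f (lam i) * wt i) ≤ f (bet j) ∧ bet j ∈ Ω := by
      set s : ℝ := ∑ i, wt i with hs
      have hs1 : s ≤ 1 := hsum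
      set Wo : Option (Fin n) → ℝ := fun o => o.elim (1 - s) wt with hWo
      set po : Option (Fin n) → ℝ := fun o => o.elim 0 lam with hpo
      have h₀ : ∀ o ∈ (Finset.univ : Finset (Option (Fin n))), 0 ≤ Wo o := by
        rintro (_ | i) _
        · simp only [hWo, Option.elim]; linarith
        · exact hwnn i
      have h₁ : ∑ o : Option (Fin n), Wo o = 1 := by
        rw [Fintype.sum_option]
        simp only [hWo, Option.elim]
        rw [← hs]; ring
      have hmemΩ : ∀ o ∈ (Finset.univ : Finset (Option (Fin n))), po o ∈ Ω := by
        rintro (_ | i) _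
        · exact h0
        · exact hlamΩ i
      have hcomb : ∑ o : Option (Fin n), Wo o • po o = bet j := by
        rw [Fintype.sum_option]
        simp only [hWo, hpo, Option.elim, smul_eq_mul, mul_zero, zero_add]
        rw [hbj]
        exact Finset.sum_congr rfl fun i _ => mul_comm _ _
      constructor
      · have hjen := hf_concave.le_map_sum h₀ h₁ hmemΩ
        rw [hcomb, Fintype.sum_option] at hjen
        simp only [hWo, hpo, Option.elim, smul_eq_mul] at hjen
        have hf0 : 0 ≤ (1 - s) * f 0 := mul_nonneg (by linarith) (hf_nonneg 0 h0)
        have h5 : ∑ i, wt i * f (lam i) ≤ f (bet j) := by linarith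
        calc (∑ i, f (lam i) * wt i) = ∑ i, wt i * f (lam i) :=
              Finset.sum_congr rfl fun i _ => mul_comm _ _
          _ ≤ f (bet j) := h5
      · have hm := hConv.sum_mem h₀ h₁ hmemΩ
        rwa [hcomb] at hm
    exact ⟨∑ i, f (lam i) * wt i, ha, Finset.sum_nonneg fun i _ =>
      mul_nonneg (hf_nonneg _ (hlamΩ i)) (hwnn i), hJ.1, hJ.2⟩
  -- assemble the chain of (in)equalities
  choose r hr1 hr2 hr3 hrΩ using key
  have hfb : ∀ j, 0 ≤ f (bet j) := fun j => hf_nonneg _ (hrΩ j)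
  have hDr : (Matrix.diagonal (fun j => ((r j : ℝ) : ℂ))).PosSemidef :=
    Matrix.posSemidef_diagonal_iff.mpr fun j => by exact_mod_cast hr2 j
  have hDb : (Matrix.diagonal (fun j => ((f (bet j) : ℝ) : ℂ))).PosSemidef :=
    Matrix.posSemidef_diagonal_iff.mpr fun j => by exact_mod_cast hfb j
  have s1 : N X = N M' := by
    have hsW : star W ∈ Matrix.unitaryGroup (Fin n) ℂ := Unitary.star_mem hWmem
    have h := hN.2.2.2 (star W) X hsW hXpsd
    rw [Matrix.star_eq_conjTranspose W, Matrix.conjTranspose_conjTranspose] at h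
    rw [hM'def, Matrix.star_eq_conjTranspose W]
    exact h.symm
  have s2 : N M' ≤ N (Matrix.diagonal (fun j => M' j j)) := by
    have h := pinch_psd_le hN Finset.univ M' hM'psd
    rw [pinch_univ] at h
    exact h.2
  have s3 : (Matrix.diagonal (fun j => M' j j))
      = Matrix.diagonal (fun j => ((r j : ℝ) : ℂ)) := by
    have he : (fun j => M' j j) = fun j => ((r j : ℝ) : ℂ) := funext hr1
    rw [he]
  have s4 : N (Matrix.diagonal (fun j => ((r j : ℝ) : ℂ)))
      ≤ N (Matrix.diagonal (fun j => ((f (bet j) : ℝ) : ℂ))) := by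
    refine antiNorm_mono hN hDr ?_
    have hdiff : Matrix.diagonal (fun j => ((f (bet j) : ℝ) : ℂ))
        - Matrix.diagonal (fun j => ((r j : ℝ) : ℂ))
        = Matrix.diagonal (fun j => ((f (bet j) - r j : ℝ) : ℂ)) := by
      rw [Matrix.diagonal_sub]
      have he : (fun i => ((f (bet i) : ℝ) : ℂ) - ((r i : ℝ) : ℂ))
          = fun j => ((f (bet j) - r j : ℝ) : ℂ) := funext fun i => by push_cast; ring
      rw [he]
    rw [hdiff]
    exact Matrix.posSemidef_diagonal_iff.mpr fun j => by
      exact_mod_cast sub_nonneg.mpr (hr3 j)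
  have s5 : N (Matrix.diagonal (fun j => ((f (bet j) : ℝ) : ℂ))) = N (cfc f (Zᴴ * A * Z)) := by
    have h := hN.2.2.2 W _ hWmem hDb
    rw [hcfcB, ← Matrix.star_eq_conjTranspose W] at *
    exact h.symm
  calc N X = N M' := s1
    _ ≤ N (Matrix.diagonal fun j => M' j j) := s2
    _ = N (Matrix.diagonal fun j => ((r j : ℝ) : ℂ)) := by rw [s3]
    _ ≤ N (Matrix.diagonal fun j => ((f (bet j) : ℝ) : ℂ)) := s4
    _ = N (cfc f (Zᴴ * A * Z)) := s5
end

section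
/- Let g : [0,∞) → [0,∞) be convex and let q ∈ (0,1) be such that g^q is subadditive, i.e. g(a+b)^q ≤ g(a)^q + g(b)^q for all a, b ≥ 0. Then for all n×n positive semidefinite complex matrices A, B and every symmetric norm ‖·‖ on M_n(ℂ), ‖g(A+B)‖^q ≤ ‖g(A)‖^q + ‖g(B)‖^q. -/
open scoped Matrix ComplexOrder

/-- A symmetric (unitarily invariant) norm on square complex matrices indexed by `k`. -/
def IsSymmetricNorm {k : Type*} [Fintype k] [DecidableEq k]
    (N : Matrix k k ℂ → ℝ) : Prop :=
  (∀ A B : Matrix k k ℂ, N (A + B) ≤ N A + N B) ∧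
  (∀ (c : ℂ) (A : Matrix k k ℂ), N (c • A) = ‖c‖ * N A) ∧
  (∀ A : Matrix k k ℂ, N A = 0 → A = 0) ∧
  (∀ (A U V : Matrix k k ℂ), U ∈ Matrix.unitaryGroup k ℂ →
    V ∈ Matrix.unitaryGroup k ℂ → N (U * A * V) = N A)

namespace SymAux
variable {n : ℕ} {N : Matrix (Fin n) (Fin n) ℂ → ℝ}

/-- Diagonal complex matrix built from a real vector. -/
noncomputable def dg (v : Fin n → ℝ) : Matrix (Fin n) (Fin n) ℂ :=
  Matrix.diagonal (fun i => (v i : ℂ))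

lemma real_smul_mat (r : ℝ) (X : Matrix (Fin n) (Fin n) ℂ) : r • X = (r : ℂ) • X := by
  ext i j; simp [Matrix.smul_apply, Complex.real_smul]

lemma N_real_smul (hN : IsSymmetricNorm N) (r : ℝ) (hr : 0 ≤ r) (X) :
    N (r • X) = r * N X := by
  rw [real_smul_mat, hN.2.1]
  simp [Complex.norm_real, abs_of_nonneg hr]

lemma N_neg (hN : IsSymmetricNorm N) (X) : N (-X) = N X := by
  have := hN.2.1 (-1) X
  simpa using this

lemma N_nonneg (hN : IsSymmetricNorm N) (X) : 0 ≤ N X := by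
  have h0 : N 0 = 0 := by simpa using hN.2.1 0 0
  have h1 := hN.1 X (-X)
  rw [add_neg_cancel, h0, N_neg hN] at h1
  linarith

lemma N_convexOn (hN : IsSymmetricNorm N) : ConvexOn ℝ Set.univ N := by
  refine ⟨convex_univ, fun x _ y _ a b ha hb hab => ?_⟩
  calc N (a • x + b • y) ≤ N (a • x) + N (b • y) := hN.1 _ _
    _ = a * N x + b * N y := by rw [N_real_smul hN a ha, N_real_smul hN b hb]

lemma N_sum_le (hN : IsSymmetricNorm N) {ι : Type*} (t : Finset ι)
    (w : ι → ℝ) (X : ι → Matrix (Fin n) (Fin n) ℂ)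
    (hw : ∀ i ∈ t, 0 ≤ w i) (hw1 : ∑ i ∈ t, w i = 1) :
    N (∑ i ∈ t, w i • X i) ≤ ∑ i ∈ t, w i * N (X i) := by
  simpa [smul_eq_mul] using
    (N_convexOn hN).map_sum_le hw hw1 (fun i _ => Set.mem_univ (X i))

lemma N_conj_unitary (hN : IsSymmetricNorm N) {U : Matrix (Fin n) (Fin n) ℂ}
    (hU : U ∈ Matrix.unitaryGroup (Fin n) ℂ) (X) : N (U * X * star U) = N X :=
  hN.2.2.2 X U (star U) hU (Unitary.star_mem hU)

lemma N_mul_left_unitary (hN : IsSymmetricNorm N) {U : Matrix (Fin n) (Fin n) ℂ}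
    (hU : U ∈ Matrix.unitaryGroup (Fin n) ℂ) (X) : N (U * X) = N X := by
  have := hN.2.2.2 X U 1 hU (one_mem _)
  simpa using this

lemma permMatrix_apply (σ : Equiv.Perm (Fin n)) (i j : Fin n) :
    σ.permMatrix ℂ i j = if σ i = j then 1 else 0 := by
  simp [Equiv.Perm.permMatrix, PEquiv.toMatrix_apply, Equiv.toPEquiv_apply]

lemma permMatrix_unitary (σ : Equiv.Perm (Fin n)) :
    σ.permMatrix ℂ ∈ Matrix.unitaryGroup (Fin n) ℂ := by
  rw [Matrix.mem_unitaryGroup_iff]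
  ext i j
  simp only [Matrix.mul_apply, Matrix.star_apply, permMatrix_apply]
  rw [Finset.sum_eq_single (σ i)]
  · by_cases h : i = j <;>
      simp [h, Matrix.one_apply, EmbeddingLike.apply_eq_iff_eq, eq_comm]
  · intro b _ hb
    simp [Ne.symm hb]
  · simp

lemma permMatrix_conj_diagonal (σ : Equiv.Perm (Fin n)) (v : Fin n → ℂ) :
    (σ.permMatrix ℂ) * Matrix.diagonal v * star (σ.permMatrix ℂ)
      = Matrix.diagonal (v ∘ σ) := by
  ext i j
  simp only [Matrix.mul_apply, Matrix.star_apply, permMatrix_apply, Matrix.diagonal_apply]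
  rw [Finset.sum_eq_single (σ j)]
  · rw [Finset.sum_eq_single (σ i)]
    · by_cases h : i = j
      · subst h; simp
      · have : ¬ (σ i = σ j) := fun hc => h (σ.injective hc)
        simp [this, h]
    · intro b _ hb
      simp [Ne.symm hb]
    · simp
  · intro b _ hb
    simp [Ne.symm hb]
  · simp

lemma permMatrix_mulVec (σ : Equiv.Perm (Fin n)) (v : Fin n → ℝ) :
    (σ.permMatrix ℝ) *ᵥ v = v ∘ σ := by
  funext i
  simp only [Matrix.mulVec, dotProduct]
  have : σ.permMatrix ℝ i = fun j => if σ i = j then 1 else 0 := by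
    funext j
    simp [Equiv.Perm.permMatrix, PEquiv.toMatrix_apply, Equiv.toPEquiv_apply]
  rw [this]
  simp [Finset.sum_ite_eq Finset.univ (σ i)]

lemma N_dg_perm (hN : IsSymmetricNorm N) (v : Fin n → ℝ) (σ : Equiv.Perm (Fin n)) :
    N (dg (v ∘ σ)) = N (dg v) := by
  have : dg (v ∘ σ) = (σ.permMatrix ℂ) * Matrix.diagonal (fun i => (v i : ℂ))
      * star (σ.permMatrix ℂ) := by
    rw [permMatrix_conj_diagonal]; rfl
  rw [this, N_conj_unitary hN (permMatrix_unitary σ)]; rfl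

lemma N_dg_mono (hN : IsSymmetricNorm N) {u w : Fin n → ℝ}
    (hu : ∀ i, 0 ≤ u i) (huw : ∀ i, u i ≤ w i) :
    N (dg u) ≤ N (dg w) := by
  classical
  set r : Fin n → ℝ := fun i => if w i = 0 then 0 else u i / w i with hr
  have hw0 : ∀ i, 0 ≤ w i := fun i => (hu i).trans (huw i)
  have hr0 : ∀ i, 0 ≤ r i := by
    intro i; simp only [hr]
    split
    · exact le_rfl
    · exact div_nonneg (hu i) (hw0 i)
  have hr1 : ∀ i, r i ≤ 1 := by
    intro i; simp only [hr]
    split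
    · exact zero_le_one
    · rename_i h
      exact div_le_one_of_le₀ (huw i) (hw0 i)
  have hrw : ∀ i, r i * w i = u i := by
    intro i; simp only [hr]
    split
    · rename_i h
      have : u i = 0 := le_antisymm (h ▸ huw i) (hu i)
      simp [this]
    · rename_i h
      field_simp
  set e : Fin n → ℂ := fun i => (r i : ℂ) + Complex.I * (Real.sqrt (1 - r i ^ 2) : ℂ) with he
  have hsq : ∀ i, (Real.sqrt (1 - r i ^ 2)) ^ 2 = 1 - r i ^ 2 := by
    intro i
    rw [Real.sq_sqrt]
    nlinarith [hr0 i, hr1 i]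
  have hee : ∀ i, e i * star (e i) = 1 := by
    intro i
    have : star (e i) = (r i : ℂ) - Complex.I * (Real.sqrt (1 - r i ^ 2) : ℂ) := by
      simp [he, star_sub, Complex.star_def, Complex.conj_I, Complex.conj_ofReal]
      ring
    rw [this, he]
    have : ((r i : ℂ) + Complex.I * (Real.sqrt (1 - r i ^ 2) : ℂ))
        * ((r i : ℂ) - Complex.I * (Real.sqrt (1 - r i ^ 2) : ℂ))
        = (r i : ℂ)^2 + ((Real.sqrt (1 - r i ^ 2) : ℝ) : ℂ)^2 := by
      have : Complex.I ^ 2 = -1 := Complex.I_sq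
      ring_nf
      rw [Complex.I_sq]
      ring
    rw [this, ← Complex.ofReal_pow, ← Complex.ofReal_pow, hsq i]
    push_cast
    ring
  have hre : ∀ i, e i + star (e i) = (2 * r i : ℂ) := by
    intro i
    have : star (e i) = (r i : ℂ) - Complex.I * (Real.sqrt (1 - r i ^ 2) : ℂ) := by
      simp [he, Complex.star_def, Complex.conj_ofReal]
      ring
    rw [this, he]; push_cast; ring
  set E : Matrix (Fin n) (Fin n) ℂ := Matrix.diagonal e with hE
  have hEu : E ∈ Matrix.unitaryGroup (Fin n) ℂ := by
    rw [Matrix.mem_unitaryGroup_iff, hE, Matrix.star_eq_conjTranspose, Matrix.diagonal_conjTranspose,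
      Matrix.diagonal_mul_diagonal]
    ext i j
    have h1 := hee j
    rw [Complex.star_def] at h1
    by_cases h : i = j <;> simp [Matrix.diagonal_apply, h, Matrix.one_apply, h1]
  have key : dg u = (1/2 : ℂ) • (E * dg w + star E * dg w) := by
    rw [hE, Matrix.star_eq_conjTranspose, Matrix.diagonal_conjTranspose]
    unfold dg
    rw [Matrix.diagonal_mul_diagonal, Matrix.diagonal_mul_diagonal, Matrix.diagonal_add]
    ext i j
    by_cases h : i = j
    · subst h
      simp only [Matrix.diagonal_apply_eq, Matrix.smul_apply, smul_eq_mul]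
      have h2 : e i * (w i : ℂ) + star e i * (w i : ℂ) = (e i + star (e i)) * (w i : ℂ) := by
        simp only [Pi.star_apply]; ring
      rw [h2, hre i]
      have h3 : (u i : ℂ) = (r i : ℂ) * (w i : ℂ) := by
        rw [← hrw i]; push_cast; ring
      rw [h3]; ring
    · simp [Matrix.diagonal_apply_ne _ h, Matrix.smul_apply]
  have hEs : star E ∈ Matrix.unitaryGroup (Fin n) ℂ := Unitary.star_mem hEu
  calc N (dg u) = ‖(1/2 : ℂ)‖ * N (E * dg w + star E * dg w) := by rw [key, hN.2.1]
    _ = (1/2) * N (E * dg w + star E * dg w) := by norm_num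
    _ ≤ (1/2) * (N (E * dg w) + N (star E * dg w)) := by
        have := hN.1 (E * dg w) (star E * dg w)
        nlinarith
    _ = N (dg w) := by
        rw [N_mul_left_unitary hN hEu, N_mul_left_unitary hN hEs]; ring

lemma N_dg_mulVec (hN : IsSymmetricNorm N) {P : Matrix (Fin n) (Fin n) ℝ}
    (hP : P ∈ doublyStochastic ℝ (Fin n)) (v : Fin n → ℝ) :
    N (dg (P *ᵥ v)) ≤ N (dg v) := by
  obtain ⟨wt, hw0, hw1, hsum⟩ := exists_eq_sum_perm_of_mem_doublyStochastic hP
  have hv : P *ᵥ v = ∑ σ : Equiv.Perm (Fin n), wt σ • (v ∘ σ) := by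
    classical
    have H : ∀ s : Finset (Equiv.Perm (Fin n)),
        (∑ σ ∈ s, wt σ • σ.permMatrix ℝ) *ᵥ v = ∑ σ ∈ s, wt σ • (v ∘ σ) := by
      intro s
      induction s using Finset.induction_on with
      | empty => simp [Matrix.zero_mulVec]
      | insert _ _ h ih =>
          rw [Finset.sum_insert h, Finset.sum_insert h, Matrix.add_mulVec,
            Matrix.smul_mulVec, permMatrix_mulVec, ih]
    rw [← hsum, H]
  have key : dg (P *ᵥ v) = ∑ σ : Equiv.Perm (Fin n), wt σ • dg (v ∘ σ) := by
    rw [hv]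
    ext i j
    by_cases h : i = j
    · subst h
      simp only [dg, Matrix.diagonal_apply_eq, Matrix.sum_apply, Matrix.smul_apply,
        Finset.sum_apply, Pi.smul_apply, smul_eq_mul, Complex.real_smul]
      push_cast
      ring
    · simp [dg, Matrix.diagonal_apply_ne _ h, Matrix.sum_apply, h]
  rw [key]
  calc N (∑ σ : Equiv.Perm (Fin n), wt σ • dg (v ∘ σ))
      ≤ ∑ σ : Equiv.Perm (Fin n), wt σ * N (dg (v ∘ σ)) :=
        N_sum_le hN _ _ _ (fun σ _ => hw0 σ) hw1
    _ = ∑ σ : Equiv.Perm (Fin n), wt σ * N (dg v) := by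
        refine Finset.sum_congr rfl fun σ _ => ?_
        rw [N_dg_perm hN]
    _ = N (dg v) := by rw [← Finset.sum_mul, hw1, one_mul]

lemma scalar_holder {q α β : ℝ} (hq0 : 0 < q) (hq1 : q < 1) (hα : 0 < α) (hβ : 0 < β) :
    ∃ s t : ℝ, 0 < s ∧ 0 < t ∧ s * α + t * β = (α ^ q + β ^ q) ^ (1/q) ∧
      ∀ u v c : ℝ, 0 ≤ u → 0 ≤ v → 0 ≤ c → c ^ q ≤ u ^ q + v ^ q → c ≤ s * u + t * v := by
  set γ : ℝ := α ^ q + β ^ q with hγdef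
  have hγ : 0 < γ := by positivity
  set s : ℝ := γ ^ ((1-q)/q) * α ^ (q-1) with hs
  set t : ℝ := γ ^ ((1-q)/q) * β ^ (q-1) with ht
  have hspos : 0 < s := by positivity
  have htpos : 0 < t := by positivity
  have hsum : s * α + t * β = γ ^ (1/q) := by
    have ha : α ^ (q-1) * α = α ^ q := by
      rw [Real.rpow_sub_one hα.ne']; field_simp
    have hb : β ^ (q-1) * β = β ^ q := by
      rw [Real.rpow_sub_one hβ.ne']; field_simp
    rw [hs, ht]
    have : γ ^ ((1-q)/q) * α ^ (q-1) * α + γ ^ ((1-q)/q) * β ^ (q-1) * β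
        = γ ^ ((1-q)/q) * (α ^ (q-1) * α + β ^ (q-1) * β) := by ring
    rw [this, ha, hb, ← hγdef]
    rw [show γ ^ (1/q) = γ ^ ((1-q)/q) * γ ^ (1:ℝ) by
      rw [← Real.rpow_add hγ]; congr 1; field_simp; ring]
    rw [Real.rpow_one]
  refine ⟨s, t, hspos, htpos, hsum, ?_⟩
  intro u v c hu hv hc hcq
  set D : ℝ := s * u + t * v with hD
  have hD0 : 0 ≤ D := by positivity
  have key : ∀ x z e : ℝ, 0 < x → 0 ≤ z → e = γ ^ ((1-q)/q) * x ^ (q-1) → 0 < D →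
      z ^ q ≤ D ^ q * (q * (e * z / D) + (1-q) * (x ^ q / γ)) := by
    intro x z e hx hz he hDpos
    have hepos : 0 < e := by rw [he]; positivity
    have hθ : 0 ≤ e * z / D := by positivity
    have hw : 0 ≤ x ^ q / γ := by positivity
    have amgm := Real.geom_mean_le_arith_mean2_weighted (le_of_lt hq0)
      (by linarith : (0:ℝ) ≤ 1 - q) hθ hw (by ring)
    have hmul := mul_le_mul_of_nonneg_left amgm (Real.rpow_nonneg hD0 q)
    refine le_trans (le_of_eq ?_) hmul
    have h1 : D ^ q * (e * z / D) ^ q = (e * z) ^ q := by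
      rw [← Real.mul_rpow hD0 (by positivity)]
      congr 1
      field_simp
    have h2 : (e * z) ^ q = e ^ q * z ^ q := Real.mul_rpow (le_of_lt hepos) hz
    have h3 : e ^ q * (x ^ q / γ) ^ (1-q) = 1 := by
      rw [he, Real.mul_rpow (by positivity) (by positivity)]
      rw [← Real.rpow_mul (le_of_lt hγ), ← Real.rpow_mul (le_of_lt hx)]
      rw [Real.div_rpow (by positivity) (le_of_lt hγ)]
      rw [← Real.rpow_mul (le_of_lt hx)]
      have e1 : (1-q)/q*q = 1-q := by field_simp
      rw [e1]
      rw [div_eq_mul_inv, ← Real.rpow_neg (le_of_lt hγ)]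
      have h4 : γ ^ (1-q) * x ^ ((q-1)*q) * (x ^ (q*(1-q)) * γ ^ (-(1-q)))
          = (γ ^ (1-q) * γ ^ (-(1-q))) * (x ^ ((q-1)*q) * x ^ (q*(1-q))) := by ring
      rw [h4, ← Real.rpow_add hγ, ← Real.rpow_add hx,
        show (1-q) + -(1-q) = 0 by ring, show (q-1)*q + q*(1-q) = 0 by ring,
        Real.rpow_zero, Real.rpow_zero, one_mul]
    calc z ^ q = (e ^ q * (x ^ q / γ) ^ (1-q)) * z ^ q := by rw [h3, one_mul]
      _ = D ^ q * ((e * z / D) ^ q * (x ^ q / γ) ^ (1-q)) := by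
          rw [← mul_assoc, h1, h2]; ring
  by_cases hDpos : 0 < D
  · have k1 := key α u s hα hu hs hDpos
    have k2 := key β v t hβ hv ht hDpos
    have hsum2 : u ^ q + v ^ q ≤ D ^ q := by
      have hθsum : s * u / D + t * v / D = 1 := by field_simp [hD]; linarith [hD]
      have hwsum : α ^ q / γ + β ^ q / γ = 1 := by field_simp [hγdef]; linarith [hγdef]
      calc u ^ q + v ^ q
          ≤ D ^ q * (q * (s * u / D) + (1-q) * (α ^ q / γ))
            + D ^ q * (q * (t * v / D) + (1-q) * (β ^ q / γ)) := add_le_add k1 k2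
        _ = D ^ q * (q * (s * u / D + t * v / D) + (1-q) * (α ^ q / γ + β ^ q / γ)) := by ring
        _ = D ^ q := by rw [hθsum, hwsum]; ring
    have hcD : c ^ q ≤ D ^ q := le_trans hcq hsum2
    calc c = (c ^ q) ^ (1/q) := by
          rw [← Real.rpow_mul hc]
          rw [mul_one_div, div_self (ne_of_gt hq0), Real.rpow_one]
      _ ≤ (D ^ q) ^ (1/q) := Real.rpow_le_rpow (by positivity) hcD (by positivity)
      _ = D := by
          rw [← Real.rpow_mul hD0, mul_one_div, div_self (ne_of_gt hq0), Real.rpow_one]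
  · have hDeq : D = 0 := le_antisymm (not_lt.mp hDpos) hD0
    have hu0 : u = 0 := by nlinarith [mul_nonneg hspos.le hu, mul_nonneg htpos.le hv]
    have hv0 : v = 0 := by nlinarith [mul_nonneg hspos.le hu, mul_nonneg htpos.le hv]
    have : c ^ q ≤ 0 := by
      simpa [hu0, hv0, Real.zero_rpow (ne_of_gt hq0)] using hcq
    have hc0 : c = 0 := by
      by_contra hne
      have : 0 < c := lt_of_le_of_ne hc (Ne.symm hne)
      exact absurd (Real.rpow_pos_of_pos this q) (not_lt.mpr ‹c ^ q ≤ 0›)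
    rw [hc0]
    exact hD0

lemma N_cfc (hN : IsSymmetricNorm N) (g : ℝ → ℝ) {X : Matrix (Fin n) (Fin n) ℂ}
    (hX : X.IsHermitian) : N (cfc g X) = N (dg (g ∘ hX.eigenvalues)) := by
  rw [hX.cfc_eq, Matrix.IsHermitian.cfc]
  exact N_conj_unitary hN (SetLike.coe_mem _) _

lemma conj_diag_entry (M : Matrix (Fin n) (Fin n) ℂ) (d : Fin n → ℝ) (j : Fin n) :
    (star M * dg d * M) j j = ((∑ l, d l * Complex.normSq (M l j) : ℝ) : ℂ) := by
  have h1 : (star M * dg d * M) j j = ∑ k, (starRingEnd ℂ) (M k j) * ((d k : ℂ)) * M k j := by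
    simp only [Matrix.mul_apply, dg, Matrix.star_apply, Matrix.diagonal_apply]
    refine Finset.sum_congr rfl fun k _ => ?_
    rw [Finset.sum_eq_single k]
    · simp [Complex.star_def]
    · intro b _ hb; simp [hb]
    · simp
  rw [h1]
  push_cast
  refine Finset.sum_congr rfl fun k _ => ?_
  rw [show (starRingEnd ℂ) (M k j) * (d k : ℂ) * M k j
      = (d k : ℂ) * ((starRingEnd ℂ) (M k j) * M k j) by ring]
  rw [Complex.normSq_eq_conj_mul_self]

lemma unitary_normSq_doublyStochastic {M : Matrix (Fin n) (Fin n) ℂ}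
    (hM : M ∈ Matrix.unitaryGroup (Fin n) ℂ) :
    (Matrix.of fun j l => Complex.normSq (M l j)) ∈ doublyStochastic ℝ (Fin n) := by
  rw [mem_doublyStochastic_iff_sum]
  refine ⟨fun i j => Complex.normSq_nonneg _, ?_, ?_⟩
  · intro j
    have h1 : (star M * M) j j = 1 := by
      rw [Matrix.mem_unitaryGroup_iff'.mp hM]; simp [Matrix.one_apply]
    have h2 : (star M * M) j j = ((∑ l, Complex.normSq (M l j) : ℝ) : ℂ) := by
      simp only [Matrix.mul_apply, Matrix.star_apply, Complex.star_def]
      push_cast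
      refine Finset.sum_congr rfl fun k _ => ?_
      rw [Complex.normSq_eq_conj_mul_self]
    rw [h1] at h2
    exact_mod_cast h2.symm
  · intro l
    have h1 : (M * star M) l l = 1 := by
      rw [Matrix.mem_unitaryGroup_iff.mp hM]; simp [Matrix.one_apply]
    have h2 : (M * star M) l l = ((∑ j, Complex.normSq (M l j) : ℝ) : ℂ) := by
      simp only [Matrix.mul_apply, Matrix.star_apply, Complex.star_def]
      push_cast
      refine Finset.sum_congr rfl fun k _ => ?_
      rw [Complex.normSq_eq_conj_mul_self]
      ring
    rw [h1] at h2
    exact_mod_cast h2.symm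

lemma sandwich (V X : Matrix (Fin n) (Fin n) ℂ) (hVV : star V * V = 1) :
    star V * (V * X * star V) * V = X := by
  have h : star V * (V * X * star V) * V = (star V * V) * X * (star V * V) := by
    noncomm_ring
  rw [h, hVV, one_mul, mul_one]

lemma dg_eq_diag (v : Fin n → ℝ) :
    dg v = Matrix.diagonal (RCLike.ofReal ∘ v) := rfl

lemma conj_by_unitary {X : Matrix (Fin n) (Fin n) ℂ} (hX : X.IsHermitian)
    (V : Matrix (Fin n) (Fin n) ℂ) :
    star V * X * V
      = star ((star (hX.eigenvectorUnitary : Matrix (Fin n) (Fin n) ℂ)) * V)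
          * dg hX.eigenvalues
          * ((star (hX.eigenvectorUnitary : Matrix (Fin n) (Fin n) ℂ)) * V) := by
  conv_lhs => rw [hX.spectral_theorem]
  rw [← dg_eq_diag, star_mul, star_star]
  simp only [Unitary.conjStarAlgAut_apply, Matrix.mul_assoc]

lemma eigen_decomp {A B : Matrix (Fin n) (Fin n) ℂ} (hA : A.IsHermitian) (hB : B.IsHermitian)
    (hC : (A+B).IsHermitian) :
    ∃ P Q : Matrix (Fin n) (Fin n) ℝ,
      P ∈ doublyStochastic ℝ (Fin n) ∧ Q ∈ doublyStochastic ℝ (Fin n) ∧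
      ∀ j, hC.eigenvalues j = (P *ᵥ hA.eigenvalues) j + (Q *ᵥ hB.eigenvalues) j := by
  classical
  set V : Matrix (Fin n) (Fin n) ℂ := (hC.eigenvectorUnitary : Matrix (Fin n) (Fin n) ℂ)
  have hV : V ∈ Matrix.unitaryGroup (Fin n) ℂ := SetLike.coe_mem _
  set MA : Matrix (Fin n) (Fin n) ℂ :=
    (star (hA.eigenvectorUnitary : Matrix (Fin n) (Fin n) ℂ)) * V with hMAdef
  set MB : Matrix (Fin n) (Fin n) ℂ :=
    (star (hB.eigenvectorUnitary : Matrix (Fin n) (Fin n) ℂ)) * V with hMBdef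
  have hMA : MA ∈ Matrix.unitaryGroup (Fin n) ℂ :=
    mul_mem (Unitary.star_mem (SetLike.coe_mem _)) hV
  have hMB : MB ∈ Matrix.unitaryGroup (Fin n) ℂ :=
    mul_mem (Unitary.star_mem (SetLike.coe_mem _)) hV
  refine ⟨Matrix.of fun j l => Complex.normSq (MA l j),
          Matrix.of fun j l => Complex.normSq (MB l j),
          unitary_normSq_doublyStochastic hMA, unitary_normSq_doublyStochastic hMB, ?_⟩
  intro j
  have h1 : star V * (A + B) * V = dg hC.eigenvalues := by
    conv_lhs => rw [hC.spectral_theorem]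
    rw [← dg_eq_diag]
    exact sandwich V _ (Matrix.mem_unitaryGroup_iff'.mp hV)
  have h2 : star V * (A + B) * V = star MA * dg hA.eigenvalues * MA
      + star MB * dg hB.eigenvalues * MB := by
    have hadd : star V * (A + B) * V = star V * A * V + star V * B * V := by
      noncomm_ring
    rw [hadd, conj_by_unitary hA V, conj_by_unitary hB V]
  have h3 := congrFun (congrFun (h1.symm.trans h2) j) j
  rw [Matrix.add_apply, conj_diag_entry, conj_diag_entry] at h3
  have h4 : dg hC.eigenvalues j j = ((hC.eigenvalues j : ℝ) : ℂ) := by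
    simp [dg, Matrix.diagonal_apply_eq]
  rw [h4] at h3
  have h5 : hC.eigenvalues j = (∑ l, hA.eigenvalues l * Complex.normSq (MA l j))
      + (∑ l, hB.eigenvalues l * Complex.normSq (MB l j)) := by
    exact_mod_cast h3
  rw [h5]
  simp only [Matrix.mulVec, dotProduct, Matrix.of_apply]
  congr 1 <;> exact Finset.sum_congr rfl fun l _ => by ring

lemma jensen_row (g : ℝ → ℝ) (hg_convex : ConvexOn ℝ (Set.Ici 0) g)
    {P : Matrix (Fin n) (Fin n) ℝ} (hP : P ∈ doublyStochastic ℝ (Fin n))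
    {a : Fin n → ℝ} (ha : ∀ l, 0 ≤ a l) (j : Fin n) :
    g ((P *ᵥ a) j) ≤ (P *ᵥ (g ∘ a)) j := by
  obtain ⟨hP0, hProw, _⟩ := mem_doublyStochastic_iff_sum.mp hP
  have h := hg_convex.map_sum_le (t := Finset.univ) (w := fun l => P j l) (p := a)
    (fun l _ => hP0 j l) (hProw j) (fun l _ => ha l)
  simpa [Matrix.mulVec, dotProduct, smul_eq_mul, Function.comp] using h

end SymAux

/-- If `g : [0,∞) → [0,∞)` is convex and `q ∈ (0,1)` is such that `g^q`
is subadditive, then every symmetric norm satisfies `‖g(A+B)‖^q ≤ ‖g(A)‖^q + ‖g(B)‖^q`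
for positive semidefinite `A, B`. -/
theorem symmetric_norm_convex_q_subadditive {n : ℕ} (g : ℝ → ℝ)
    (hg_nonneg : ∀ x ∈ Set.Ici (0:ℝ), 0 ≤ g x)
    (hg_convex : ConvexOn ℝ (Set.Ici 0) g)
    (q : ℝ) (hq0 : 0 < q) (hq1 : q < 1)
    (hgq_subadd : ∀ a b : ℝ, 0 ≤ a → 0 ≤ b → g (a + b) ^ q ≤ g a ^ q + g b ^ q)
    (A B : Matrix (Fin n) (Fin n) ℂ) (hA : A.PosSemidef) (hB : B.PosSemidef)
    (N : Matrix (Fin n) (Fin n) ℂ → ℝ) (hN : IsSymmetricNorm N) :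
    N (cfc g (A + B)) ^ q ≤ N (cfc g A) ^ q + N (cfc g B) ^ q := by
  classical
  open SymAux in
  have hC : (A + B).PosSemidef := hA.add hB
  set a : Fin n → ℝ := hA.1.eigenvalues with ha_def
  set b : Fin n → ℝ := hB.1.eigenvalues with hb_def
  set c : Fin n → ℝ := hC.1.eigenvalues with hc_def
  have ha0 : ∀ l, 0 ≤ a l := hA.eigenvalues_nonneg
  have hb0 : ∀ l, 0 ≤ b l := hB.eigenvalues_nonneg
  obtain ⟨P, Q, hP, hQ, hdecomp⟩ := SymAux.eigen_decomp hA.1 hB.1 hC.1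
  -- nonnegativity of the convex-combination values
  have hdecomp' : ∀ j, c j = (P *ᵥ a) j + (Q *ᵥ b) j := hdecomp
  have hPa0 : ∀ j, 0 ≤ (P *ᵥ a) j := by
    intro j
    have h := mem_doublyStochastic_iff_sum.mp hP
    have he : (P *ᵥ a) j = ∑ l, P j l * a l := rfl
    rw [he]
    exact Finset.sum_nonneg fun l _ => mul_nonneg (h.1 j l) (ha0 l)
  have hQb0 : ∀ j, 0 ≤ (Q *ᵥ b) j := by
    intro j
    have h := mem_doublyStochastic_iff_sum.mp hQ
    have he : (Q *ᵥ b) j = ∑ l, Q j l * b l := rfl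
    rw [he]
    exact Finset.sum_nonneg fun l _ => mul_nonneg (h.1 j l) (hb0 l)
  have hc0 : ∀ j, 0 ≤ c j := fun j => (hdecomp' j) ▸ add_nonneg (hPa0 j) (hQb0 j)
  have hgc0 : ∀ j, 0 ≤ g (c j) := fun j => hg_nonneg _ (hc0 j)
  -- rewrite the three norms
  have hNC : N (cfc g (A + B)) = N (SymAux.dg (g ∘ c)) := SymAux.N_cfc hN g hC.1
  have hNA : N (cfc g A) = N (SymAux.dg (g ∘ a)) := SymAux.N_cfc hN g hA.1
  have hNB : N (cfc g B) = N (SymAux.dg (g ∘ b)) := SymAux.N_cfc hN g hB.1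
  -- Jensen bounds
  have hJa : ∀ j, g ((P *ᵥ a) j) ≤ (P *ᵥ (g ∘ a)) j :=
    SymAux.jensen_row g hg_convex hP ha0
  have hJb : ∀ j, g ((Q *ᵥ b) j) ≤ (Q *ᵥ (g ∘ b)) j :=
    SymAux.jensen_row g hg_convex hQ hb0
  -- the scalar subadditivity bound at each j
  have hsub : ∀ j, g (c j) ^ q ≤ g ((P *ᵥ a) j) ^ q + g ((Q *ᵥ b) j) ^ q := by
    intro j
    rw [hdecomp' j]
    exact hgq_subadd _ _ (hPa0 j) (hQb0 j)
  have hga0 : ∀ j, 0 ≤ g ((P *ᵥ a) j) := fun j => hg_nonneg _ (hPa0 j)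
  have hgb0 : ∀ j, 0 ≤ g ((Q *ᵥ b) j) := fun j => hg_nonneg _ (hQb0 j)
  have hPga0 : ∀ j, 0 ≤ (P *ᵥ (g ∘ a)) j := fun j => le_trans (hga0 j) (hJa j)
  have hQgb0 : ∀ j, 0 ≤ (Q *ᵥ (g ∘ b)) j := fun j => le_trans (hgb0 j) (hJb j)
  set Na : ℝ := N (cfc g A) with hNa_def
  set Nb : ℝ := N (cfc g B) with hNb_def
  have hNa0 : 0 ≤ Na := SymAux.N_nonneg hN _
  have hNb0 : 0 ≤ Nb := SymAux.N_nonneg hN _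
  -- helper : from pointwise inequality `g∘c ≤ m`, bound N (dg (g∘c)) by N (dg m)
  have mono := fun (m : Fin n → ℝ) (hm : ∀ j, g (c j) ≤ m j) =>
    SymAux.N_dg_mono hN hgc0 hm
  -- helper to remove rpow : x ≤ y from x^q ≤ y^q
  have rpow_cancel : ∀ x y : ℝ, 0 ≤ x → 0 ≤ y → x ^ q ≤ y ^ q → x ≤ y := by
    intro x y hx hy hxy
    calc x = (x ^ q) ^ (1/q) := by
          rw [← Real.rpow_mul hx, mul_one_div, div_self (ne_of_gt hq0), Real.rpow_one]
      _ ≤ (y ^ q) ^ (1/q) := Real.rpow_le_rpow (by positivity) hxy (by positivity)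
      _ = y := by
          rw [← Real.rpow_mul hy, mul_one_div, div_self (ne_of_gt hq0), Real.rpow_one]
  by_cases hNaz : Na = 0
  · -- g vanishes on the spectrum of A
    have hdga : SymAux.dg (g ∘ a) = 0 :=
      hN.2.2.1 _ (hNA.symm.trans hNaz)
    have hgaz : ∀ l, g (a l) = 0 := by
      intro l
      have := congrFun (congrFun hdga l) l
      simp only [SymAux.dg, Matrix.diagonal_apply_eq, Matrix.zero_apply] at this
      exact_mod_cast this
    have hPgaz : ∀ j, (P *ᵥ (g ∘ a)) j = 0 := by
      intro j
      simp only [Matrix.mulVec, dotProduct, Function.comp]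
      exact Finset.sum_eq_zero fun l _ => by rw [hgaz l, mul_zero]
    have hgPaz : ∀ j, g ((P *ᵥ a) j) = 0 := fun j =>
      le_antisymm ((hJa j).trans (hPgaz j).le) (hga0 j)
    have hptwise : ∀ j, g (c j) ≤ (Q *ᵥ (g ∘ b)) j := by
      intro j
      refine le_trans (rpow_cancel _ _ (hgc0 j) (hgb0 j) ?_) (hJb j)
      have := hsub j
      rwa [hgPaz j, Real.zero_rpow (ne_of_gt hq0), zero_add] at this
    have hchain : N (cfc g (A + B)) ≤ Nb := by
      rw [hNC, hNB]
      exact le_trans (mono _ hptwise) (SymAux.N_dg_mulVec hN hQ _)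
    calc N (cfc g (A + B)) ^ q ≤ Nb ^ q :=
          Real.rpow_le_rpow (SymAux.N_nonneg hN _) hchain hq0.le
      _ ≤ Na ^ q + Nb ^ q := le_add_of_nonneg_left (by positivity)
  · by_cases hNbz : Nb = 0
    · -- symmetric case
      have hdgb : SymAux.dg (g ∘ b) = 0 :=
        hN.2.2.1 _ (hNB.symm.trans hNbz)
      have hgbz : ∀ l, g (b l) = 0 := by
        intro l
        have := congrFun (congrFun hdgb l) l
        simp only [SymAux.dg, Matrix.diagonal_apply_eq, Matrix.zero_apply] at this
        exact_mod_cast this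
      have hQgbz : ∀ j, (Q *ᵥ (g ∘ b)) j = 0 := by
        intro j
        simp only [Matrix.mulVec, dotProduct, Function.comp]
        exact Finset.sum_eq_zero fun l _ => by rw [hgbz l, mul_zero]
      have hgQbz : ∀ j, g ((Q *ᵥ b) j) = 0 := fun j =>
        le_antisymm ((hJb j).trans (hQgbz j).le) (hgb0 j)
      have hptwise : ∀ j, g (c j) ≤ (P *ᵥ (g ∘ a)) j := by
        intro j
        refine le_trans (rpow_cancel _ _ (hgc0 j) (hga0 j) ?_) (hJa j)
        have := hsub j
        rwa [hgQbz j, Real.zero_rpow (ne_of_gt hq0), add_zero] at this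
      have hchain : N (cfc g (A + B)) ≤ Na := by
        rw [hNC, hNA]
        exact le_trans (mono _ hptwise) (SymAux.N_dg_mulVec hN hP _)
      calc N (cfc g (A + B)) ^ q ≤ Na ^ q :=
            Real.rpow_le_rpow (SymAux.N_nonneg hN _) hchain hq0.le
        _ ≤ Na ^ q + Nb ^ q := le_add_of_nonneg_right (by positivity)
    · -- main case, both norms positive
      have hNa_pos : 0 < Na := lt_of_le_of_ne hNa0 (Ne.symm hNaz)
      have hNb_pos : 0 < Nb := lt_of_le_of_ne hNb0 (Ne.symm hNbz)
      obtain ⟨s, t, hs, ht, hst, hbound⟩ := SymAux.scalar_holder hq0 hq1 hNa_pos hNb_pos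
      -- pointwise estimate
      set m : Fin n → ℝ := fun j => s * (P *ᵥ (g ∘ a)) j + t * (Q *ᵥ (g ∘ b)) j with hm_def
      have hptwise : ∀ j, g (c j) ≤ m j := by
        intro j
        have h1 : g (c j) ≤ s * g ((P *ᵥ a) j) + t * g ((Q *ᵥ b) j) :=
          hbound _ _ _ (hga0 j) (hgb0 j) (hgc0 j) (hsub j)
        refine h1.trans ?_
        have := add_le_add (mul_le_mul_of_nonneg_left (hJa j) hs.le)
          (mul_le_mul_of_nonneg_left (hJb j) ht.le)
        simpa [hm_def] using this
      -- split dg m as a positive combination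
      have hsplit : SymAux.dg m = (s : ℂ) • SymAux.dg (P *ᵥ (g ∘ a))
          + (t : ℂ) • SymAux.dg (Q *ᵥ (g ∘ b)) := by
        ext i j
        by_cases h : i = j
        · subst h
          simp only [SymAux.dg, Matrix.diagonal_apply_eq, Matrix.add_apply,
            Matrix.smul_apply, smul_eq_mul, hm_def]
          push_cast
          ring
        · simp [SymAux.dg, Matrix.diagonal_apply_ne _ h]
      have hN_m : N (SymAux.dg m) ≤ s * N (SymAux.dg (P *ᵥ (g ∘ a)))
          + t * N (SymAux.dg (Q *ᵥ (g ∘ b))) := by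
        rw [hsplit]
        refine le_trans (hN.1 _ _) ?_
        rw [hN.2.1, hN.2.1]
        have hns : ‖(s:ℂ)‖ = s := by simp [Complex.norm_real, abs_of_nonneg hs.le]
        have hnt : ‖(t:ℂ)‖ = t := by simp [Complex.norm_real, abs_of_nonneg ht.le]
        rw [hns, hnt]
      have hchain : N (cfc g (A + B)) ≤ (Na ^ q + Nb ^ q) ^ (1/q) := by
        rw [hNC]
        calc N (SymAux.dg (g ∘ c)) ≤ N (SymAux.dg m) := mono _ hptwise
          _ ≤ s * N (SymAux.dg (P *ᵥ (g ∘ a))) + t * N (SymAux.dg (Q *ᵥ (g ∘ b))) := hN_m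
          _ ≤ s * N (SymAux.dg (g ∘ a)) + t * N (SymAux.dg (g ∘ b)) := by
              refine add_le_add ?_ ?_
              · exact mul_le_mul_of_nonneg_left (SymAux.N_dg_mulVec hN hP _) hs.le
              · exact mul_le_mul_of_nonneg_left (SymAux.N_dg_mulVec hN hQ _) ht.le
          _ = s * Na + t * Nb := by rw [← hNA, ← hNB]
          _ = (Na ^ q + Nb ^ q) ^ (1/q) := hst
      have hfinal : N (cfc g (A + B)) ^ q ≤ ((Na ^ q + Nb ^ q) ^ (1/q)) ^ q :=
        Real.rpow_le_rpow (SymAux.N_nonneg hN _) hchain hq0.le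
      calc N (cfc g (A + B)) ^ q ≤ ((Na ^ q + Nb ^ q) ^ (1/q)) ^ q := hfinal
        _ = Na ^ q + Nb ^ q := by
            rw [← Real.rpow_mul (by positivity), one_div,
              inv_mul_cancel₀ (ne_of_gt hq0), Real.rpow_one]
end
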